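/- arXiv:1103.0729 — 8 statements merged into one kernel-verified Lean document; each statement's English description precedes it below -/
import Mathlib

section
/- Let a and b be real analytic functions on U with b(γ(s)) ≠ 0 for every s ∈ [0,L), and set ψ(s) = a(γ(s))/b(γ(s)). If γ is non-oscillating at O, then there exists s₀ ∈ [0,L) such that the restriction of ψ to [s₀,L) is either constant or strictly monotone; moreover, if ψ is bounded then ψ(s) has a finite limit as s → L. -/
open scoped RealInnerProductSpace Topology
open Filter

/-- Along a non-oscillating gradient half-trajectory, a ratio `ψ = (a∘γ)/(b∘γ)`
of real analytic functions (with `b` nonvanishing along `γ`) is eventually constant or strictly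
monotone; moreover if `ψ` is bounded then it has a finite limit at the endpoint. -/
theorem monotonicity_of_analytic_ratio_along_nonoscillating_trajectory
    {n : ℕ} (hn : 2 ≤ n)
    (U : Set (EuclideanSpace ℝ (Fin n))) (hUopen : IsOpen U)
    (hOU : (0 : EuclideanSpace ℝ (Fin n)) ∈ U)
    (f : EuclideanSpace ℝ (Fin n) → ℝ)
    (hfan : AnalyticOnNhd ℝ f U) (hf0 : f 0 = 0) (hgf0 : gradient f 0 = 0)
    (L : ℝ) (hL : 0 < L)
    (γ : ℝ → EuclideanSpace ℝ (Fin n))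
    (hγU : ∀ s ∈ Set.Ico (0 : ℝ) L, γ s ∈ U)
    (hγreg : ∀ s ∈ Set.Ico (0 : ℝ) L, gradient f (γ s) ≠ 0)
    (hγode : ∀ s ∈ Set.Ico (0 : ℝ) L,
      HasDerivAt γ (‖gradient f (γ s)‖⁻¹ • gradient f (γ s)) s)
    (hfneg : f (γ 0) < 0)
    (hfmono : StrictMonoOn (fun s => f (γ s)) (Set.Ico (0 : ℝ) L))
    (hγlim : Tendsto γ (𝓝[<] L) (𝓝 0))
    (hosc : ∀ g : EuclideanSpace ℝ (Fin n) → ℝ, AnalyticAt ℝ g 0 →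
      (∀ᶠ s in 𝓝[<] L, g (γ s) = 0) ∨ (∀ᶠ s in 𝓝[<] L, g (γ s) ≠ 0))
    (a b : EuclideanSpace ℝ (Fin n) → ℝ)
    (ha : AnalyticOnNhd ℝ a U) (hb : AnalyticOnNhd ℝ b U)
    (hbne : ∀ s ∈ Set.Ico (0 : ℝ) L, b (γ s) ≠ 0) :
    (∃ s₀ ∈ Set.Ico (0 : ℝ) L,
      (∀ s ∈ Set.Ico s₀ L, ∀ t ∈ Set.Ico s₀ L, a (γ s) / b (γ s) = a (γ t) / b (γ t)) ∨
      StrictMonoOn (fun s => a (γ s) / b (γ s)) (Set.Ico s₀ L) ∨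
      StrictAntiOn (fun s => a (γ s) / b (γ s)) (Set.Ico s₀ L)) ∧
    ((∃ M : ℝ, ∀ s ∈ Set.Ico (0 : ℝ) L, |a (γ s) / b (γ s)| ≤ M) →
      ∃ c : ℝ, Tendsto (fun s => a (γ s) / b (γ s)) (𝓝[<] L) (𝓝 c)) := by
  classical
  set ψ : ℝ → ℝ := fun s => a (γ s) / b (γ s) with hψdef
  set h : EuclideanSpace ℝ (Fin n) → ℝ := fun x =>
    b x * ⟪gradient a x, gradient f x⟫ - a x * ⟪gradient b x, gradient f x⟫ with hhdef
  -- analyticity of h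
  have hgrad : ∀ (g : EuclideanSpace ℝ (Fin n) → ℝ), AnalyticOnNhd ℝ g U →
      AnalyticOnNhd ℝ (gradient g) U := by
    intro g hg x hx
    exact ((InnerProductSpace.toDual ℝ (EuclideanSpace ℝ (Fin n))).symm.analyticAt _).comp
      (hg.fderiv x hx)
  have hhan : AnalyticOnNhd ℝ h U := by
    have hinner : ∀ (u v : EuclideanSpace ℝ (Fin n) → ℝ), AnalyticOnNhd ℝ u U →
        AnalyticOnNhd ℝ v U →
        AnalyticOnNhd ℝ (fun x => ⟪gradient u x, gradient v x⟫) U := by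
      intro u v hu hv x hx
      exact ((innerSL ℝ (E := EuclideanSpace ℝ (Fin n))).analyticAt_bilinear _).comp₂
        (hgrad u hu x hx) (hgrad v hv x hx)
    exact (hb.mul (hinner a f ha hfan)).sub (ha.mul (hinner b f hb hfan))
  -- derivative of ψ
  have hderiv : ∀ s ∈ Set.Ico (0:ℝ) L,
      HasDerivAt ψ (‖gradient f (γ s)‖⁻¹ * h (γ s) / (b (γ s))^2) s := by
    intro s hs
    have hx := hγU s hs
    have hA : HasDerivAt (fun t => a (γ t))
        (fderiv ℝ a (γ s) (‖gradient f (γ s)‖⁻¹ • gradient f (γ s))) s :=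
      ((ha (γ s) hx).differentiableAt.hasFDerivAt).comp_hasDerivAt s (hγode s hs)
    have hB : HasDerivAt (fun t => b (γ t))
        (fderiv ℝ b (γ s) (‖gradient f (γ s)‖⁻¹ • gradient f (γ s))) s :=
      ((hb (γ s) hx).differentiableAt.hasFDerivAt).comp_hasDerivAt s (hγode s hs)
    have e1 : fderiv ℝ a (γ s) (‖gradient f (γ s)‖⁻¹ • gradient f (γ s))
        = ‖gradient f (γ s)‖⁻¹ * ⟪gradient a (γ s), gradient f (γ s)⟫ := by
      have : ⟪gradient a (γ s), gradient f (γ s)⟫ = fderiv ℝ a (γ s) (gradient f (γ s)) := by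
        simp [gradient, InnerProductSpace.toDual_symm_apply]
      rw [map_smul, smul_eq_mul, this]
    have e2 : fderiv ℝ b (γ s) (‖gradient f (γ s)‖⁻¹ • gradient f (γ s))
        = ‖gradient f (γ s)‖⁻¹ * ⟪gradient b (γ s), gradient f (γ s)⟫ := by
      have : ⟪gradient b (γ s), gradient f (γ s)⟫ = fderiv ℝ b (γ s) (gradient f (γ s)) := by
        simp [gradient, InnerProductSpace.toDual_symm_apply]
      rw [map_smul, smul_eq_mul, this]
    have key := hA.div hB (hbne s hs)
    rw [e1, e2] at key
    refine HasDerivAt.congr_deriv key ?_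
    simp only [hhdef]
    ring
  -- continuity of ψ on subintervals
  have hψcont : ∀ s₀, 0 ≤ s₀ → ContinuousOn ψ (Set.Ico s₀ L) := by
    intro s₀ hs₀ s hs
    have hs' : s ∈ Set.Ico (0:ℝ) L := ⟨le_trans hs₀ hs.1, hs.2⟩
    exact ((hderiv s hs').continuousAt).continuousWithinAt
  -- nonoscillation applied to h
  have hh0 : AnalyticAt ℝ h 0 := hhan 0 hOU
  -- extract an interval from an eventual statement
  have extract : ∀ (P : ℝ → Prop), (∀ᶠ s in 𝓝[<] L, P s) →
      ∃ s₀, s₀ ∈ Set.Ico (0:ℝ) L ∧ ∀ s ∈ Set.Ico s₀ L, P s := by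
    intro P hP
    rw [eventually_iff, mem_nhdsLT_iff_exists_Ioo_subset] at hP
    obtain ⟨l, hl, hsub⟩ := hP
    simp only [Set.mem_Iio] at hl
    refine ⟨max 0 ((l+L)/2), ⟨le_max_left _ _, ?_⟩, ?_⟩
    · exact max_lt hL (by linarith)
    · intro s hs
      apply hsub
      constructor
      · calc l < (l+L)/2 := by linarith
          _ ≤ max 0 ((l+L)/2) := le_max_right _ _
          _ ≤ s := hs.1
      · exact hs.2
  rcases hosc h hh0 with hz | hnz
  · -- h vanishes eventually: ψ is eventually constant
    obtain ⟨s₀, hs₀mem, hs₀z⟩ := extract _ hz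
    have hzero : ∀ s ∈ interior (Set.Ico s₀ L), deriv ψ s = 0 := by
      intro s hs
      rw [interior_Ico] at hs
      have hs1 : s ∈ Set.Ico s₀ L := ⟨le_of_lt hs.1, hs.2⟩
      have hs2 : s ∈ Set.Ico (0:ℝ) L := ⟨le_trans hs₀mem.1 hs1.1, hs.2⟩
      rw [(hderiv s hs2).deriv, hs₀z s hs1]
      simp
    have hmono : MonotoneOn ψ (Set.Ico s₀ L) :=
      monotoneOn_of_deriv_nonneg (convex_Ico _ _) (hψcont s₀ hs₀mem.1)
        (fun s hs => by
          rw [interior_Ico] at hs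
          exact ((hderiv s ⟨le_trans hs₀mem.1 hs.1.le, hs.2⟩).differentiableAt).differentiableWithinAt)
        (fun s hs => le_of_eq (hzero s hs).symm)
    have hanti : AntitoneOn ψ (Set.Ico s₀ L) :=
      antitoneOn_of_deriv_nonpos (convex_Ico _ _) (hψcont s₀ hs₀mem.1)
        (fun s hs => by
          rw [interior_Ico] at hs
          exact ((hderiv s ⟨le_trans hs₀mem.1 hs.1.le, hs.2⟩).differentiableAt).differentiableWithinAt)
        (fun s hs => le_of_eq (hzero s hs))
    have hconst : ∀ s ∈ Set.Ico s₀ L, ∀ t ∈ Set.Ico s₀ L, ψ s = ψ t := by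
      intro s hs t ht
      rcases le_total s t with hst | hst
      · exact le_antisymm (hmono hs ht hst) (hanti hs ht hst)
      · exact le_antisymm (hanti ht hs hst) (hmono ht hs hst)
    constructor
    · exact ⟨s₀, hs₀mem, Or.inl hconst⟩
    · intro _
      refine ⟨ψ s₀, ?_⟩
      have hev : ∀ᶠ s in 𝓝[<] L, ψ s = ψ s₀ := by
        filter_upwards [Ioo_mem_nhdsLT hs₀mem.2] with s hs
        exact hconst s ⟨hs.1.le, hs.2⟩ s₀ ⟨le_refl _, hs₀mem.2⟩
      exact Tendsto.congr' (by filter_upwards [hev] with s hs using hs.symm) tendsto_const_nhds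
  · -- h eventually nonzero: constant sign, ψ strictly monotone
    obtain ⟨s₀, hs₀mem, hs₀nz⟩ := extract _ hnz
    -- continuity of h ∘ γ on Ico s₀ L
    have hhcont : ContinuousOn (fun s => h (γ s)) (Set.Ico s₀ L) := by
      intro s hs
      have hs2 : s ∈ Set.Ico (0:ℝ) L := ⟨le_trans hs₀mem.1 hs.1, hs.2⟩
      exact ((hhan (γ s) (hγU s hs2)).continuousAt.comp
        (hγode s hs2).differentiableAt.continuousAt).continuousWithinAt
    -- constant sign
    have hsign : (∀ s ∈ Set.Ico s₀ L, 0 < h (γ s)) ∨ (∀ s ∈ Set.Ico s₀ L, h (γ s) < 0) := by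
      have hs₀self : s₀ ∈ Set.Ico s₀ L := ⟨le_refl _, hs₀mem.2⟩
      have hkey : ∀ t ∈ Set.Ico s₀ L, 0 < h (γ s₀) → 0 < h (γ t) := by
        intro t ht hpos
        by_contra hle
        push_neg at hle
        have hneg : h (γ t) < 0 := lt_of_le_of_ne hle (hs₀nz t ht)
        have hsub : Set.Icc s₀ t ⊆ Set.Ico s₀ L := fun u hu => ⟨hu.1, lt_of_le_of_lt hu.2 ht.2⟩
        have := intermediate_value_Icc' ht.1 ((hhcont.mono hsub))
        have h0 : (0:ℝ) ∈ Set.Icc (h (γ t)) (h (γ s₀)) := ⟨hneg.le, hpos.le⟩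
        obtain ⟨u, hu, hu0⟩ := this h0
        exact hs₀nz u (hsub hu) hu0
      have hkey' : ∀ t ∈ Set.Ico s₀ L, h (γ s₀) < 0 → h (γ t) < 0 := by
        intro t ht hneg
        by_contra hle
        push_neg at hle
        have hpos : 0 < h (γ t) := lt_of_le_of_ne hle (Ne.symm (hs₀nz t ht))
        have hsub : Set.Icc s₀ t ⊆ Set.Ico s₀ L := fun u hu => ⟨hu.1, lt_of_le_of_lt hu.2 ht.2⟩
        have := intermediate_value_Icc ht.1 ((hhcont.mono hsub))
        have h0 : (0:ℝ) ∈ Set.Icc (h (γ s₀)) (h (γ t)) := ⟨hneg.le, hpos.le⟩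
        obtain ⟨u, hu, hu0⟩ := this h0
        exact hs₀nz u (hsub hu) hu0
      rcases lt_or_gt_of_ne (hs₀nz s₀ hs₀self) with hneg | hpos
      · exact Or.inr (fun s hs => hkey' s hs hneg)
      · exact Or.inl (fun s hs => hkey s hs hpos)
    -- derivative sign on interior
    have hderivsign : ∀ s ∈ Set.Ico s₀ L,
        (0 < h (γ s) → 0 < deriv ψ s) ∧ (h (γ s) < 0 → deriv ψ s < 0) := by
      intro s hs
      have hs2 : s ∈ Set.Ico (0:ℝ) L := ⟨le_trans hs₀mem.1 hs.1, hs.2⟩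
      rw [(hderiv s hs2).deriv]
      have hnorm : 0 < ‖gradient f (γ s)‖⁻¹ := by
        rw [inv_pos, norm_pos_iff]
        exact hγreg s hs2
      have hbsq : 0 < (b (γ s))^2 := pow_two_pos_of_ne_zero (hbne s hs2)
      constructor
      · intro hh
        exact div_pos (mul_pos hnorm hh) hbsq
      · intro hh
        exact div_neg_of_neg_of_pos (mul_neg_of_pos_of_neg hnorm hh) hbsq
    -- strict monotonicity
    have main : StrictMonoOn ψ (Set.Ico s₀ L) ∨ StrictAntiOn ψ (Set.Ico s₀ L) := by
      rcases hsign with hpos | hneg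
      · left
        refine strictMonoOn_of_deriv_pos (convex_Ico _ _) (hψcont s₀ hs₀mem.1) ?_
        intro s hs
        rw [interior_Ico] at hs
        have hs1 : s ∈ Set.Ico s₀ L := ⟨hs.1.le, hs.2⟩
        exact (hderivsign s hs1).1 (hpos s hs1)
      · right
        refine strictAntiOn_of_deriv_neg (convex_Ico _ _) (hψcont s₀ hs₀mem.1) ?_
        intro s hs
        rw [interior_Ico] at hs
        have hs1 : s ∈ Set.Ico s₀ L := ⟨hs.1.le, hs.2⟩
        exact (hderivsign s hs1).2 (hneg s hs1)
    constructor
    · exact ⟨s₀, hs₀mem, Or.inr main⟩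
    · rintro ⟨M, hM⟩
      have hne : (Set.Ioo s₀ L).Nonempty := Set.nonempty_Ioo.mpr hs₀mem.2
      have hsub : Set.Ioo s₀ L ⊆ Set.Ico s₀ L := Set.Ioo_subset_Ico_self
      have hsub0 : Set.Ioo s₀ L ⊆ Set.Ico 0 L := fun u hu => ⟨le_trans hs₀mem.1 hu.1.le, hu.2⟩
      rcases main with hmono | hanti
      · refine ⟨sSup (ψ '' Set.Ioo s₀ L), ?_⟩
        refine MonotoneOn.tendsto_nhdsWithin_Ioo_left hne
          ((hmono.monotoneOn).mono hsub) ?_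
        refine ⟨M, ?_⟩
        rintro y ⟨u, hu, rfl⟩
        exact le_trans (le_abs_self _) (hM u (hsub0 hu))
      · refine ⟨sInf (ψ '' Set.Ioo s₀ L), ?_⟩
        refine AntitoneOn.tendsto_nhdsWithin_Ioo_left hne
          ((hanti.antitoneOn).mono hsub) ?_
        refine ⟨-M, ?_⟩
        rintro y ⟨u, hu, rfl⟩
        exact le_trans (neg_le_neg (hM u (hsub0 hu))) (neg_abs_le _)
end

section
/- Assume γ is non-oscillating at O, and reparameterize γ near its endpoint by r = |γ(s)| (this is possible since s ↦ |γ(s)| is eventually strictly decreasing to 0), so that for r ∈ (0,r₀) the point γ(r) lies on the trajectory and |γ(r)| = r. Let a and b be real analytic on U such that b(γ(r)) ≠ 0 and ⟨∇f(γ(r)), γ(r)⟩ ≠ 0 for all r ∈ (0,r₀), and set v(r) = a(γ(r))/b(γ(r)). If v is bounded on (0,r₀), then r·v'(r) → 0 as r → 0⁺. -/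
set_option maxHeartbeats 2000000

open scoped RealInnerProductSpace Topology
open Filter Set

section Aux

variable {E : Type*} [NormedAddCommGroup E] [InnerProductSpace ℝ E] [FiniteDimensional ℝ E]

lemma my_clm_apply_analytic {F : E → E →L[ℝ] ℝ} {w : E → E} {U : Set E}
    (hF : AnalyticOnNhd ℝ F U) (hw : AnalyticOnNhd ℝ w U) :
    AnalyticOnNhd ℝ (fun y => F y (w y)) U := by
  intro x hx
  have h1 : AnalyticAt ℝ (fun p : E × (E →L[ℝ] ℝ) => (ContinuousLinearMap.apply ℝ ℝ) p.1 p.2)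
      (w x, F x) := (ContinuousLinearMap.apply ℝ ℝ).analyticAt_bilinear (w x, F x)
  have h2 : AnalyticAt ℝ (fun y => (w y, F y)) x := (hw x hx).prod (hF x hx)
  have h3 := AnalyticAt.comp (f := fun y => (w y, F y)) (x := x) h1 h2
  refine h3.congr (Filter.Eventually.of_forall fun y => ?_)
  simp only [Function.comp_apply, ContinuousLinearMap.apply_apply]

lemma my_inner_analytic {u w : E → E} {U : Set E}
    (hu : AnalyticOnNhd ℝ u U) (hw : AnalyticOnNhd ℝ w U) :
    AnalyticOnNhd ℝ (fun y => ⟪u y, w y⟫) U := by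
  intro x hx
  have h1 : AnalyticAt ℝ (fun p : E × E => (innerSL ℝ (E := E)) p.1 p.2) (u x, w x) :=
    (innerSL ℝ (E := E)).analyticAt_bilinear (u x, w x)
  have h2 : AnalyticAt ℝ (fun y => (u y, w y)) x := (hu x hx).prod (hw x hx)
  have h3 := AnalyticAt.comp (f := fun y => (u y, w y)) (x := x) h1 h2
  refine h3.congr (Filter.Eventually.of_forall fun y => ?_)
  simp only [Function.comp_apply, innerSL_apply_apply]

lemma my_gradient_eq_sum (f : E → ℝ) (y : E) :
    gradient f y = ∑ i, (fderiv ℝ f y (stdOrthonormalBasis ℝ E i)) • stdOrthonormalBasis ℝ E i := by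
  have h := (stdOrthonormalBasis ℝ E).sum_repr' (gradient f y)
  rw [← h]
  congr 1; ext i
  rw [real_inner_comm]
  rw [show gradient f y = (InnerProductSpace.toDual ℝ E).symm (fderiv ℝ f y) from rfl]
  rw [InnerProductSpace.toDual_symm_apply]

lemma my_gradient_analytic {f : E → ℝ} {U : Set E} (hU : IsOpen U) (hf : AnalyticOnNhd ℝ f U) :
    AnalyticOnNhd ℝ (gradient f) U := by
  have hfd : AnalyticOnNhd ℝ (fderiv ℝ f) U := hf.fderiv
  have h : AnalyticOnNhd ℝ
      (fun y => ∑ i, (fderiv ℝ f y (stdOrthonormalBasis ℝ E i)) • stdOrthonormalBasis ℝ E i) U := by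
    apply Finset.analyticOnNhd_fun_sum
    intro i _
    exact (my_clm_apply_analytic hfd analyticOnNhd_const).smul analyticOnNhd_const
  exact fun x hx =>
    (h x hx).congr (Filter.Eventually.of_forall fun y => (my_gradient_eq_sum f y).symm)

/-- If `v` has a derivative `≥ c/t` on `(0,δ)` and is bounded there, contradiction. -/
lemma my_aux_log (v vd : ℝ → ℝ) (δ c M : ℝ) (hδ : 0 < δ) (hc : 0 < c)
    (hd : ∀ t ∈ Set.Ioo (0:ℝ) δ, HasDerivAt v (vd t) t)
    (hge : ∀ t ∈ Set.Ioo (0:ℝ) δ, c / t ≤ vd t)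
    (hM : ∀ t ∈ Set.Ioo (0:ℝ) δ, |v t| ≤ M) : False := by
  set ψ : ℝ → ℝ := fun t => v t - c * Real.log t with hψdef
  have hψd : ∀ t ∈ Set.Ioo (0:ℝ) δ, HasDerivAt ψ (vd t - c / t) t := by
    intro t ht
    have hl : HasDerivAt (fun t => c * Real.log t) (c * t⁻¹) t :=
      (Real.hasDerivAt_log (ne_of_gt ht.1)).const_mul c
    have h := (hd t ht).sub hl
    rw [div_eq_mul_inv]; exact h
  have hmono : MonotoneOn ψ (Set.Ioo (0:ℝ) δ) := by
    apply monotoneOn_of_deriv_nonneg (convex_Ioo 0 δ)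
    · intro t ht; exact ((hψd t ht).differentiableAt.continuousAt).continuousWithinAt
    · rw [interior_Ioo]; intro t ht; exact (hψd t ht).differentiableAt.differentiableWithinAt
    · rw [interior_Ioo]; intro t ht
      rw [(hψd t ht).deriv]
      have := hge t ht; linarith
  set y : ℝ := δ/2 with hy
  have hyI : y ∈ Set.Ioo (0:ℝ) δ := ⟨by positivity, by simp [hy]; linarith⟩
  set K : ℝ := ψ y with hK
  set x : ℝ := min (y/2) (Real.exp ((-M - 1 - K)/c)) with hxdef
  have hx0 : 0 < x := lt_min (by positivity) (Real.exp_pos _)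
  have hxy : x ≤ y/2 := min_le_left _ _
  have hxI : x ∈ Set.Ioo (0:ℝ) δ := ⟨hx0, by simp [hy] at hxy ⊢; linarith⟩
  have hle : ψ x ≤ K := hmono hxI hyI (by linarith [hyI.1])
  have hlog : Real.log x ≤ (-M - 1 - K)/c := by
    calc Real.log x ≤ Real.log (Real.exp ((-M - 1 - K)/c)) :=
          Real.log_le_log hx0 (min_le_right _ _)
    _ = (-M - 1 - K)/c := Real.log_exp _
  have h2 : Real.log x * c ≤ -M - 1 - K := (le_div_iff₀ hc).1 hlog
  have h1 : v x - c * Real.log x ≤ K := hle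
  have hvx : v x ≤ -M - 1 := by nlinarith
  have hb := abs_le.1 (hM x hxI)
  linarith [hb.1]

/-- A continuous nonvanishing function on `(0,δ)` has constant sign. -/
lemma my_const_sign (ψ : ℝ → ℝ) (δ : ℝ) (hδ : 0 < δ)
    (hcont : ∀ r ∈ Set.Ioo (0:ℝ) δ, ContinuousAt ψ r)
    (hne : ∀ r ∈ Set.Ioo (0:ℝ) δ, ψ r ≠ 0) :
    (∀ r ∈ Set.Ioo (0:ℝ) δ, 0 < ψ r) ∨ (∀ r ∈ Set.Ioo (0:ℝ) δ, ψ r < 0) := by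
  have hr₁ : δ/2 ∈ Set.Ioo (0:ℝ) δ := ⟨by positivity, by linarith⟩
  have hsub : ∀ r ∈ Set.Ioo (0:ℝ) δ, Set.uIcc r (δ/2) ⊆ Set.Ioo (0:ℝ) δ := by
    intro r hr t ht
    rw [Set.mem_uIcc] at ht
    rcases ht with ⟨h1, h2⟩ | ⟨h1, h2⟩
    · exact ⟨lt_of_lt_of_le hr.1 h1, lt_of_le_of_lt h2 hr₁.2⟩
    · exact ⟨lt_of_lt_of_le hr₁.1 h1, lt_of_le_of_lt h2 hr.2⟩
  have main : ∀ r ∈ Set.Ioo (0:ℝ) δ, ψ r * ψ (δ/2) > 0 := by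
    intro r hr
    rcases (mul_ne_zero (hne r hr) (hne _ hr₁)).lt_or_gt with h | h
    · exfalso
      -- opposite signs : IVT gives a zero
      have hcr : ContinuousOn ψ (Set.uIcc r (δ/2)) := fun t ht =>
        (hcont t (hsub r hr ht)).continuousWithinAt
      have h0mem : (0:ℝ) ∈ Set.uIcc (ψ r) (ψ (δ/2)) := by
        rcases mul_neg_iff.1 h with ⟨hp, hq⟩ | ⟨hp, hq⟩
        · rw [Set.mem_uIcc]; right; exact ⟨hq.le, hp.le⟩
        · rw [Set.mem_uIcc]; left; exact ⟨hp.le, hq.le⟩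
      obtain ⟨t, ht, hψt⟩ := intermediate_value_uIcc hcr h0mem
      exact hne t (hsub r hr ht) hψt
    · exact h
  rcases (hne _ hr₁).lt_or_gt with hneg | hpos
  · right; intro r hr
    have := main r hr
    rcases mul_pos_iff.1 this with ⟨h1, h2⟩ | ⟨h1, h2⟩
    · linarith
    · exact h1
  · left; intro r hr
    have := main r hr
    rcases mul_pos_iff.1 this with ⟨h1, h2⟩ | ⟨h1, h2⟩
    · exact h1
    · linarith

lemma my_tendsto_zero_of_monotoneOn (q : ℝ → ℝ) (δ : ℝ) (hδ : 0 < δ)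
    (hmono : MonotoneOn q (Set.Ioo (0:ℝ) δ))
    (h1 : ∀ c : ℝ, 0 < c → ¬ (∀ᶠ r in 𝓝[>] (0:ℝ), c ≤ q r))
    (h2 : ∀ c : ℝ, 0 < c → ¬ (∀ᶠ r in 𝓝[>] (0:ℝ), q r ≤ -c)) :
    Tendsto q (𝓝[>] (0:ℝ)) (𝓝 0) := by
  rw [tendsto_order]
  constructor
  · intro cneg hcneg
    have hall : ∀ r ∈ Set.Ioo (0:ℝ) δ, cneg < q r := by
      by_contra h; push_neg at h
      obtain ⟨r₁, hr₁, hle⟩ := h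
      apply h2 (-cneg) (by linarith)
      filter_upwards [Ioo_mem_nhdsGT_of_mem (show (0:ℝ) ∈ Set.Ico (0:ℝ) r₁ from
        ⟨le_refl 0, hr₁.1⟩)] with r hr
      have hq : q r ≤ q r₁ := hmono ⟨hr.1, lt_trans hr.2 hr₁.2⟩ hr₁ (le_of_lt hr.2)
      linarith
    filter_upwards [Ioo_mem_nhdsGT_of_mem (show (0:ℝ) ∈ Set.Ico (0:ℝ) δ from
      ⟨le_refl 0, hδ⟩)] with r hr
    exact hall r hr
  · intro cpos hcpos
    have hex : ∃ r₁ ∈ Set.Ioo (0:ℝ) δ, q r₁ < cpos := by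
      by_contra h; push_neg at h
      apply h1 cpos hcpos
      filter_upwards [Ioo_mem_nhdsGT_of_mem (show (0:ℝ) ∈ Set.Ico (0:ℝ) δ from
        ⟨le_refl 0, hδ⟩)] with r hr
      exact h r hr
    obtain ⟨r₁, hr₁, hlt⟩ := hex
    filter_upwards [Ioo_mem_nhdsGT_of_mem (show (0:ℝ) ∈ Set.Ico (0:ℝ) r₁ from
      ⟨le_refl 0, hr₁.1⟩)] with r hr
    exact lt_of_le_of_lt (hmono ⟨hr.1, lt_trans hr.2 hr₁.2⟩ hr₁ (le_of_lt hr.2)) hlt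

lemma my_tendsto_zero_of_antitoneOn (q : ℝ → ℝ) (δ : ℝ) (hδ : 0 < δ)
    (hanti : AntitoneOn q (Set.Ioo (0:ℝ) δ))
    (h1 : ∀ c : ℝ, 0 < c → ¬ (∀ᶠ r in 𝓝[>] (0:ℝ), c ≤ q r))
    (h2 : ∀ c : ℝ, 0 < c → ¬ (∀ᶠ r in 𝓝[>] (0:ℝ), q r ≤ -c)) :
    Tendsto q (𝓝[>] (0:ℝ)) (𝓝 0) := by
  have hmono : MonotoneOn (fun r => -q r) (Set.Ioo (0:ℝ) δ) := by
    intro x hx y hy hxy; simpa using hanti hx hy hxy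
  have h1' : ∀ c : ℝ, 0 < c → ¬ (∀ᶠ r in 𝓝[>] (0:ℝ), c ≤ -q r) := by
    intro c hc hev
    exact h2 c hc (hev.mono fun r h => by linarith)
  have h2' : ∀ c : ℝ, 0 < c → ¬ (∀ᶠ r in 𝓝[>] (0:ℝ), -q r ≤ -c) := by
    intro c hc hev
    exact h1 c hc (hev.mono fun r h => by linarith)
  have ht := my_tendsto_zero_of_monotoneOn (fun r => -q r) δ hδ hmono h1' h2'
  have := ht.neg
  simpa using this

lemma my_alg0 (ng c r : ℝ) (hng : ng ≠ 0) (hc : c ≠ 0) (hr : r ≠ 0) :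
    ng / (r⁻¹ * c) * ng⁻¹ = r / c := by
  field_simp

lemma my_alg1 (aa bb da db c r : ℝ) (hc : c ≠ 0) (hb : bb ≠ 0) :
    (bb * da - aa * db) * r / (c * bb ^ 2) = (r / c * da * bb - aa * (r / c * db)) / bb ^ 2 := by
  field_simp

lemma my_alg2 (G H dg dh c r : ℝ) (hc : c ≠ 0) (hH : H ≠ 0) :
    (H * dg - G * dh) * c * r / (c ^ 2 * H ^ 2) = (r / c * dg * H - G * (r / c * dh)) / H ^ 2 := by
  field_simp

lemma my_alg3 (Av bb c r : ℝ) (hc : c ≠ 0) (hb : bb ≠ 0) :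
    r ^ 2 * Av / (bb ^ 2 * c) = r * (Av * r / (c * bb ^ 2)) := by
  field_simp

end Aux

/-- reparameterizing the non-oscillating trajectory by `r = |γ(s)|`, a bounded
ratio `v(r) = a(γ(r))/b(γ(r))` of real analytic functions satisfies `r·v'(r) → 0` as `r → 0⁺`. -/
theorem r_mul_deriv_tendsto_zero_along_reparameterized_trajectory
    {n : ℕ} (hn : 2 ≤ n)
    (U : Set (EuclideanSpace ℝ (Fin n))) (hUopen : IsOpen U)
    (hOU : (0 : EuclideanSpace ℝ (Fin n)) ∈ U)
    (f : EuclideanSpace ℝ (Fin n) → ℝ)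
    (hfan : AnalyticOnNhd ℝ f U) (hf0 : f 0 = 0) (hgf0 : gradient f 0 = 0)
    (L : ℝ) (hL : 0 < L)
    (γ : ℝ → EuclideanSpace ℝ (Fin n))
    (hγU : ∀ s ∈ Set.Ico (0 : ℝ) L, γ s ∈ U)
    (hγreg : ∀ s ∈ Set.Ico (0 : ℝ) L, gradient f (γ s) ≠ 0)
    (hγode : ∀ s ∈ Set.Ico (0 : ℝ) L,
      HasDerivAt γ (‖gradient f (γ s)‖⁻¹ • gradient f (γ s)) s)
    (hfneg : f (γ 0) < 0)
    (hfmono : StrictMonoOn (fun s => f (γ s)) (Set.Ico (0 : ℝ) L))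
    (hγlim : Tendsto γ (𝓝[<] L) (𝓝 0))
    (hosc : ∀ g : EuclideanSpace ℝ (Fin n) → ℝ, AnalyticAt ℝ g 0 →
      (∀ᶠ s in 𝓝[<] L, g (γ s) = 0) ∨ (∀ᶠ s in 𝓝[<] L, g (γ s) ≠ 0))
    (r₀ : ℝ) (hr₀ : 0 < r₀)
    (γr : ℝ → EuclideanSpace ℝ (Fin n))
    (hγr_mem : ∀ r ∈ Set.Ioo (0 : ℝ) r₀, ∃ s ∈ Set.Ico (0 : ℝ) L, γr r = γ s)
    (hγr_norm : ∀ r ∈ Set.Ioo (0 : ℝ) r₀, ‖γr r‖ = r)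
    (hγr' : ∀ r ∈ Set.Ioo (0 : ℝ) r₀,
      HasDerivAt γr
        ((‖gradient f (γr r)‖ / ⟪gradient f (γr r), ‖γr r‖⁻¹ • γr r⟫) •
          (‖gradient f (γr r)‖⁻¹ • gradient f (γr r))) r)
    (a b : EuclideanSpace ℝ (Fin n) → ℝ)
    (ha : AnalyticOnNhd ℝ a U) (hb : AnalyticOnNhd ℝ b U)
    (hbne : ∀ r ∈ Set.Ioo (0 : ℝ) r₀, b (γr r) ≠ 0)
    (hrad : ∀ r ∈ Set.Ioo (0 : ℝ) r₀, ⟪gradient f (γr r), γr r⟫ ≠ 0)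
    (hbound : ∃ M : ℝ, ∀ r ∈ Set.Ioo (0 : ℝ) r₀, |a (γr r) / b (γr r)| ≤ M) :
    Tendsto (fun r => r * deriv (fun r' => a (γr r') / b (γr r')) r)
      (𝓝[>] (0 : ℝ)) (𝓝 0) := by
  classical
  obtain ⟨M, hM⟩ := hbound
  set v : ℝ → ℝ := fun r' => a (γr r') / b (γr r') with hv_def
  set A : EuclideanSpace ℝ (Fin n) → ℝ := fun y =>
    b y * fderiv ℝ a y (gradient f y) - a y * fderiv ℝ b y (gradient f y) with hA_def
  set Gf : EuclideanSpace ℝ (Fin n) → ℝ := fun y => ⟪y, y⟫ * A y with hG_def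
  set Hf : EuclideanSpace ℝ (Fin n) → ℝ := fun y => (b y)^2 * ⟪gradient f y, y⟫ with hH_def
  set Pf : EuclideanSpace ℝ (Fin n) → ℝ := fun y =>
    (Hf y * fderiv ℝ Gf y (gradient f y) - Gf y * fderiv ℝ Hf y (gradient f y))
      * ⟪gradient f y, y⟫ with hP_def
  set q2 : ℝ → ℝ := fun r => Gf (γr r) / Hf (γr r) with hq2_def
  -- analyticity
  have hgrad : AnalyticOnNhd ℝ (gradient f) U := my_gradient_analytic hUopen hfan
  have hAan : AnalyticOnNhd ℝ A U :=
    (hb.mul (my_clm_apply_analytic ha.fderiv hgrad)).sub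
      (ha.mul (my_clm_apply_analytic hb.fderiv hgrad))
  have hGan : AnalyticOnNhd ℝ Gf U :=
    (my_inner_analytic analyticOnNhd_id analyticOnNhd_id).mul hAan
  have hHan : AnalyticOnNhd ℝ Hf U :=
    (hb.pow 2).mul (my_inner_analytic hgrad analyticOnNhd_id)
  have hPan : AnalyticOnNhd ℝ Pf U :=
    ((hHan.mul (my_clm_apply_analytic hGan.fderiv hgrad)).sub
      (hGan.mul (my_clm_apply_analytic hHan.fderiv hgrad))).mul
        (my_inner_analytic hgrad analyticOnNhd_id)
  -- membership facts
  have hmemU : ∀ r ∈ Set.Ioo (0:ℝ) r₀, γr r ∈ U := by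
    intro r hr
    obtain ⟨s, hs, hsx⟩ := hγr_mem r hr
    rw [hsx]; exact hγU s hs
  have hgne : ∀ r ∈ Set.Ioo (0:ℝ) r₀, gradient f (γr r) ≠ 0 := by
    intro r hr
    obtain ⟨s, hs, hsx⟩ := hγr_mem r hr
    rw [hsx]; exact hγreg s hs
  have hHne : ∀ r ∈ Set.Ioo (0:ℝ) r₀, Hf (γr r) ≠ 0 := by
    intro r hr
    exact mul_ne_zero (pow_ne_zero 2 (hbne r hr)) (hrad r hr)
  -- the key derivative package
  have key : ∀ r ∈ Set.Ioo (0:ℝ) r₀,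
      HasDerivAt v
        (A (γr r) * r / (⟪gradient f (γr r), γr r⟫ * (b (γr r))^2)) r ∧
      HasDerivAt q2
        (Pf (γr r) * r / (⟪gradient f (γr r), γr r⟫^2 * (Hf (γr r))^2)) r ∧
      q2 r = r * deriv v r := by
    intro r hr
    have hrpos : 0 < r := hr.1
    have hxU : γr r ∈ U := hmemU r hr
    have hg0 : gradient f (γr r) ≠ 0 := hgne r hr
    have hgn : ‖gradient f (γr r)‖ ≠ 0 := norm_ne_zero_iff.2 hg0
    have hbx : b (γr r) ≠ 0 := hbne r hr
    have hc0 : ⟪gradient f (γr r), γr r⟫ ≠ 0 := hrad r hr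
    have hnorm : ‖γr r‖ = r := hγr_norm r hr
    have hHx : Hf (γr r) ≠ 0 := hHne r hr
    -- the velocity vector
    have hw : HasDerivAt γr
        ((r / ⟪gradient f (γr r), γr r⟫) • gradient f (γr r)) r := by
      have h0 := hγr' r hr
      rw [hnorm] at h0
      have heq : (‖gradient f (γr r)‖ / ⟪gradient f (γr r), r⁻¹ • γr r⟫) •
          (‖gradient f (γr r)‖⁻¹ • gradient f (γr r)) =
          (r / ⟪gradient f (γr r), γr r⟫) • gradient f (γr r) := by
        rw [real_inner_smul_right, smul_smul]
        congr 1
        exact my_alg0 _ _ _ hgn hc0 hrpos.ne'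
      rw [heq] at h0
      exact h0
    -- derivatives of scalar compositions
    have hcomp : ∀ (φ : EuclideanSpace ℝ (Fin n) → ℝ), AnalyticOnNhd ℝ φ U →
        HasDerivAt (fun r' => φ (γr r'))
          ((r / ⟪gradient f (γr r), γr r⟫) * fderiv ℝ φ (γr r) (gradient f (γr r))) r := by
      intro φ hφ
      have h := ((hφ _ hxU).differentiableAt.hasFDerivAt).comp_hasDerivAt r hw
      simp only [map_smul, smul_eq_mul] at h
      exact h
    have hax := hcomp a ha
    have hbx' := hcomp b hb
    have hGx := hcomp Gf hGan
    have hHx' := hcomp Hf hHan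
    have hvd := hax.div hbx' hbx
    have hq2d := hGx.div hHx' hHx
    have hAx : A (γr r) = b (γr r) * fderiv ℝ a (γr r) (gradient f (γr r))
        - a (γr r) * fderiv ℝ b (γr r) (gradient f (γr r)) := rfl
    have hPx : Pf (γr r) = (Hf (γr r) * fderiv ℝ Gf (γr r) (gradient f (γr r))
        - Gf (γr r) * fderiv ℝ Hf (γr r) (gradient f (γr r)))
        * ⟪gradient f (γr r), γr r⟫ := rfl
    have hval : HasDerivAt v
        (A (γr r) * r / (⟪gradient f (γr r), γr r⟫ * (b (γr r))^2)) r := by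
      refine hvd.congr_deriv ?_
      rw [hAx]
      exact (my_alg1 _ _ _ _ _ _ hc0 hbx).symm
    refine ⟨hval, ?_, ?_⟩
    · -- derivative of q2
      refine hq2d.congr_deriv ?_
      rw [hPx]
      exact (my_alg2 _ _ _ _ _ _ hc0 hHx).symm
    · -- q2 r = r * deriv v r
      have hdv : deriv v r =
          A (γr r) * r / (⟪gradient f (γr r), γr r⟫ * (b (γr r))^2) := hval.deriv
      have hinner : ⟪γr r, γr r⟫ = r^2 := by
        rw [real_inner_self_eq_norm_sq, hnorm]
      have hq2r : q2 r = (⟪γr r, γr r⟫ * A (γr r)) /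
          ((b (γr r))^2 * ⟪gradient f (γr r), γr r⟫) := rfl
      rw [hq2r, hinner, hdv]
      exact my_alg3 _ _ _ _ hc0 hbx
  have hIoo_mem : Set.Ioo (0:ℝ) r₀ ∈ 𝓝[>] (0:ℝ) :=
    Ioo_mem_nhdsGT_of_mem ⟨le_refl 0, hr₀⟩
  -- the reparameterization map σ and its limit
  set σ : ℝ → ℝ := fun r => if h : r ∈ Set.Ioo (0:ℝ) r₀ then (hγr_mem r h).choose else 0
    with hσ_def
  have hσ : ∀ r, ∀ h : r ∈ Set.Ioo (0:ℝ) r₀, σ r ∈ Set.Ico (0:ℝ) L ∧ γr r = γ (σ r) := by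
    intro r h
    simp only [hσ_def, dif_pos h]
    exact ⟨(hγr_mem r h).choose_spec.1, (hγr_mem r h).choose_spec.2⟩
  have hσt : Tendsto σ (𝓝[>] (0:ℝ)) (𝓝[<] L) := by
    rw [tendsto_nhdsWithin_iff]
    constructor
    · rw [tendsto_order]
      constructor
      · intro c hc
        rcases lt_or_ge c 0 with h0 | h0
        · filter_upwards [hIoo_mem] with r hr
          exact lt_of_lt_of_le h0 (hσ r hr).1.1
        · have hsub : Set.Icc (0:ℝ) c ⊆ Set.Ico (0:ℝ) L := fun t ht =>
            ⟨ht.1, lt_of_le_of_lt ht.2 hc⟩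
          have hcont : ContinuousOn (fun t => ‖γ t‖) (Set.Icc (0:ℝ) c) := fun t ht =>
            (((hγode t (hsub ht)).differentiableAt.continuousAt).norm).continuousWithinAt
          obtain ⟨t₀, ht₀, hmin⟩ := isCompact_Icc.exists_isMinOn
            ⟨0, Set.left_mem_Icc.2 h0⟩ hcont
          have hγt₀ : γ t₀ ≠ 0 := by
            intro h
            exact hγreg t₀ (hsub ht₀) (by rw [h]; exact hgf0)
          have hm : 0 < ‖γ t₀‖ := norm_pos_iff.2 hγt₀
          filter_upwards [Ioo_mem_nhdsGT_of_mem
            (show (0:ℝ) ∈ Set.Ico (0:ℝ) (min ‖γ t₀‖ r₀) from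
              ⟨le_refl 0, lt_min hm hr₀⟩)] with r hr
          have hrIoo : r ∈ Set.Ioo (0:ℝ) r₀ :=
            ⟨hr.1, lt_of_lt_of_le hr.2 (min_le_right _ _)⟩
          by_contra hle
          push_neg at hle
          have hmem : σ r ∈ Set.Icc (0:ℝ) c := ⟨(hσ r hrIoo).1.1, hle⟩
          have h1 : ‖γ t₀‖ ≤ ‖γ (σ r)‖ := hmin hmem
          have h2 : ‖γ (σ r)‖ = r := by
            rw [← (hσ r hrIoo).2]; exact hγr_norm r hrIoo
          have h3 : r < ‖γ t₀‖ := lt_of_lt_of_le hr.2 (min_le_left _ _)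
          linarith [h1, h2 ▸ h1]
      · intro c hcL
        filter_upwards [hIoo_mem] with r hr
        exact lt_trans (hσ r hr).1.2 hcL
    · filter_upwards [hIoo_mem] with r hr
      exact (hσ r hr).1.2
  -- transfer of non-oscillation
  have hT : ∀ φ : EuclideanSpace ℝ (Fin n) → ℝ, AnalyticAt ℝ φ 0 →
      (∀ᶠ r in 𝓝[>] (0:ℝ), φ (γr r) = 0) ∨ (∀ᶠ r in 𝓝[>] (0:ℝ), φ (γr r) ≠ 0) := by
    intro φ hφ
    rcases hosc φ hφ with h | h
    · left
      filter_upwards [hσt.eventually h, hIoo_mem] with r h1 h2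
      rw [(hσ r h2).2]; exact h1
    · right
      filter_upwards [hσt.eventually h, hIoo_mem] with r h1 h2
      rw [(hσ r h2).2]; exact h1
  -- continuity of q2 etc.
  have hγrcont : ∀ r ∈ Set.Ioo (0:ℝ) r₀, ContinuousAt γr r := fun r hr =>
    (hγr' r hr).differentiableAt.continuousAt
  -- eventual monotonicity of q2
  have hMA : ∃ δ : ℝ, 0 < δ ∧ δ ≤ r₀ ∧
      (MonotoneOn q2 (Set.Ioo (0:ℝ) δ) ∨ AntitoneOn q2 (Set.Ioo (0:ℝ) δ)) := by
    have hq2cont : ∀ δ : ℝ, δ ≤ r₀ → ContinuousOn q2 (Set.Ioo (0:ℝ) δ) := by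
      intro δ hδ t ht
      have htI : t ∈ Set.Ioo (0:ℝ) r₀ := ⟨ht.1, lt_of_lt_of_le ht.2 hδ⟩
      exact ((key t htI).2.1.differentiableAt.continuousAt).continuousWithinAt
    have hq2diff : ∀ δ : ℝ, δ ≤ r₀ → DifferentiableOn ℝ q2 (Set.Ioo (0:ℝ) δ) := by
      intro δ hδ t ht
      have htI : t ∈ Set.Ioo (0:ℝ) r₀ := ⟨ht.1, lt_of_lt_of_le ht.2 hδ⟩
      exact ((key t htI).2.1.differentiableAt).differentiableWithinAt
    rcases hT Pf (hPan 0 hOU) with hPz | hPn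
    · -- P vanishes along the curve: q2 has zero derivative, hence monotone
      obtain ⟨u, hu, hsubQ⟩ := mem_nhdsGT_iff_exists_Ioo_subset.1 hPz
      refine ⟨min u r₀, lt_min hu hr₀, min_le_right _ _, Or.inl ?_⟩
      apply monotoneOn_of_deriv_nonneg (convex_Ioo 0 (min u r₀))
      · exact hq2cont _ (min_le_right _ _)
      · rw [interior_Ioo]; exact hq2diff _ (min_le_right _ _)
      · rw [interior_Ioo]
        intro t ht
        have htI : t ∈ Set.Ioo (0:ℝ) r₀ :=
          ⟨ht.1, lt_of_lt_of_le ht.2 (min_le_right _ _)⟩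
        have htu : t ∈ Set.Ioo (0:ℝ) u := ⟨ht.1, lt_of_lt_of_le ht.2 (min_le_left _ _)⟩
        have hPt : Pf (γr t) = 0 := hsubQ htu
        rw [(key t htI).2.1.deriv, hPt]
        simp
    · -- P has constant sign along the curve
      obtain ⟨u, hu, hsubQ⟩ := mem_nhdsGT_iff_exists_Ioo_subset.1 hPn
      set δ := min u r₀ with hδdef
      have hδ0 : 0 < δ := lt_min hu hr₀
      have hδr₀ : δ ≤ r₀ := min_le_right _ _
      have hsubI : Set.Ioo (0:ℝ) δ ⊆ Set.Ioo (0:ℝ) r₀ := fun t ht =>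
        ⟨ht.1, lt_of_lt_of_le ht.2 hδr₀⟩
      have hsubu : Set.Ioo (0:ℝ) δ ⊆ Set.Ioo (0:ℝ) u := fun t ht =>
        ⟨ht.1, lt_of_lt_of_le ht.2 (min_le_left _ _)⟩
      have hψcont : ∀ t ∈ Set.Ioo (0:ℝ) δ, ContinuousAt (fun r => Pf (γr r)) t := by
        intro t ht
        exact ContinuousAt.comp
          ((hPan _ (hmemU t (hsubI ht))).continuousAt) (hγrcont t (hsubI ht))
      have hψne : ∀ t ∈ Set.Ioo (0:ℝ) δ, Pf (γr t) ≠ 0 := fun t ht => hsubQ (hsubu ht)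
      rcases my_const_sign (fun r => Pf (γr r)) δ hδ0 hψcont hψne with hpos | hneg
      · refine ⟨δ, hδ0, hδr₀, Or.inl ?_⟩
        apply monotoneOn_of_deriv_nonneg (convex_Ioo 0 δ)
        · exact hq2cont _ hδr₀
        · rw [interior_Ioo]; exact hq2diff _ hδr₀
        · rw [interior_Ioo]
          intro t ht
          have htI := hsubI ht
          rw [(key t htI).2.1.deriv]
          have h1 : (0:ℝ) < ⟪gradient f (γr t), γr t⟫ ^ 2 :=
            pow_two_pos_of_ne_zero (hrad t htI)
          have h2 : (0:ℝ) < (Hf (γr t)) ^ 2 := pow_two_pos_of_ne_zero (hHne t htI)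
          exact le_of_lt (div_pos (mul_pos (hpos t ht) ht.1) (mul_pos h1 h2))
      · refine ⟨δ, hδ0, hδr₀, Or.inr ?_⟩
        apply antitoneOn_of_deriv_nonpos (convex_Ioo 0 δ)
        · exact hq2cont _ hδr₀
        · rw [interior_Ioo]; exact hq2diff _ hδr₀
        · rw [interior_Ioo]
          intro t ht
          have htI := hsubI ht
          rw [(key t htI).2.1.deriv]
          have h1 : (0:ℝ) < ⟪gradient f (γr t), γr t⟫ ^ 2 :=
            pow_two_pos_of_ne_zero (hrad t htI)
          have h2 : (0:ℝ) < (Hf (γr t)) ^ 2 := pow_two_pos_of_ne_zero (hHne t htI)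
          exact le_of_lt (div_neg_of_neg_of_pos
            (mul_neg_of_neg_of_pos (hneg t ht) ht.1) (mul_pos h1 h2))
  -- exclusion of nonzero eventual bounds
  have hnotGE : ∀ c : ℝ, 0 < c → ¬ (∀ᶠ r in 𝓝[>] (0:ℝ), c ≤ q2 r) := by
    intro c hc hev
    obtain ⟨u, hu, hsubQ⟩ := mem_nhdsGT_iff_exists_Ioo_subset.1 hev
    set δ' := min u r₀ with hδ'def
    have hδ'0 : 0 < δ' := lt_min hu hr₀
    apply my_aux_log v (fun t => deriv v t) δ' c M hδ'0 hc
    · intro t ht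
      have htI : t ∈ Set.Ioo (0:ℝ) r₀ := ⟨ht.1, lt_of_lt_of_le ht.2 (min_le_right _ _)⟩
      have h := (key t htI).1
      exact h.deriv ▸ h
    · intro t ht
      have htI : t ∈ Set.Ioo (0:ℝ) r₀ := ⟨ht.1, lt_of_lt_of_le ht.2 (min_le_right _ _)⟩
      have htu : t ∈ Set.Ioo (0:ℝ) u := ⟨ht.1, lt_of_lt_of_le ht.2 (min_le_left _ _)⟩
      have hq : c ≤ q2 t := hsubQ htu
      have heq : q2 t = t * deriv v t := (key t htI).2.2
      rw [div_le_iff₀ ht.1]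
      linarith [heq ▸ hq]
    · intro t ht
      have htI : t ∈ Set.Ioo (0:ℝ) r₀ := ⟨ht.1, lt_of_lt_of_le ht.2 (min_le_right _ _)⟩
      exact hM t htI
  have hnotLE : ∀ c : ℝ, 0 < c → ¬ (∀ᶠ r in 𝓝[>] (0:ℝ), q2 r ≤ -c) := by
    intro c hc hev
    obtain ⟨u, hu, hsubQ⟩ := mem_nhdsGT_iff_exists_Ioo_subset.1 hev
    set δ' := min u r₀ with hδ'def
    have hδ'0 : 0 < δ' := lt_min hu hr₀
    apply my_aux_log (fun t => -v t) (fun t => -(deriv v t)) δ' c M hδ'0 hc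
    · intro t ht
      have htI : t ∈ Set.Ioo (0:ℝ) r₀ := ⟨ht.1, lt_of_lt_of_le ht.2 (min_le_right _ _)⟩
      have h := (key t htI).1
      exact (h.deriv ▸ h).neg
    · intro t ht
      have htI : t ∈ Set.Ioo (0:ℝ) r₀ := ⟨ht.1, lt_of_lt_of_le ht.2 (min_le_right _ _)⟩
      have htu : t ∈ Set.Ioo (0:ℝ) u := ⟨ht.1, lt_of_lt_of_le ht.2 (min_le_left _ _)⟩
      have hq : q2 t ≤ -c := hsubQ htu
      have heq : q2 t = t * deriv v t := (key t htI).2.2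
      rw [div_le_iff₀ ht.1]
      nlinarith [heq ▸ hq]
    · intro t ht
      have htI : t ∈ Set.Ioo (0:ℝ) r₀ := ⟨ht.1, lt_of_lt_of_le ht.2 (min_le_right _ _)⟩
      have := hM t htI
      rw [abs_neg] at *
      simpa [abs_neg] using this
  -- conclude
  obtain ⟨δ, hδ0, hδr₀, hma⟩ := hMA
  have htq2 : Tendsto q2 (𝓝[>] (0:ℝ)) (𝓝 0) := by
    rcases hma with hmono | hanti
    · exact my_tendsto_zero_of_monotoneOn q2 δ hδ0 hmono hnotGE hnotLE
    · exact my_tendsto_zero_of_antitoneOn q2 δ hδ0 hanti hnotGE hnotLE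
  refine htq2.congr' ?_
  filter_upwards [hIoo_mem] with r hr
  exact (key r hr).2.2
end

section
/- If γ is non-oscillating at O, then the unit gradient along the trajectory converges to minus the limit of secants: lim_{s→L} ν_f(γ(s)) = −ν. -/
open scoped RealInnerProductSpace Topology
open Filter

section Aux

lemma aux_tendsto_of_eventually_le_or_ge {l : Filter ℝ} [l.NeBot] {w : ℝ → ℝ}
    (hb : ∀ᶠ s in l, |w s| ≤ 1)
    (h : ∀ c : ℝ, (∀ᶠ s in l, w s ≤ c) ∨ (∀ᶠ s in l, c ≤ w s)) :
    ∃ b, Tendsto w l (𝓝 b) := by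
  set S : Set ℝ := {c | ∀ᶠ s in l, w s ≤ c} with hS
  have h1 : (1 : ℝ) ∈ S := hb.mono fun s hs => (abs_le.1 hs).2
  have hbdd : BddBelow S := by
    refine ⟨-1, fun c hc => ?_⟩
    by_contra hlt
    push_neg at hlt
    have : ∀ᶠ s in l, False := (hc.and hb).mono fun s ⟨h₁, h₂⟩ => by
      have := (abs_le.1 h₂).1; linarith
    exact this.exists.elim fun _ hF => hF
  refine ⟨sInf S, Metric.tendsto_nhds.2 fun ε hε => ?_⟩
  obtain ⟨c, hcS, hclt⟩ := Real.lt_sInf_add_pos ⟨1, h1⟩ (half_pos hε)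
  have hup : ∀ᶠ s in l, w s < sInf S + ε :=
    hcS.mono fun s hs => lt_of_le_of_lt hs (by linarith)
  have hlow : ∀ᶠ s in l, sInf S - ε < w s := by
    rcases h (sInf S - ε / 2) with hle | hge
    · exact absurd (csInf_le hbdd hle) (by linarith)
    · exact hge.mono fun s hs => by linarith
  filter_upwards [hup, hlow] with s h₁ h₂
  rw [Real.dist_eq, abs_sub_lt_iff]
  constructor <;> linarith

lemma aux_sign_const {L : ℝ} {h : ℝ → ℝ}
    (hc : ∀ᶠ s in 𝓝[<] L, ContinuousAt h s)
    (hne : ∀ᶠ s in 𝓝[<] L, h s ≠ 0) :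
    (∀ᶠ s in 𝓝[<] L, 0 < h s) ∨ (∀ᶠ s in 𝓝[<] L, h s < 0) := by
  obtain ⟨a, haL, hsub⟩ := mem_nhdsLT_iff_exists_Ioo_subset.1 ((hc.and hne).filter_mono le_rfl)
  have haL' : a < L := haL
  set s₀ : ℝ := (a + L) / 2 with hs₀
  have hs₀mem : s₀ ∈ Set.Ioo a L := ⟨by linarith, by linarith⟩
  have key : ∀ t ∈ Set.Ioo a L, (0 < h s₀ → 0 < h t) ∧ (h s₀ < 0 → h t < 0) := by
    intro t ht
    have hivt : ¬ (0 ∈ Set.uIcc (h s₀) (h t)) ∨ (0 < h s₀ ↔ 0 < h t) := by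
      by_cases hsame : (0 < h s₀ ↔ 0 < h t)
      · exact Or.inr hsame
      · left
        intro h0
        have hcont : ContinuousOn h (Set.uIcc s₀ t) := by
          intro x hx
          have hxmem : x ∈ Set.Ioo a L := by
            rcases Set.mem_uIcc.1 hx with ⟨h1, h2⟩ | ⟨h1, h2⟩
            · exact ⟨lt_of_lt_of_le hs₀mem.1 h1, lt_of_le_of_lt h2 ht.2⟩
            · exact ⟨lt_of_lt_of_le ht.1 h1, lt_of_le_of_lt h2 hs₀mem.2⟩
          exact ((hsub hxmem).1).continuousWithinAt
        obtain ⟨z, hz, hz0⟩ := intermediate_value_uIcc hcont h0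
        have hzmem : z ∈ Set.Ioo a L := by
          rcases Set.mem_uIcc.1 hz with ⟨h1, h2⟩ | ⟨h1, h2⟩
          · exact ⟨lt_of_lt_of_le hs₀mem.1 h1, lt_of_le_of_lt h2 ht.2⟩
          · exact ⟨lt_of_lt_of_le ht.1 h1, lt_of_le_of_lt h2 hs₀mem.2⟩
        exact (hsub hzmem).2 hz0
    have hts : h t ≠ 0 := (hsub ht).2
    have hss : h s₀ ≠ 0 := (hsub hs₀mem).2
    rcases hivt with hno | hiff
    · constructor
      · intro hp
        by_contra hnp
        push_neg at hnp
        exact hno (Set.mem_uIcc.2 (Or.inr ⟨hnp, le_of_lt hp⟩))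
      · intro hm
        by_contra hnm
        push_neg at hnm
        exact hno (Set.mem_uIcc.2 (Or.inl ⟨le_of_lt hm, hnm⟩))
    · exact ⟨hiff.1, fun hm => by
        rcases lt_or_gt_of_ne hts with h' | h'
        · exact h'
        · exact absurd (hiff.2 h') (not_lt.2 (le_of_lt hm))⟩
  rcases lt_or_gt_of_ne ((hsub hs₀mem).2) with hneg | hpos
  · right
    filter_upwards [Filter.mem_of_superset (Ioo_mem_nhdsLT haL') (fun t ht => ht)] with t ht
    exact (key t ht).2 hneg
  · left
    filter_upwards [Filter.mem_of_superset (Ioo_mem_nhdsLT haL') (fun t ht => ht)] with t ht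
    exact (key t ht).1 hpos

lemma aux_fderiv_single {n : ℕ} (f : EuclideanSpace ℝ (Fin n) → ℝ)
    (x : EuclideanSpace ℝ (Fin n)) (i : Fin n) :
    fderiv ℝ f x (EuclideanSpace.single i 1) = gradient f x i := by
  have h1 : ⟪gradient f x, EuclideanSpace.single i (1:ℝ)⟫ =
      fderiv ℝ f x (EuclideanSpace.single i 1) :=
    InnerProductSpace.toDual_symm_apply
  rw [EuclideanSpace.inner_single_right] at h1
  simpa using h1.symm

lemma aux_norm_sq_eq {n : ℕ} (v : EuclideanSpace ℝ (Fin n)) :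
    ‖v‖ ^ 2 = ∑ i, (v i) ^ 2 := by
  rw [EuclideanSpace.norm_eq, Real.sq_sqrt (by positivity)]
  simp [sq_abs]

end Aux

set_option maxHeartbeats 1000000 in
/-- along a non-oscillating trajectory the unit gradient converges to `-ν`,
where `ν` is the limit of secants. -/
theorem unit_gradient_tendsto_neg_limit_of_secants
    {n : ℕ} (hn : 2 ≤ n)
    (U : Set (EuclideanSpace ℝ (Fin n))) (hUopen : IsOpen U)
    (hOU : (0 : EuclideanSpace ℝ (Fin n)) ∈ U)
    (f : EuclideanSpace ℝ (Fin n) → ℝ)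
    (hfan : AnalyticOnNhd ℝ f U) (hf0 : f 0 = 0) (hgf0 : gradient f 0 = 0)
    (L : ℝ) (hL : 0 < L)
    (γ : ℝ → EuclideanSpace ℝ (Fin n))
    (hγU : ∀ s ∈ Set.Ico (0 : ℝ) L, γ s ∈ U)
    (hγreg : ∀ s ∈ Set.Ico (0 : ℝ) L, gradient f (γ s) ≠ 0)
    (hγode : ∀ s ∈ Set.Ico (0 : ℝ) L,
      HasDerivAt γ (‖gradient f (γ s)‖⁻¹ • gradient f (γ s)) s)
    (hfneg : f (γ 0) < 0)
    (hfmono : StrictMonoOn (fun s => f (γ s)) (Set.Ico (0 : ℝ) L))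
    (hγlim : Tendsto γ (𝓝[<] L) (𝓝 0))
    (hosc : ∀ g : EuclideanSpace ℝ (Fin n) → ℝ, AnalyticAt ℝ g 0 →
      (∀ᶠ s in 𝓝[<] L, g (γ s) = 0) ∨ (∀ᶠ s in 𝓝[<] L, g (γ s) ≠ 0))
    (ν : EuclideanSpace ℝ (Fin n)) (hν1 : ‖ν‖ = 1)
    (hνlim : Tendsto (fun s => ‖γ s‖⁻¹ • γ s) (𝓝[<] L) (𝓝 ν))
    :
    Tendsto (fun s => ‖gradient f (γ s)‖⁻¹ • gradient f (γ s)) (𝓝[<] L) (𝓝 (-ν)) := by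
  classical
  set u : ℝ → EuclideanSpace ℝ (Fin n) :=
    fun s => ‖gradient f (γ s)‖⁻¹ • gradient f (γ s) with hu
  set g : Fin n → EuclideanSpace ℝ (Fin n) → ℝ :=
    fun i y => fderiv ℝ f y (EuclideanSpace.single i 1) with hgdef
  set q : EuclideanSpace ℝ (Fin n) → ℝ := fun y => ∑ i, (g i y) ^ 2 with hqdef
  have hIoo : ∀ᶠ s in 𝓝[<] L, s ∈ Set.Ioo 0 L := by
    filter_upwards [Ioo_mem_nhdsLT hL] with s hs using hs
  have hIco : ∀ s ∈ Set.Ioo (0:ℝ) L, s ∈ Set.Ico (0:ℝ) L := fun s hs => ⟨le_of_lt hs.1, hs.2⟩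
  -- analyticity
  have hD : AnalyticOnNhd ℝ (fderiv ℝ f) U := hfan.fderiv
  have hgan : ∀ i, ∀ x ∈ U, AnalyticAt ℝ (g i) x := fun i x hx =>
    ((ContinuousLinearMap.apply ℝ ℝ (EuclideanSpace.single i (1:ℝ))).analyticAt _).comp (hD x hx)
  have hqan : ∀ x ∈ U, AnalyticAt ℝ q x := fun x hx =>
    Finset.analyticAt_fun_sum _ fun i _ => (hgan i x hx).pow 2
  -- basic values
  have hgval : ∀ y i, g i y = gradient f y i := fun y i => aux_fderiv_single f y i
  have hqval : ∀ y, q y = ‖gradient f y‖ ^ 2 := by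
    intro y
    rw [aux_norm_sq_eq]
    exact Finset.sum_congr rfl fun i _ => by rw [hgval]
  have hqpos : ∀ s ∈ Set.Ioo (0:ℝ) L, 0 < q (γ s) := by
    intro s hs
    rw [hqval]
    exact pow_pos (norm_pos_iff.2 (hγreg s (hIco s hs))) 2
  have huval : ∀ s i, u s i = ‖gradient f (γ s)‖⁻¹ * g i (γ s) := by
    intro s i
    rw [hgval]
    rfl
  have husq : ∀ s ∈ Set.Ioo (0:ℝ) L, ∀ i, (u s i) ^ 2 * q (γ s) = (g i (γ s)) ^ 2 := by
    intro s hs i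
    rw [huval, mul_pow, hqval]
    have h0 : ‖gradient f (γ s)‖ ≠ 0 := norm_ne_zero_iff.2 (hγreg s (hIco s hs))
    field_simp
  have hunorm : ∀ s ∈ Set.Ioo (0:ℝ) L, ‖u s‖ = 1 := by
    intro s hs
    rw [hu, norm_smul, norm_inv, norm_norm,
      inv_mul_cancel₀ (norm_ne_zero_iff.2 (hγreg s (hIco s hs)))]
  have husum : ∀ s ∈ Set.Ioo (0:ℝ) L, ∑ i, (u s i) ^ 2 = 1 := by
    intro s hs
    rw [← aux_norm_sq_eq, hunorm s hs, one_pow]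
  -- continuity of γ near L
  have hγcont : ∀ s ∈ Set.Ioo (0:ℝ) L, ContinuousAt γ s := fun s hs =>
    (hγode s (hIco s hs)).continuousAt
  -- sign trichotomy for analytic functions along γ
  have hsign : ∀ A : EuclideanSpace ℝ (Fin n) → ℝ, (∀ x ∈ U, AnalyticAt ℝ A x) →
      (∀ᶠ s in 𝓝[<] L, A (γ s) = 0) ∨ (∀ᶠ s in 𝓝[<] L, 0 < A (γ s)) ∨
        (∀ᶠ s in 𝓝[<] L, A (γ s) < 0) := by
    intro A hA
    rcases hosc A (hA 0 hOU) with h0 | hne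
    · exact Or.inl h0
    · refine Or.inr (aux_sign_const ?_ hne)
      filter_upwards [hIoo] with s hs
      exact ((hA (γ s) (hγU s (hIco s hs))).continuousAt).comp (hγcont s hs)
  -- Step 1: each coordinate of u converges
  have hcoord : ∀ i : Fin n, ∃ b : ℝ, Tendsto (fun s => u s i) (𝓝[<] L) (𝓝 b) := by
    intro i
    have hwb : ∀ᶠ s in 𝓝[<] L, |(u s i) ^ 2| ≤ 1 := by
      filter_upwards [hIoo] with s hs
      rw [abs_of_nonneg (sq_nonneg _), ← husum s hs]
      exact Finset.single_le_sum (fun j _ => sq_nonneg (u s j)) (Finset.mem_univ i)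
    have hwc : ∀ c : ℝ, (∀ᶠ s in 𝓝[<] L, (u s i) ^ 2 ≤ c) ∨
        (∀ᶠ s in 𝓝[<] L, c ≤ (u s i) ^ 2) := by
      intro c
      have hAan : ∀ x ∈ U, AnalyticAt ℝ (fun y => (g i y) ^ 2 - c * q y) x := fun x hx =>
        ((hgan i x hx).pow 2).sub ((analyticAt_const).mul (hqan x hx))
      rcases hsign _ hAan with h0 | hpos | hneg
      · left
        filter_upwards [h0, hIoo] with s hs hsI
        have hq := hqpos s hsI
        have := husq s hsI i
        nlinarith [sub_eq_zero.1 (by linarith [hs] : (g i (γ s)) ^ 2 - c * q (γ s) = 0)]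
      · right
        filter_upwards [hpos, hIoo] with s hs hsI
        have hq := hqpos s hsI
        have := husq s hsI i
        nlinarith
      · left
        filter_upwards [hneg, hIoo] with s hs hsI
        have hq := hqpos s hsI
        have := husq s hsI i
        nlinarith
    obtain ⟨b2, hb2⟩ := aux_tendsto_of_eventually_le_or_ge hwb hwc
    rcases hsign (g i) (hgan i) with h0 | hpos | hneg
    · refine ⟨0, Tendsto.congr' ?_ tendsto_const_nhds⟩
      filter_upwards [h0] with s hs
      rw [huval, hs, mul_zero]
    · refine ⟨Real.sqrt b2, ?_⟩
      have hsq : Tendsto (fun s => Real.sqrt ((u s i) ^ 2)) (𝓝[<] L) (𝓝 (Real.sqrt b2)) :=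
        (Real.continuous_sqrt.continuousAt.tendsto).comp hb2
      refine hsq.congr' ?_
      filter_upwards [hpos] with s hs
      have hu0 : 0 ≤ u s i := by
        rw [huval]
        exact mul_nonneg (inv_nonneg.2 (norm_nonneg _)) (le_of_lt hs)
      rw [Real.sqrt_sq hu0]
    · refine ⟨-Real.sqrt b2, ?_⟩
      have hsq : Tendsto (fun s => -Real.sqrt ((u s i) ^ 2)) (𝓝[<] L) (𝓝 (-Real.sqrt b2)) :=
        ((Real.continuous_sqrt.continuousAt.tendsto).comp hb2).neg
      refine hsq.congr' ?_
      filter_upwards [hneg] with s hs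
      have hu0 : u s i ≤ 0 := by
        rw [huval]
        exact mul_nonpos_of_nonneg_of_nonpos (inv_nonneg.2 (norm_nonneg _)) (le_of_lt hs)
      rw [Real.sqrt_sq_eq_abs, abs_of_nonpos hu0, neg_neg]
  choose b hb using hcoord
  set m : EuclideanSpace ℝ (Fin n) := (WithLp.equiv 2 _).symm b with hm
  have hmcoord : ∀ i, m i = b i := fun i => rfl
  -- Step 2: u converges to m
  have hstep2 : Tendsto u (𝓝[<] L) (𝓝 m) := by
    rw [tendsto_iff_dist_tendsto_zero]
    have hsum : Tendsto (fun s => ∑ i, dist (u s i) (m i) ^ 2) (𝓝[<] L) (𝓝 0) := by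
      have h0 : (0:ℝ) = ∑ _i : Fin n, 0 := by simp
      rw [h0]
      refine tendsto_finset_sum _ fun i _ => ?_
      have : Tendsto (fun s => dist (u s i) (m i)) (𝓝[<] L) (𝓝 0) := by
        have := tendsto_iff_dist_tendsto_zero.1 (hmcoord i ▸ hb i)
        exact this
      simpa using this.pow 2
    have hsqrt : Tendsto (fun s => Real.sqrt (∑ i, dist (u s i) (m i) ^ 2)) (𝓝[<] L)
        (𝓝 (Real.sqrt 0)) := (Real.continuous_sqrt.continuousAt.tendsto).comp hsum
    rw [Real.sqrt_zero] at hsqrt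
    refine hsqrt.congr fun s => ?_
    rw [EuclideanSpace.dist_eq]
  -- Step 3: the limit has norm one
  have hmnorm : ‖m‖ = 1 := by
    have hsumsq : Tendsto (fun s => ∑ i, (u s i) ^ 2) (𝓝[<] L) (𝓝 (∑ i, (m i) ^ 2)) :=
      tendsto_finset_sum _ fun i _ => (hmcoord i ▸ hb i).pow 2
    have hone : Tendsto (fun s => ∑ i, (u s i) ^ 2) (𝓝[<] L) (𝓝 1) := by
      refine Tendsto.congr' ?_ (tendsto_const_nhds (α := ℝ))
      filter_upwards [hIoo] with s hs
      exact (husum s hs).symm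
    have heq : (∑ i, (m i) ^ 2) = 1 := tendsto_nhds_unique hsumsq hone
    have h2 : ‖m‖ ^ 2 = 1 := by rw [aux_norm_sq_eq, heq]
    nlinarith [norm_nonneg m]
  -- Step 4: the normalized secant over (L - s) converges to -m
  have hstep4 : Tendsto (fun s => (L - s)⁻¹ • γ s) (𝓝[<] L) (𝓝 (-m)) := by
    rw [Metric.tendsto_nhds]
    intro ε hε
    have hev : ∀ᶠ σ in 𝓝[<] L, ‖u σ - m‖ ≤ ε/2 ∧ σ ∈ Set.Ioo 0 L := by
      have h1 : ∀ᶠ σ in 𝓝[<] L, dist (u σ) m < ε/2 :=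
        Metric.tendsto_nhds.1 hstep2 (ε/2) (half_pos hε)
      filter_upwards [h1, hIoo] with σ hσ1 hσ2
      exact ⟨le_of_lt (by rwa [dist_eq_norm] at hσ1), hσ2⟩
    obtain ⟨a, haL, hsub⟩ := mem_nhdsLT_iff_exists_Ioo_subset.1 hev
    have haL' : a < L := haL
    filter_upwards [Ioo_mem_nhdsLT haL'] with s hs
    have hsIoo : s ∈ Set.Ioo 0 L := (hsub hs).2
    have hkey : ‖γ s + (L - s) • m‖ ≤ ε/2 * (L - s) := by
      have hψ : ∀ t₁ ∈ Set.Ioo s L, ‖(γ t₁ - t₁ • m) - (γ s - s • m)‖ ≤ ε/2 * (t₁ - s) := by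
        intro t₁ ht₁
        have hmvt := Convex.norm_image_sub_le_of_norm_hasDerivWithin_le
          (f := fun t => γ t - t • m) (f' := fun t => u t - m) (s := Set.Icc s t₁) (C := ε/2)
          (fun x hx => ?_) (fun x hx => ?_) (convex_Icc s t₁)
          ⟨le_rfl, le_of_lt ht₁.1⟩ ⟨le_of_lt ht₁.1, le_rfl⟩
        · calc ‖(γ t₁ - t₁ • m) - (γ s - s • m)‖ ≤ ε/2 * ‖t₁ - s‖ := hmvt
            _ = ε/2 * (t₁ - s) := by
                rw [Real.norm_eq_abs, abs_of_nonneg (by linarith [ht₁.1])]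
        · -- derivative
          have hx0 : (0:ℝ) ≤ x := le_trans (le_of_lt hsIoo.1) hx.1
          have hxL : x < L := lt_of_le_of_lt hx.2 ht₁.2
          have hd1 : HasDerivAt γ (u x) x := hγode x ⟨hx0, hxL⟩
          have hd2 : HasDerivAt (fun t : ℝ => t • m) m x := by
            simpa using (hasDerivAt_id x).smul_const m
          exact (hd1.sub hd2).hasDerivWithinAt
        · -- bound
          have hxA : x ∈ Set.Ioo a L :=
            ⟨lt_of_lt_of_le hs.1 hx.1, lt_of_le_of_lt hx.2 ht₁.2⟩
          exact (hsub hxA).1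
      have hlim : Tendsto (fun t₁ => ‖(γ t₁ - t₁ • m) - (γ s - s • m)‖) (𝓝[<] L)
          (𝓝 ‖((0:EuclideanSpace ℝ (Fin n)) - L • m) - (γ s - s • m)‖) := by
        have h1 : Tendsto (fun t₁ : ℝ => t₁ • m) (𝓝[<] L) (𝓝 (L • m)) :=
          ((continuous_id.smul continuous_const).tendsto L).mono_left nhdsWithin_le_nhds
        exact ((hγlim.sub h1).sub tendsto_const_nhds).norm
      have hle : ‖((0:EuclideanSpace ℝ (Fin n)) - L • m) - (γ s - s • m)‖ ≤ ε/2 * (L - s) := by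
        refine le_of_tendsto hlim ?_
        filter_upwards [Ioo_mem_nhdsLT hsIoo.2] with t₁ ht₁
        calc ‖(γ t₁ - t₁ • m) - (γ s - s • m)‖ ≤ ε/2 * (t₁ - s) := hψ t₁ ht₁
          _ ≤ ε/2 * (L - s) := by
              have := ht₁.2
              nlinarith [half_pos hε]
      have heqv : ((0:EuclideanSpace ℝ (Fin n)) - L • m) - (γ s - s • m)
          = -(γ s + (L - s) • m) := by
        rw [sub_smul]
        abel
      rwa [heqv, norm_neg] at hle
    have hLs : (0:ℝ) < L - s := by linarith [hs.2]
    have heqd : dist ((L - s)⁻¹ • γ s) (-m) = (L - s)⁻¹ * ‖γ s + (L - s) • m‖ := by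
      rw [dist_eq_norm, sub_neg_eq_add]
      have : (L - s)⁻¹ • γ s + m = (L - s)⁻¹ • (γ s + (L - s) • m) := by
        rw [smul_add, smul_smul, inv_mul_cancel₀ (ne_of_gt hLs), one_smul]
      rw [this, norm_smul, Real.norm_eq_abs, abs_of_pos (inv_pos.2 hLs)]
    rw [heqd]
    calc (L - s)⁻¹ * ‖γ s + (L - s) • m‖ ≤ (L - s)⁻¹ * (ε/2 * (L - s)) := by
          exact mul_le_mul_of_nonneg_left hkey (le_of_lt (inv_pos.2 hLs))
      _ = ε/2 := by field_simp
      _ < ε := by linarith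
  -- Step 5: ‖γ s‖ / (L - s) → 1
  have hstep5 : Tendsto (fun s => (L - s)⁻¹ * ‖γ s‖) (𝓝[<] L) (𝓝 1) := by
    have h1 : Tendsto (fun s => ‖(L - s)⁻¹ • γ s‖) (𝓝[<] L) (𝓝 ‖-m‖) := hstep4.norm
    rw [norm_neg, hmnorm] at h1
    refine h1.congr' ?_
    filter_upwards [hIoo] with s hs
    rw [norm_smul, Real.norm_eq_abs, abs_of_pos (inv_pos.2 (by linarith [hs.2]))]
  -- Step 6: the secant direction converges to -m
  have hγnorm : ∀ᶠ s in 𝓝[<] L, 0 < ‖γ s‖ := by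
    have h1 : ∀ᶠ s in 𝓝[<] L, (1/2 : ℝ) < (L - s)⁻¹ * ‖γ s‖ :=
      (tendsto_order.1 hstep5).1 (1/2) (by norm_num)
    filter_upwards [h1, hIoo] with s hs hsI
    by_contra h0
    push_neg at h0
    have : ‖γ s‖ = 0 := le_antisymm h0 (norm_nonneg _)
    rw [this, mul_zero] at hs
    linarith
  have hstep6 : Tendsto (fun s => ‖γ s‖⁻¹ • γ s) (𝓝[<] L) (𝓝 (-m)) := by
    have h1 : Tendsto (fun s => ((L - s)⁻¹ * ‖γ s‖)⁻¹ • ((L - s)⁻¹ • γ s)) (𝓝[<] L)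
        (𝓝 ((1:ℝ)⁻¹ • (-m))) := (hstep5.inv₀ one_ne_zero).smul hstep4
    rw [inv_one, one_smul] at h1
    refine h1.congr' ?_
    filter_upwards [hγnorm, hIoo] with s hs hsI
    rw [smul_smul]
    congr 1
    have hLs : L - s ≠ 0 := ne_of_gt (by linarith [hsI.2])
    have hns : ‖γ s‖ ≠ 0 := ne_of_gt hs
    field_simp
  -- Step 7: conclude
  have hνm : ν = -m := tendsto_nhds_unique hνlim hstep6
  have : -ν = m := by rw [hνm, neg_neg]
  rw [this]
  exact hstep2
end

section
/- If γ is non-oscillating at O, then Hs(f)(x) ≠ 0 for all x on γ sufficiently close to O, and there exists a self-adjoint linear operator 𝓗 on ℝⁿ with operator norm ‖𝓗‖ = 1 such that Hs(f)(x)/‖Hs(f)(x)‖ → 𝓗 as x → O along γ. -/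
open scoped RealInnerProductSpace Topology
open Filter Set

/-- A finite nonempty type with a total transitive relation has a maximum. -/
lemma aux_exists_rel_max {ι : Type*} [Fintype ι] [Nonempty ι] (r : ι → ι → Prop)
    (htot : ∀ k l, r k l ∨ r l k) (htrans : ∀ a b c, r a b → r b c → r a c) :
    ∃ m, ∀ k, r k m := by
  classical
  have hrefl : ∀ a, r a a := fun a => (htot a a).elim id id
  suffices h : ∀ s : Finset ι, s.Nonempty → ∃ m ∈ s, ∀ k ∈ s, r k m by
    obtain ⟨m, _, hm⟩ := h Finset.univ ⟨Classical.arbitrary ι, Finset.mem_univ _⟩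
    exact ⟨m, fun k => hm k (Finset.mem_univ k)⟩
  intro s hs
  induction s using Finset.induction with
  | empty => simpa using hs
  | @insert a s ha ih =>
    rcases s.eq_empty_or_nonempty with rfl | hsne
    · refine ⟨a, by simp, ?_⟩
      intro k hk
      simp only [Finset.mem_insert, Finset.notMem_empty, or_false] at hk
      rw [hk]; exact hrefl a
    · obtain ⟨m, hm, hmax⟩ := ih hsne
      rcases htot a m with h1 | h1
      · refine ⟨m, Finset.mem_insert_of_mem hm, ?_⟩
        intro k hk
        rcases Finset.mem_insert.1 hk with rfl | hk
        · exact h1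
        · exact hmax k hk
      · refine ⟨a, Finset.mem_insert_self a s, ?_⟩
        intro k hk
        rcases Finset.mem_insert.1 hk with rfl | hk
        · exact hrefl k
        · exact htrans k m a (hmax k hk) h1

/-- A continuous nonvanishing function on an interval has constant sign. -/
lemma aux_sign_const_s3 {c L : ℝ} {u : ℝ → ℝ} (hu : ContinuousOn u (Set.Ioo c L))
    (hne : ∀ s ∈ Set.Ioo c L, u s ≠ 0) {a b : ℝ} (ha : a ∈ Set.Ioo c L) (hb : b ∈ Set.Ioo c L)
    (hua : u a < 0) : u b < 0 := by
  by_contra h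
  push_neg at h
  have hub : 0 < u b := lt_of_le_of_ne h (fun h' => hne b hb h'.symm)
  rcases le_total a b with hab | hab
  · have hsub : Set.Icc a b ⊆ Set.Ioo c L := Set.Icc_subset_Ioo ha.1 hb.2
    have := intermediate_value_Icc hab (hu.mono hsub)
    have h0 : (0 : ℝ) ∈ Set.Icc (u a) (u b) := ⟨hua.le, hub.le⟩
    obtain ⟨x, hx, hx0⟩ := this h0
    exact hne x (hsub hx) hx0
  · have hsub : Set.Icc b a ⊆ Set.Ioo c L := Set.Icc_subset_Ioo hb.1 ha.2
    have := intermediate_value_Icc' hab (hu.mono hsub)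
    have h0 : (0 : ℝ) ∈ Set.Icc (u a) (u b) := ⟨hua.le, hub.le⟩
    obtain ⟨x, hx, hx0⟩ := this h0
    exact hne x (hsub hx) hx0

/-- Ratio of two functions converges given sign trichotomy for all linear combinations. -/
lemma aux_tendsto_ratio {l : Filter ℝ} [l.NeBot] {p q : ℝ → ℝ} {C : ℝ}
    (htri : ∀ lam : ℝ, (∀ᶠ s in l, p s - lam * q s = 0) ∨
      (∀ᶠ s in l, 0 < p s - lam * q s) ∨ (∀ᶠ s in l, p s - lam * q s < 0))
    (hq : ∀ᶠ s in l, 0 < q s) (hbd : ∀ᶠ s in l, |p s| ≤ C * q s) :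
    ∃ c, Tendsto (fun s => p s / q s) l (𝓝 c) := by
  set S : Set ℝ := {lam | ∀ᶠ s in l, lam * q s < p s} with hS
  have hSne : S.Nonempty := by
    refine ⟨-(C+1), ?_⟩
    filter_upwards [hq, hbd] with s hqs hbs
    have := abs_le.1 hbs
    nlinarith [this.1]
  have hSbdd : BddAbove S := by
    refine ⟨C, fun lam hlam => ?_⟩
    by_contra hgt
    push_neg at hgt
    obtain ⟨s, h1, h2, h3⟩ := (hlam.and (hq.and hbd)).exists
    have := abs_le.1 h3
    nlinarith [this.2]
  set c := sSup S with hc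
  refine ⟨c, tendsto_order.2 ⟨?_, ?_⟩⟩
  · intro a hac
    obtain ⟨lam, hlamS, halam⟩ := exists_lt_of_lt_csSup hSne hac
    filter_upwards [hlamS, hq] with s h1 h2
    have : lam < p s / q s := (lt_div_iff₀ h2).2 (by linarith)
    linarith
  · intro a hca
    set lam := (c + a) / 2 with hlam
    have hclam : c < lam := by simp [hlam]; linarith
    have hlama : lam < a := by simp [hlam]; linarith
    have hnotS : lam ∉ S := fun h => absurd (le_csSup hSbdd h) (not_le.2 hclam)
    rcases htri lam with h0 | hpos | hneg
    · exfalso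
      set mu := (c + lam) / 2 with hmu
      have hmuS : mu ∈ S := by
        filter_upwards [h0, hq] with s h1 h2
        have hps : p s = lam * q s := by linarith
        rw [hps]
        have : mu < lam := by simp [hmu]; linarith
        nlinarith
      have : mu ≤ c := le_csSup hSbdd hmuS
      simp [hmu] at this; linarith
    · exact absurd (hpos.mono fun s h => by linarith) hnotS
    · filter_upwards [hneg, hq] with s h1 h2
      have : p s / q s < lam := (div_lt_iff₀ h2).2 (by linarith)
      linarith

noncomputable def auxDualIso (n : ℕ) :
    (EuclideanSpace ℝ (Fin n) →L[ℝ] ℝ) →L[ℝ] EuclideanSpace ℝ (Fin n) :=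
  LinearMap.toContinuousLinearMap
  { toFun := fun φ => (InnerProductSpace.toDual ℝ (EuclideanSpace ℝ (Fin n))).symm φ
    map_add' := fun φ ψ => by simp
    map_smul' := fun c φ => by simp }

lemma auxDualIso_inner {n : ℕ} (φ : EuclideanSpace ℝ (Fin n) →L[ℝ] ℝ)
    (z : EuclideanSpace ℝ (Fin n)) :
    ⟪auxDualIso n φ, z⟫ = φ z := InnerProductSpace.toDual_symm_apply

lemma aux_gradient_eq {n : ℕ} (f : EuclideanSpace ℝ (Fin n) → ℝ) :
    gradient f = fun y => auxDualIso n (fderiv ℝ f y) := rfl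

lemma aux_hessian_symm {n : ℕ} {f : EuclideanSpace ℝ (Fin n) → ℝ} {x : EuclideanSpace ℝ (Fin n)}
    (h2 : ContDiffAt ℝ 2 f x) (hd : DifferentiableAt ℝ (fderiv ℝ f) x)
    (u v : EuclideanSpace ℝ (Fin n)) :
    ⟪fderiv ℝ (gradient f) x u, v⟫ = ⟪u, fderiv ℝ (gradient f) x v⟫ := by
  have hsymm : IsSymmSndFDerivAt ℝ f x := h2.isSymmSndFDerivAt (by norm_num)
  have hfd : fderiv ℝ (gradient f) x
      = (auxDualIso n).comp (fderiv ℝ (fderiv ℝ f) x) := by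
    rw [aux_gradient_eq]
    exact ((auxDualIso n).hasFDerivAt.comp x hd.hasFDerivAt).fderiv
  have key : ∀ w z : EuclideanSpace ℝ (Fin n),
      ⟪fderiv ℝ (gradient f) x w, z⟫ = fderiv ℝ (fderiv ℝ f) x w z := by
    intro w z
    rw [hfd]
    exact auxDualIso_inner _ _
  rw [key u v, real_inner_comm, key v u]
  exact hsymm u v

set_option maxHeartbeats 2000000 in
/-- along a non-oscillating trajectory the Hessian is eventually nonzero and its
normalized direction converges to a self-adjoint operator of operator norm one. -/
theorem normalized_hessian_converges_along_nonoscillating_trajectory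
    {n : ℕ} (hn : 2 ≤ n)
    (U : Set (EuclideanSpace ℝ (Fin n))) (hUopen : IsOpen U)
    (hOU : (0 : EuclideanSpace ℝ (Fin n)) ∈ U)
    (f : EuclideanSpace ℝ (Fin n) → ℝ)
    (hfan : AnalyticOnNhd ℝ f U) (hf0 : f 0 = 0) (hgf0 : gradient f 0 = 0)
    (L : ℝ) (hL : 0 < L)
    (γ : ℝ → EuclideanSpace ℝ (Fin n))
    (hγU : ∀ s ∈ Set.Ico (0 : ℝ) L, γ s ∈ U)
    (hγreg : ∀ s ∈ Set.Ico (0 : ℝ) L, gradient f (γ s) ≠ 0)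
    (hγode : ∀ s ∈ Set.Ico (0 : ℝ) L,
      HasDerivAt γ (‖gradient f (γ s)‖⁻¹ • gradient f (γ s)) s)
    (hfneg : f (γ 0) < 0)
    (hfmono : StrictMonoOn (fun s => f (γ s)) (Set.Ico (0 : ℝ) L))
    (hγlim : Tendsto γ (𝓝[<] L) (𝓝 0))
    (hosc : ∀ g : EuclideanSpace ℝ (Fin n) → ℝ, AnalyticAt ℝ g 0 →
      (∀ᶠ s in 𝓝[<] L, g (γ s) = 0) ∨ (∀ᶠ s in 𝓝[<] L, g (γ s) ≠ 0))
    :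
    (∀ᶠ s in 𝓝[<] L, fderiv ℝ (gradient f) (γ s) ≠ 0) ∧
    ∃ H : EuclideanSpace ℝ (Fin n) →L[ℝ] EuclideanSpace ℝ (Fin n),
      (∀ u v : EuclideanSpace ℝ (Fin n), ⟪H u, v⟫ = ⟪u, H v⟫) ∧ ‖H‖ = 1 ∧
      Tendsto (fun s => ‖fderiv ℝ (gradient f) (γ s)‖⁻¹ • fderiv ℝ (gradient f) (γ s))
        (𝓝[<] L) (𝓝 H) := by
  classical
  set l := 𝓝[<] L with hldef
  -- basic interval manipulation
  have hIoo : ∀ c : ℝ, c < L → Set.Ioo c L ∈ l := fun c hc => Ioo_mem_nhdsLT hc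
  have extract : ∀ {P : ℝ → Prop}, (∀ᶠ s in l, P s) →
      ∃ c, 0 ≤ c ∧ c < L ∧ ∀ s ∈ Set.Ioo c L, P s := by
    intro P hP
    obtain ⟨c, hcL, hc⟩ := (nhdsLT_basis (α := ℝ) L).eventually_iff.mp hP
    exact ⟨max c 0, le_max_right _ _, max_lt hcL hL,
      fun s hs => hc ⟨lt_of_le_of_lt (le_max_left _ _) hs.1, hs.2⟩⟩
  have hmemIco : ∀ {c : ℝ}, 0 ≤ c → ∀ s ∈ Set.Ioo c L, s ∈ Set.Ico (0:ℝ) L :=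
    fun {c} hc s hs => ⟨le_trans hc hs.1.le, hs.2⟩
  have hγcont : ∀ {c : ℝ}, 0 ≤ c → ContinuousOn γ (Set.Ioo c L) := by
    intro c hc s hs
    exact ((hγode s (hmemIco hc s hs)).continuousAt).continuousWithinAt
  have hcomp : ∀ {g : EuclideanSpace ℝ (Fin n) → ℝ}, AnalyticOnNhd ℝ g U →
      ∀ {c : ℝ}, 0 ≤ c → ContinuousOn (fun s => g (γ s)) (Set.Ioo c L) := by
    intro g hg c hc
    exact (hg.continuousOn).comp (hγcont hc) (fun s hs => hγU s (hmemIco hc s hs))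
  -- trichotomy for analytic functions along the trajectory
  have tri : ∀ g : EuclideanSpace ℝ (Fin n) → ℝ, AnalyticOnNhd ℝ g U →
      (∀ᶠ s in l, g (γ s) = 0) ∨ (∀ᶠ s in l, 0 < g (γ s)) ∨ (∀ᶠ s in l, g (γ s) < 0) := by
    intro g hg
    rcases hosc g (hg 0 hOU) with h | h
    · exact Or.inl h
    · obtain ⟨c, hc0, hcL, hc⟩ := extract h
      have hs0mem : (c + L) / 2 ∈ Set.Ioo c L := ⟨by linarith, by linarith⟩
      rcases (hc _ hs0mem).lt_or_gt with hneg | hpos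
      · refine Or.inr (Or.inr (eventually_of_mem (hIoo c hcL) fun s hs => ?_))
        exact aux_sign_const_s3 (hcomp hg hc0) hc hs0mem hs hneg
      · refine Or.inr (Or.inl (eventually_of_mem (hIoo c hcL) fun s hs => ?_))
        rcases (hc s hs).lt_or_gt with hneg' | hpos'
        · exact absurd (aux_sign_const_s3 (hcomp hg hc0) hc hs hs0mem hneg') (by linarith)
        · exact hpos'
  -- analyticity of derived objects
  have hfd_an : AnalyticOnNhd ℝ (fderiv ℝ f) U := hfan.fderiv
  have hgrad_an : AnalyticOnNhd ℝ (gradient f) U := by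
    rw [aux_gradient_eq]
    exact (auxDualIso n).comp_analyticOnNhd hfd_an
  set G := fderiv ℝ (gradient f) with hGdef
  have hG_an : AnalyticOnNhd ℝ G U := hgrad_an.fderiv
  -- nontriviality and basis
  haveI : Nonempty (Fin n) := ⟨⟨0, by omega⟩⟩
  haveI : Nontrivial (EuclideanSpace ℝ (Fin n)) := by
    refine nontrivial_of_ne (EuclideanSpace.single ⟨0, by omega⟩ (1:ℝ)) 0 fun h => ?_
    have h1 := congrArg (fun w => ‖w‖) h
    simp [EuclideanSpace.norm_single] at h1
  haveI : Nontrivial (EuclideanSpace ℝ (Fin n) →L[ℝ] EuclideanSpace ℝ (Fin n)) := by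
    obtain ⟨x, y, hxy⟩ := exists_pair_ne (EuclideanSpace ℝ (Fin n))
    refine nontrivial_of_ne (ContinuousLinearMap.id ℝ _) 0 fun h => ?_
    have h1 := DFunLike.congr_fun h (x - y)
    simp [sub_eq_zero] at h1
    exact hxy h1
  set d := Module.finrank ℝ (EuclideanSpace ℝ (Fin n) →L[ℝ] EuclideanSpace ℝ (Fin n)) with hd
  haveI : Nonempty (Fin d) := Fin.pos_iff_nonempty.1 Module.finrank_pos
  set b := Module.finBasis ℝ (EuclideanSpace ℝ (Fin n) →L[ℝ] EuclideanSpace ℝ (Fin n)) with hb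
  set gk : Fin d → EuclideanSpace ℝ (Fin n) → ℝ :=
    fun k x => b.repr (G x) k with hgkdef
  have hgk_an : ∀ k, AnalyticOnNhd ℝ (gk k) U := by
    intro k
    have h1 := (LinearMap.toContinuousLinearMap (b.coord k)).comp_analyticOnNhd hG_an
    have heq : gk k = ⇑(LinearMap.toContinuousLinearMap (b.coord k)) ∘ G := by
      funext x
      simp [hgkdef, Function.comp, Module.Basis.coord_apply]
    rw [heq]
    exact h1
  -- Part 1 : the Hessian is eventually nonzero
  set Q : EuclideanSpace ℝ (Fin n) → ℝ := fun x => ∑ k, (gk k x)^2 with hQdef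
  have hQ_an : AnalyticOnNhd ℝ Q U :=
    Finset.analyticOnNhd_fun_sum _ (fun k _ => (hgk_an k).pow 2)
  have hQne : ∀ᶠ s in l, Q (γ s) ≠ 0 := by
    rcases hosc Q (hQ_an 0 hOU) with hQ0 | hQne
    · exfalso
      have hG0 : ∀ᶠ s in l, G (γ s) = 0 := by
        refine hQ0.mono fun s hs => ?_
        have hk : ∀ k, b.repr (G (γ s)) k = 0 := by
          intro k
          have h1 : ∀ k ∈ Finset.univ, (0:ℝ) ≤ (gk k (γ s))^2 := fun k _ => sq_nonneg _
          have h2 := (Finset.sum_eq_zero_iff_of_nonneg h1).1 hs k (Finset.mem_univ k)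
          have := sq_eq_zero_iff.1 h2
          simpa [hgkdef] using this
        have : b.repr (G (γ s)) = 0 := Finsupp.ext hk
        exact (LinearEquiv.map_eq_zero_iff _).1 this
      obtain ⟨c, hc0, hcL, hc⟩ := extract hG0
      set s1 := (c + L) / 2 with hs1def
      have hs1mem : s1 ∈ Set.Ioo c L := ⟨by simp [hs1def]; linarith, by simp [hs1def]; linarith⟩
      have hs1Ico : s1 ∈ Set.Ico (0:ℝ) L := hmemIco hc0 s1 hs1mem
      -- gradient f ∘ γ is constant on [s1, L)
      have hconst : ∀ s ∈ Set.Ioo s1 L, gradient f (γ s) = gradient f (γ s1) := by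
        intro s hs
        have hs1s : s1 ≤ s := hs.1.le
        have hsub : Set.Icc s1 s ⊆ Set.Ioo c L :=
          Set.Icc_subset_Ioo hs1mem.1 hs.2
        have hsubIco : ∀ y ∈ Set.Icc s1 s, y ∈ Set.Ico (0:ℝ) L :=
          fun y hy => hmemIco hc0 y (hsub hy)
        have hγc : ContinuousOn γ (Set.Icc s1 s) :=
          fun y hy => ((hγode y (hsubIco y hy)).continuousAt).continuousWithinAt
        have hgradc : ContinuousOn (fun y => gradient f (γ y)) (Set.Icc s1 s) :=
          (hgrad_an.continuousOn).comp hγc (fun y hy => hγU y (hsubIco y hy))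
        have hderiv : ∀ y ∈ Set.Ico s1 s,
            HasDerivWithinAt (fun y => gradient f (γ y)) 0 (Set.Ici y) y := by
          intro y hy
          have hyIoo : y ∈ Set.Ioo c L := hsub ⟨hy.1, hy.2.le⟩
          have hyIco : y ∈ Set.Ico (0:ℝ) L := hmemIco hc0 y hyIoo
          have h1 : HasDerivAt (fun y => gradient f (γ y))
              (G (γ y) (‖gradient f (γ y)‖⁻¹ • gradient f (γ y))) y :=
            (((hgrad_an (γ y) (hγU y hyIco)).differentiableAt).hasFDerivAt).comp_hasDerivAt
              y (hγode y hyIco)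
          have h2 : G (γ y) = 0 := hc y hyIoo
          rw [h2] at h1
          simpa using h1.hasDerivWithinAt
        have := constant_of_has_deriv_right_zero hgradc hderiv s ⟨hs1s, le_refl s⟩
        exact this
      have hv : Tendsto (fun s => gradient f (γ s)) l (𝓝 (gradient f (γ s1))) := by
        apply tendsto_const_nhds.congr'
        exact eventually_of_mem (hIoo s1 hs1mem.2) fun s hs => (hconst s hs).symm
      have hv0 : Tendsto (fun s => gradient f (γ s)) l (𝓝 0) := by
        have hcont0 := ((hgrad_an 0 hOU).continuousAt).tendsto
        have := hcont0.comp hγlim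
        rwa [hgf0] at this
      exact hγreg s1 hs1Ico (tendsto_nhds_unique hv hv0)
    · exact hQne
  have hGne : ∀ᶠ s in l, G (γ s) ≠ 0 := by
    refine hQne.mono fun s hs h0 => hs ?_
    simp [hQdef, hgkdef, h0]
  -- Part 2 : dominant coordinate
  have htot : ∀ k k' : Fin d, (∀ᶠ s in l, (gk k (γ s))^2 ≤ (gk k' (γ s))^2) ∨
      (∀ᶠ s in l, (gk k' (γ s))^2 ≤ (gk k (γ s))^2) := by
    intro k k'
    have han : AnalyticOnNhd ℝ (fun x => (gk k' x)^2 - (gk k x)^2) U :=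
      ((hgk_an k').pow 2).sub ((hgk_an k).pow 2)
    rcases tri _ han with h0 | hpos | hneg
    · exact Or.inl (h0.mono fun s hs => by linarith [hs])
    · exact Or.inl (hpos.mono fun s hs => by linarith [hs])
    · exact Or.inr (hneg.mono fun s hs => by linarith [hs])
  obtain ⟨m, hm⟩ := aux_exists_rel_max
    (fun k k' => ∀ᶠ s in l, (gk k (γ s))^2 ≤ (gk k' (γ s))^2)
    htot (fun k₁ k₂ k₃ h1 h2 => (h1.and h2).mono fun s hs => le_trans hs.1 hs.2)
  -- Part 3 : the dominant coordinate is eventually nonzero and of constant sign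
  have hmne : ∀ᶠ s in l, gk m (γ s) ≠ 0 := by
    rcases hosc (gk m) ((hgk_an m) 0 hOU) with h0 | hne
    · exfalso
      obtain ⟨s, h1, h2, h3⟩ := (h0.and ((eventually_all.2 hm).and hQne)).exists
      apply h3
      simp only [hQdef]
      apply Finset.sum_eq_zero
      intro k _
      have h4 := h2 k
      rw [h1] at h4
      nlinarith [sq_nonneg (gk k (γ s))]
    · exact hne
  obtain ⟨σ, hσ1, hσpos⟩ : ∃ σ : ℝ, σ^2 = 1 ∧ ∀ᶠ s in l, 0 < σ * gk m (γ s) := by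
    rcases tri (gk m) (hgk_an m) with h0 | hpos | hneg
    · exfalso
      obtain ⟨s, hs1, hs2⟩ := (h0.and hmne).exists
      exact hs2 hs1
    · exact ⟨1, by norm_num, hpos.mono fun s hs => by linarith⟩
    · exact ⟨-1, by norm_num, hneg.mono fun s hs => by nlinarith⟩
  have hσcases : σ = 1 ∨ σ = -1 := by
    have h1 : (σ - 1) * (σ + 1) = 0 := by linear_combination hσ1
    rcases mul_eq_zero.1 h1 with h | h
    · exact Or.inl (by linarith)
    · exact Or.inr (by linarith)
  have hσne : σ ≠ 0 := by
    rcases hσcases with h | h <;> rw [h] <;> norm_num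
  -- Part 4 : every coordinate ratio converges
  set q : ℝ → ℝ := fun s => σ * gk m (γ s) with hqdef
  have hratio : ∀ k : Fin d, ∃ ck : ℝ, Tendsto (fun s => gk k (γ s) / q s) l (𝓝 ck) := by
    intro k
    apply aux_tendsto_ratio (C := 1)
    · intro lam
      have han : AnalyticOnNhd ℝ (fun x => gk k x - (lam * σ) * gk m x) U :=
        (hgk_an k).sub (analyticOnNhd_const.mul (hgk_an m))
      rcases tri _ han with h0 | hpos | hneg
      · refine Or.inl (h0.mono fun s hs => ?_)
        simp only [hqdef]
        linear_combination hs
      · refine Or.inr (Or.inl (hpos.mono fun s hs => ?_))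
        simp only [hqdef]
        nlinarith [hs]
      · refine Or.inr (Or.inr (hneg.mono fun s hs => ?_))
        simp only [hqdef]
        nlinarith [hs]
    · exact hσpos
    · filter_upwards [hσpos, hm k] with s h1 h2
      have h3 : |gk k (γ s)| ≤ |gk m (γ s)| := by
        nlinarith [sq_abs (gk k (γ s)), sq_abs (gk m (γ s)),
          abs_nonneg (gk k (γ s)), abs_nonneg (gk m (γ s))]
      have habs : |gk m (γ s)| = σ * gk m (γ s) := by
        rcases hσcases with h | h
        · rw [h] at h1 ⊢
          rw [one_mul] at h1 ⊢
          exact abs_of_pos h1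
        · rw [h] at h1 ⊢
          have : gk m (γ s) < 0 := by linarith
          rw [abs_of_neg this]; ring
      simp only [hqdef]
      rw [one_mul, ← habs]
      exact h3
  choose cc hcc using hratio
  have hcm : cc m = σ := by
    have h1 : Tendsto (fun s => gk m (γ s) / q s) l (𝓝 σ) := by
      apply tendsto_const_nhds.congr'
      filter_upwards [hσpos] with s hs
      simp only [hqdef]
      rw [eq_div_iff (ne_of_gt hs)]
      linear_combination gk m (γ s) * hσ1
    exact tendsto_nhds_unique (hcc m) h1
  -- Part 5 : convergence of the renormalized Hessian
  set M := ∑ k, cc k • b k with hMdef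
  have hGs : ∀ s : ℝ, G (γ s) = ∑ k, gk k (γ s) • b k := by
    intro s
    simp only [hgkdef]
    exact (b.sum_repr (G (γ s))).symm
  have hΦ : Tendsto (fun s => (q s)⁻¹ • G (γ s)) l (𝓝 M) := by
    have h1 : Tendsto (fun s => ∑ k, (gk k (γ s) / q s) • b k) l (𝓝 M) := by
      rw [hMdef]
      exact tendsto_finset_sum _ fun k _ => (hcc k).smul_const (b k)
    apply h1.congr'
    filter_upwards with s
    rw [hGs s, Finset.smul_sum]
    exact Finset.sum_congr rfl fun k _ => by rw [smul_smul, div_eq_inv_mul]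
  have hreprM : b.repr M m = σ := by
    rw [hMdef, map_sum]
    rw [Finset.sum_apply']
    simp only [map_smul, Module.Basis.repr_self, Finsupp.smul_apply, Finsupp.single_apply, smul_eq_mul]
    simp [hcm]
  have hM0 : M ≠ 0 := by
    intro h
    rw [h] at hreprM
    simp at hreprM
    exact hσne hreprM.symm
  set T := ‖M‖ with hTdef
  have hTpos : 0 < T := norm_pos_iff.2 hM0
  have hnormΦ : Tendsto (fun s => ‖(q s)⁻¹ • G (γ s)‖) l (𝓝 T) := hΦ.norm
  have hev2 : ∀ᶠ s in l, 0 < ‖(q s)⁻¹ • G (γ s)‖ := hnormΦ.eventually (eventually_gt_nhds hTpos)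
  have hfinal : Tendsto (fun s => ‖G (γ s)‖⁻¹ • G (γ s)) l (𝓝 (T⁻¹ • M)) := by
    have h2 : Tendsto (fun s => ‖(q s)⁻¹ • G (γ s)‖⁻¹ • ((q s)⁻¹ • G (γ s))) l (𝓝 (T⁻¹ • M)) :=
      (hnormΦ.inv₀ hTpos.ne').smul hΦ
    apply h2.congr'
    filter_upwards [hσpos, hev2] with s hq hpos
    have hqpos : 0 < q s := hq
    have hnG : ‖G (γ s)‖ = q s * ‖(q s)⁻¹ • G (γ s)‖ := by
      rw [norm_smul, norm_inv, Real.norm_eq_abs, abs_of_pos hqpos]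
      field_simp
    rw [smul_smul, hnG, mul_inv]
    congr 1
    ring
  -- conclusion
  refine ⟨hGne, T⁻¹ • M, ?_, ?_, hfinal⟩
  · intro u v
    have hmemEv : ∀ᶠ s in l, γ s ∈ U :=
      eventually_of_mem (hIoo 0 hL) fun s hs => hγU s ⟨hs.1.le, hs.2⟩
    have happly : ∀ w : EuclideanSpace ℝ (Fin n),
        Continuous fun A : EuclideanSpace ℝ (Fin n) →L[ℝ] EuclideanSpace ℝ (Fin n) => A w :=
      fun w => (ContinuousLinearMap.apply ℝ (EuclideanSpace ℝ (Fin n)) w).continuous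
    have hψcont : Continuous fun A : EuclideanSpace ℝ (Fin n) →L[ℝ] EuclideanSpace ℝ (Fin n) =>
        (⟪A u, v⟫ - ⟪u, A v⟫ : ℝ) := by
      apply Continuous.sub
      · exact continuous_inner.comp ((happly u).prodMk continuous_const)
      · exact continuous_inner.comp (continuous_const.prodMk (happly v))
    have hsymmEv : ∀ᶠ s in l,
        (⟪(‖G (γ s)‖⁻¹ • G (γ s)) u, v⟫ - ⟪u, (‖G (γ s)‖⁻¹ • G (γ s)) v⟫ : ℝ) = 0 := by
      filter_upwards [hmemEv] with s hs
      have h2 : ContDiffAt ℝ 2 f (γ s) := (hfan _ hs).contDiffAt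
      have hdf : DifferentiableAt ℝ (fderiv ℝ f) (γ s) := (hfd_an _ hs).differentiableAt
      have hsym := aux_hessian_symm h2 hdf u v
      rw [← hGdef] at hsym
      simp only [ContinuousLinearMap.smul_apply, real_inner_smul_left, real_inner_smul_right]
      rw [hsym]
      ring
    have hψH : Tendsto (fun s =>
        (⟪(‖G (γ s)‖⁻¹ • G (γ s)) u, v⟫ - ⟪u, (‖G (γ s)‖⁻¹ • G (γ s)) v⟫ : ℝ)) l
        (𝓝 (⟪(T⁻¹ • M) u, v⟫ - ⟪u, (T⁻¹ • M) v⟫ : ℝ)) :=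
      (hψcont.tendsto _).comp hfinal
    have hψ0 : Tendsto (fun s =>
        (⟪(‖G (γ s)‖⁻¹ • G (γ s)) u, v⟫ - ⟪u, (‖G (γ s)‖⁻¹ • G (γ s)) v⟫ : ℝ)) l (𝓝 0) :=
      tendsto_const_nhds.congr' (hsymmEv.mono fun s hs => hs.symm)
    have h0 : (⟪(T⁻¹ • M) u, v⟫ - ⟪u, (T⁻¹ • M) v⟫ : ℝ) = 0 := tendsto_nhds_unique hψH hψ0
    linarith [h0]
  · have h1 := norm_smul (T⁻¹) M
    rw [h1, norm_inv, Real.norm_eq_abs, abs_of_pos hTpos]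
    exact inv_mul_cancel₀ hTpos.ne'
end

section
/- Let f be real analytic near O with f(O) = 0 and leading homogeneous part f_p of degree p ≥ 2 (i.e. f = f_p + f_{p+1} + … is the Taylor expansion at O into homogeneous parts, with f_p ≠ 0). Let γ be a half-trajectory of the unit gradient field of f with f negative and increasing along γ and γ(s) → O, and let ν be its limit of secants. Then ν is an eigen-vector of Hs(f_p)(ν): there exists λ ∈ ℝ with Hs(f_p)(ν)·ν = λ·ν. -/
open scoped RealInnerProductSpace Topology
open Filter

section PartI

open Asymptotics FormalMultilinearSeries

variable {E : Type*} [NormedAddCommGroup E] [NormedSpace ℝ E] [CompleteSpace E]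

set_option linter.unusedSectionVars false

lemma pow_isBigO_pow_of_le' {p j : ℕ} (hj : j ≤ p) :
    (fun x : E => ‖x‖ ^ (p + 1)) =O[nhds 0] fun x => ‖x‖ ^ (j + 1) := by
  apply IsBigO.of_bound 1
  filter_upwards [Metric.ball_mem_nhds (0 : E) one_pos] with x hx
  simp only [Metric.mem_ball, dist_zero_right] at hx
  have h1 : ‖x‖ ^ (p+1) ≤ ‖x‖ ^ (j+1) :=
    pow_le_pow_of_le_one (norm_nonneg x) hx.le (by omega)
  simpa [abs_of_nonneg (pow_nonneg (norm_nonneg x) _)] using h1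

lemma diag_zero_of_isBigO' {h : E → ℝ} {q : FormalMultilinearSeries ℝ E ℝ} {p : ℕ}
    (hq : HasFPowerSeriesAt h q 0)
    (hO : h =O[nhds 0] fun x => ‖x‖ ^ (p + 1)) :
    ∀ j ≤ p, ∀ y : E, (q j fun _ => y) = 0 := by
  intro j
  induction j using Nat.strong_induction_on with
  | _ j ih =>
    intro hjp y
    have psum_eq : q.partialSum (j + 1) = fun y => q j fun _ => y := by
      funext z
      refine Finset.sum_eq_single _ (fun b hb hnb => ?_) fun hn => ?_
      · have hb' := Finset.mem_range_succ_iff.mp hb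
        simp [ih b (hb'.lt_of_ne hnb) (hb'.trans hjp)]
      · exact absurd (Finset.mem_range.mpr (lt_add_one j)) hn
    have h1 := hq.isBigO_sub_partialSum_pow (j + 1)
    simp only [zero_add, psum_eq] at h1
    have h2 : h =O[nhds 0] fun x : E => ‖x‖ ^ (j + 1) :=
      hO.trans (pow_isBigO_pow_of_le' hjp)
    have h3 : (fun y : E => (q j fun _ => y)) =O[nhds 0] fun y => ‖y‖ ^ (j + 1) := by
      have := h2.sub h1
      simpa using this
    exact h3.continuousMultilinearMap_apply_eq_zero y

/-- the truncated tail of a formal multilinear series -/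
noncomputable def fmsTail (q : FormalMultilinearSeries ℝ E ℝ) (p : ℕ) :
    FormalMultilinearSeries ℝ E ℝ :=
  fun j => if j ≤ p then 0 else q j

lemma tail_radius_le' (q : FormalMultilinearSeries ℝ E ℝ) (p : ℕ) :
    q.radius ≤ (fmsTail q p).radius := by
  refine ENNReal.le_of_forall_nnreal_lt fun r hr => ?_
  obtain ⟨C, hC0, hC⟩ := q.norm_mul_pow_le_of_lt_radius hr
  refine (fmsTail q p).le_radius_of_bound C fun m => ?_
  have h1 : ‖fmsTail q p m‖ ≤ ‖q m‖ := by
    by_cases hm : m ≤ p <;> simp [fmsTail, hm]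
  calc ‖fmsTail q p m‖ * (r:ℝ) ^ m ≤ ‖q m‖ * (r:ℝ) ^ m := by
        apply mul_le_mul_of_nonneg_right h1 (by positivity)
    _ ≤ C := hC m

lemma hasFPowerSeriesOnBall_tail' {h : E → ℝ} {q : FormalMultilinearSeries ℝ E ℝ} {p : ℕ}
    {r : ENNReal} (hq : HasFPowerSeriesOnBall h q 0 r)
    (hdiag : ∀ j ≤ p, ∀ y : E, (q j fun _ => y) = 0) :
    HasFPowerSeriesOnBall h (fmsTail q p) 0 r := by
  refine ⟨hq.r_le.trans (tail_radius_le' q p), hq.r_pos, fun {y} hy => ?_⟩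
  have h1 := hq.hasSum hy
  have h2 : ∀ j, (fmsTail q p j fun _ => y) = (q j fun _ => y) := by
    intro j
    by_cases hj : j ≤ p
    · simp [fmsTail, hj, hdiag j hj y]
    · simp [fmsTail, hj]
  exact h1.congr_fun h2

lemma derivSeries_eq_zero' {q : FormalMultilinearSeries ℝ E ℝ} {k : ℕ}
    (hz : q (1 + k) = 0) : q.derivSeries k = 0 := by
  have hcos : q.changeOriginSeries 1 k = 0 := by
    unfold FormalMultilinearSeries.changeOriginSeries
    refine Finset.sum_eq_zero fun s _ => ?_
    have hn := q.norm_changeOriginSeriesTerm 1 k s.1 s.2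
    rw [hz] at hn
    simp only [norm_zero] at hn
    exact ContinuousMultilinearMap.opNorm_zero_iff.mp hn
  unfold FormalMultilinearSeries.derivSeries
  rw [ContinuousLinearMap.compFormalMultilinearSeries_apply]
  rw [hcos]
  ext y v
  simp

/-- PART I: derivative estimate for analytic functions vanishing to high order -/
lemma fderiv_isBigO_of_analytic {h : E → ℝ} {p : ℕ}
    (hh : AnalyticAt ℝ h 0)
    (hO : h =O[nhds 0] fun x => ‖x‖ ^ (p + 1)) :
    (fun x => fderiv ℝ h x) =O[nhds 0] fun x => ‖x‖ ^ p := by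
  obtain ⟨q, hq⟩ := hh
  have hdiag := diag_zero_of_isBigO' hq hO
  obtain ⟨r, hqr⟩ := hq
  have htail : HasFPowerSeriesOnBall h (fmsTail q p) 0 r :=
    hasFPowerSeriesOnBall_tail' hqr hdiag
  have hder : HasFPowerSeriesOnBall (fderiv ℝ h) (fmsTail q p).derivSeries 0 r :=
    htail.fderiv
  have hps : ∀ y : E, (fmsTail q p).derivSeries.partialSum p y = 0 := by
    intro y
    refine Finset.sum_eq_zero fun k hk => ?_
    have hk' : k < p := Finset.mem_range.mp hk
    have hz : fmsTail q p (1 + k) = 0 := by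
      simp [fmsTail, show 1 + k ≤ p by omega]
    rw [derivSeries_eq_zero' hz]
    rfl
  have := hder.hasFPowerSeriesAt.isBigO_sub_partialSum_pow p
  simp only [zero_add, hps, sub_zero] at this
  exact this

end PartI

section PartII

set_option linter.unusedSectionVars false

variable {E : Type*} [NormedAddCommGroup E] [InnerProductSpace ℝ E] [CompleteSpace E]
variable {fp : E → ℝ} {p : ℕ}

lemma fderiv_homog (hdf : Differentiable ℝ fp)
    (hom : ∀ (t : ℝ) (x : E), fp (t • x) = t ^ p * fp x) (hp : 1 ≤ p)
    {t : ℝ} (ht : t ≠ 0) (x : E) :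
    fderiv ℝ fp (t • x) = t ^ (p - 1) • fderiv ℝ fp x := by
  have hc : HasFDerivAt (fun y : E => t • y) (t • ContinuousLinearMap.id ℝ E) x :=
    (hasFDerivAt_id x).const_smul t
  have h1 : HasFDerivAt (fun y => fp (t • y))
      ((fderiv ℝ fp (t • x)).comp (t • ContinuousLinearMap.id ℝ E)) x :=
    (hdf (t • x)).hasFDerivAt.comp x hc
  have h2 : HasFDerivAt (fun y => fp (t • y)) ((t ^ p) • fderiv ℝ fp x) x := by
    have := ((hdf x).hasFDerivAt.const_mul (t ^ p))
    refine HasFDerivAt.congr_of_eventuallyEq this ?_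
    filter_upwards with y using (hom t y)
  have heq := h1.unique h2
  ext v
  have h3 := congrFun (congrArg (fun (L : E →L[ℝ] ℝ) => (L : E → ℝ)) heq) v
  simp only [ContinuousLinearMap.coe_comp', Function.comp_apply,
    ContinuousLinearMap.coe_smul', Pi.smul_apply, ContinuousLinearMap.smul_apply,
    ContinuousLinearMap.coe_id', id_eq, map_smul] at h3 ⊢
  have hp' : t ^ p = t * t ^ (p - 1) := by
    conv_lhs => rw [show p = 1 + (p - 1) by omega]
    rw [pow_add, pow_one]
  rw [hp'] at h3
  simp only [smul_eq_mul, mul_assoc] at h3 ⊢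
  exact mul_left_cancel₀ ht h3

lemma gradient_homog (hdf : Differentiable ℝ fp)
    (hom : ∀ (t : ℝ) (x : E), fp (t • x) = t ^ p * fp x) (hp : 1 ≤ p)
    {t : ℝ} (ht : t ≠ 0) (x : E) :
    gradient fp (t • x) = t ^ (p - 1) • gradient fp x := by
  unfold gradient
  rw [fderiv_homog hdf hom hp ht x, map_smul]

lemma inner_gradient_eq_fderiv (g : E → ℝ) (x v : E) :
    ⟪gradient g x, v⟫ = fderiv ℝ g x v := by
  unfold gradient
  exact InnerProductSpace.toDual_symm_apply

lemma euler_identity (hdf : Differentiable ℝ fp)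
    (hom : ∀ (t : ℝ) (x : E), fp (t • x) = t ^ p * fp x) (x : E) :
    ⟪gradient fp x, x⟫ = (p : ℝ) * fp x := by
  have hc : HasDerivAt (fun t : ℝ => t • x) ((1 : ℝ) • x) 1 :=
    (hasDerivAt_id 1).smul_const x
  have h1 : HasDerivAt (fun t : ℝ => fp (t • x)) (fderiv ℝ fp ((1:ℝ) • x) ((1:ℝ) • x)) 1 :=
    (hdf ((1:ℝ) • x)).hasFDerivAt.comp_hasDerivAt 1 hc
  have h2 : HasDerivAt (fun t : ℝ => t ^ p * fp x) ((p * 1 ^ (p - 1)) * fp x) 1 :=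
    (hasDerivAt_pow p 1).mul_const (fp x)
  have h2' : HasDerivAt (fun t : ℝ => fp (t • x)) ((p * 1 ^ (p - 1)) * fp x) 1 := by
    refine h2.congr_of_eventuallyEq ?_
    filter_upwards with t using (hom t x)
  have := h1.unique h2'
  rw [inner_gradient_eq_fderiv]
  simpa using this

lemma gradient_eq_comp (g : E → ℝ) :
    gradient g = fun x => (InnerProductSpace.toDual ℝ E).symm (fderiv ℝ g x) := rfl

lemma differentiable_gradient_of_analytic (hg : AnalyticOnNhd ℝ fp Set.univ) :
    Differentiable ℝ (gradient fp) := by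
  rw [gradient_eq_comp]
  intro x
  have h1 : DifferentiableAt ℝ (fderiv ℝ fp) x :=
    ((hg.fderiv) x (Set.mem_univ x)).differentiableAt
  exact ((InnerProductSpace.toDual ℝ E).symm.toContinuousLinearEquiv
    : StrongDual ℝ E ≃L[ℝ] E).differentiableAt.comp x h1

lemma continuous_gradient_of_analytic (hg : AnalyticOnNhd ℝ fp Set.univ) :
    Continuous (gradient fp) :=
  (differentiable_gradient_of_analytic hg).continuous

lemma hessian_diag_eq (hg : AnalyticOnNhd ℝ fp Set.univ)
    (hom : ∀ (t : ℝ) (x : E), fp (t • x) = t ^ p * fp x) (hp : 2 ≤ p) (x : E) :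
    fderiv ℝ (gradient fp) x x = ((p : ℝ) - 1) • gradient fp x := by
  have hdf : Differentiable ℝ fp := fun y => (hg y (Set.mem_univ y)).differentiableAt
  have hgd : DifferentiableAt ℝ (gradient fp) x :=
    differentiable_gradient_of_analytic hg x
  have hc : HasDerivAt (fun t : ℝ => t • x) ((1 : ℝ) • x) 1 :=
    (hasDerivAt_id 1).smul_const x
  have hc' : HasDerivAt (fun t : ℝ => t • x) x 1 := by simpa using hc
  have hgd' : HasFDerivAt (gradient fp) (fderiv ℝ (gradient fp) x) ((1:ℝ) • x) := by
    rw [one_smul]; exact hgd.hasFDerivAt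
  have h1 : HasDerivAt (fun t : ℝ => gradient fp (t • x))
      (fderiv ℝ (gradient fp) x x) 1 := by
    have h := hgd'.comp_hasDerivAt 1 hc'; exact h
  have h2 : HasDerivAt (fun t : ℝ => t ^ (p - 1) • gradient fp x)
      ((((p : ℝ) - 1) * 1 ^ (p - 1 - 1)) • gradient fp x) 1 := by
    have := (hasDerivAt_pow (p - 1) (1:ℝ)).smul_const (gradient fp x)
    convert this using 2
    push_cast [Nat.cast_sub (by omega : 1 ≤ p)]
    ring
  have h2' : HasDerivAt (fun t : ℝ => gradient fp (t • x))
      ((((p : ℝ) - 1) * 1 ^ (p - 1 - 1)) • gradient fp x) 1 := by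
    refine h2.congr_of_eventuallyEq ?_
    have hne : ∀ᶠ t : ℝ in nhds 1, t ≠ 0 :=
      eventually_ne_nhds (by norm_num)
    filter_upwards [hne] with t ht
    exact gradient_homog hdf hom (by omega) ht x
  have := h1.unique h2'
  rw [this]
  simp

/-- derivative of the norm along a differentiable curve, at a point where the curve is nonzero -/
lemma hasDerivAt_norm_curve {γ : ℝ → E} {d : E} {s : ℝ}
    (hγ : HasDerivAt γ d s) (hne : γ s ≠ 0) :
    HasDerivAt (fun t => ‖γ t‖) (‖γ s‖⁻¹ * ⟪γ s, d⟫) s := by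
  have hq : HasDerivAt (fun t => ⟪γ t, γ t⟫) (⟪γ s, d⟫ + ⟪d, γ s⟫) s :=
    hγ.inner ℝ hγ
  have hq0 : ⟪γ s, γ s⟫ ≠ 0 := inner_self_ne_zero.mpr hne
  have hs : HasDerivAt (fun t => Real.sqrt ⟪γ t, γ t⟫)
      (1 / (2 * Real.sqrt ⟪γ s, γ s⟫) * (⟪γ s, d⟫ + ⟪d, γ s⟫)) s :=
    (Real.hasDerivAt_sqrt hq0).comp s hq
  have hnorm : ∀ t, Real.sqrt ⟪γ t, γ t⟫ = ‖γ t‖ := by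
    intro t
    rw [real_inner_self_eq_norm_mul_norm, Real.sqrt_mul_self (norm_nonneg _)]
  have hs' : HasDerivAt (fun t => ‖γ t‖)
      (1 / (2 * Real.sqrt ⟪γ s, γ s⟫) * (⟪γ s, d⟫ + ⟪d, γ s⟫)) s := by
    refine hs.congr_of_eventuallyEq ?_
    filter_upwards with t using (hnorm t).symm
  convert hs' using 1
  rw [hnorm s, real_inner_comm d (γ s)]
  have hn0 : ‖γ s‖ ≠ 0 := norm_ne_zero_iff.mpr hne
  field_simp
  ring

end PartII

set_option maxHeartbeats 1000000 in
/-- the limit of secants of a gradient trajectory is an eigen-vector of the Hessian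
of the leading homogeneous part `f_p` at `ν`. -/
theorem secant_limit_is_eigenvector_of_leading_part_hessian
    {n : ℕ} (hn : 2 ≤ n)
    (U : Set (EuclideanSpace ℝ (Fin n))) (hUopen : IsOpen U)
    (hOU : (0 : EuclideanSpace ℝ (Fin n)) ∈ U)
    (f : EuclideanSpace ℝ (Fin n) → ℝ)
    (hfan : AnalyticOnNhd ℝ f U) (hf0 : f 0 = 0) (hgf0 : gradient f 0 = 0)
    (L : ℝ) (hL : 0 < L)
    (γ : ℝ → EuclideanSpace ℝ (Fin n))
    (hγU : ∀ s ∈ Set.Ico (0 : ℝ) L, γ s ∈ U)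
    (hγreg : ∀ s ∈ Set.Ico (0 : ℝ) L, gradient f (γ s) ≠ 0)
    (hγode : ∀ s ∈ Set.Ico (0 : ℝ) L,
      HasDerivAt γ (‖gradient f (γ s)‖⁻¹ • gradient f (γ s)) s)
    (hfneg : f (γ 0) < 0)
    (hfmono : StrictMonoOn (fun s => f (γ s)) (Set.Ico (0 : ℝ) L))
    (hγlim : Tendsto γ (𝓝[<] L) (𝓝 0))
    (p : ℕ) (hp : 2 ≤ p)
    (fp : EuclideanSpace ℝ (Fin n) → ℝ)
    (hfpan : AnalyticOnNhd ℝ fp Set.univ)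
    (hfphom : ∀ (t : ℝ) (x : EuclideanSpace ℝ (Fin n)), fp (t • x) = t ^ p * fp x)
    (hfpne : ∃ x, fp x ≠ 0)
    (hlead : (fun x => f x - fp x) =O[𝓝 (0 : EuclideanSpace ℝ (Fin n))]
      fun x => ‖x‖ ^ (p + 1))
    (ν : EuclideanSpace ℝ (Fin n)) (hν1 : ‖ν‖ = 1)
    (hνlim : Tendsto (fun s => ‖γ s‖⁻¹ • γ s) (𝓝[<] L) (𝓝 ν))
    :
    ∃ lam : ℝ, fderiv ℝ (gradient fp) ν ν = lam • ν := by
  classical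
  have hfpuniv : ∀ x, AnalyticAt ℝ fp x := fun x => hfpan x (Set.mem_univ x)
  have hdfp : Differentiable ℝ fp := fun x => (hfpuniv x).differentiableAt
  have hfpc : Continuous fp := hdfp.continuous
  have hgradc : Continuous (gradient fp) := continuous_gradient_of_analytic hfpan
  have hhess := hessian_diag_eq hfpan hfphom hp ν
  by_cases hWz : gradient fp ν - ((p:ℝ) * fp ν) • ν = 0
  · refine ⟨((p:ℝ) - 1) * ((p:ℝ) * fp ν), ?_⟩
    rw [hhess, sub_eq_zero.mp hWz, smul_smul]
  · exfalso
    set W : EuclideanSpace ℝ (Fin n) := gradient fp ν - ((p:ℝ) * fp ν) • ν with hWdef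
    set c := ‖W‖ with hcdef
    have hc : 0 < c := norm_pos_iff.mpr hWz
    set φ := 𝓝[<] L with hφdef
    -- γ never vanishes on the trajectory
    have hγne : ∀ s ∈ Set.Ico (0:ℝ) L, γ s ≠ 0 := by
      intro s hs h0
      exact hγreg s hs (by rw [h0, hgf0])
    have hrpos : ∀ s ∈ Set.Ico (0:ℝ) L, 0 < ‖γ s‖ :=
      fun s hs => norm_pos_iff.mpr (hγne s hs)
    -- unit speed
    have hunit : ∀ s ∈ Set.Ico (0:ℝ) L, ‖‖gradient f (γ s)‖⁻¹ • gradient f (γ s)‖ = 1 := by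
      intro s hs
      rw [norm_smul, norm_inv, norm_norm,
        inv_mul_cancel₀ (norm_ne_zero_iff.mpr (hγreg s hs))]
    -- the norm of γ s is at most L - s
    have hrle : ∀ s ∈ Set.Ico (0:ℝ) L, ‖γ s‖ ≤ L - s := by
      intro s hs
      have hlip : ∀ t ∈ Set.Ico (0:ℝ) L, ‖γ t - γ s‖ ≤ 1 * ‖t - s‖ := by
        intro t ht
        refine Convex.norm_image_sub_le_of_norm_hasDerivWithin_le
          (fun x hx => (hγode x hx).hasDerivWithinAt)
          (fun x hx => le_of_eq (hunit x hx)) (convex_Ico 0 L) hs ht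
      have h1 : Tendsto (fun t => ‖γ t - γ s‖) φ (𝓝 ‖(0 : EuclideanSpace ℝ (Fin n)) - γ s‖) :=
        (hγlim.sub tendsto_const_nhds).norm
      have h2 : Tendsto (fun t : ℝ => 1 * ‖t - s‖) φ (𝓝 (1 * ‖L - s‖)) :=
        ((continuous_const.mul (continuous_id.sub continuous_const).norm).tendsto L).mono_left
          nhdsWithin_le_nhds
      have h3 : ‖(0 : EuclideanSpace ℝ (Fin n)) - γ s‖ ≤ 1 * ‖L - s‖ := by
        refine le_of_tendsto_of_tendsto h1 h2 ?_
        filter_upwards [Ico_mem_nhdsLT_of_mem (show L ∈ Set.Ioc s L from ⟨hs.2, le_refl L⟩)]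
          with t ht
        exact hlip t ⟨le_trans hs.1 ht.1, ht.2⟩
      rw [zero_sub, norm_neg] at h3
      calc ‖γ s‖ ≤ 1 * ‖L - s‖ := h3
        _ = L - s := by
          rw [one_mul, Real.norm_eq_abs, abs_of_pos (by linarith [hs.2])]
    -- gradient difference estimate
    obtain ⟨C, hCpos, hCbound⟩ : ∃ C > 0, ∀ᶠ x in 𝓝 (0 : EuclideanSpace ℝ (Fin n)),
        ‖gradient f x - gradient fp x‖ ≤ C * ‖x‖ ^ p := by
      have hsubanalytic : AnalyticAt ℝ (fun x => f x - fp x) 0 :=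
        (hfan 0 hOU).sub (hfpuniv 0)
      have hfdO := fderiv_isBigO_of_analytic hsubanalytic hlead
      obtain ⟨C0, hC0⟩ := hfdO.bound
      refine ⟨max C0 1, lt_of_lt_of_le one_pos (le_max_right _ _), ?_⟩
      filter_upwards [hC0, hUopen.mem_nhds hOU] with x hx hxU
      have hdfx : DifferentiableAt ℝ f x := (hfan x hxU).differentiableAt
      have hsubder : fderiv ℝ (fun y => f y - fp y) x = fderiv ℝ f x - fderiv ℝ fp x :=
        fderiv_sub hdfx (hdfp x)
      have hgradsub : gradient f x - gradient fp x =
          (InnerProductSpace.toDual ℝ (EuclideanSpace ℝ (Fin n))).symm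
            (fderiv ℝ (fun y => f y - fp y) x) := by
        rw [hsubder, map_sub]; rfl
      have hnormeq : ‖gradient f x - gradient fp x‖ = ‖fderiv ℝ (fun y => f y - fp y) x‖ := by
        rw [hgradsub, LinearIsometryEquiv.norm_map]
      rw [hnormeq]
      calc ‖fderiv ℝ (fun y => f y - fp y) x‖ ≤ C0 * ‖‖x‖ ^ p‖ := hx
        _ ≤ max C0 1 * ‖x‖ ^ p := by
          rw [Real.norm_eq_abs, abs_of_nonneg (by positivity : (0:ℝ) ≤ ‖x‖ ^ p)]
          exact mul_le_mul_of_nonneg_right (le_max_left _ _) (by positivity)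
    -- bound for the gradient of fp on the unit sphere
    obtain ⟨M, hM⟩ : ∃ M, ∀ x : EuclideanSpace ℝ (Fin n), ‖x‖ = 1 → ‖gradient fp x‖ ≤ M := by
      obtain ⟨M, hM⟩ := (isCompact_sphere (0 : EuclideanSpace ℝ (Fin n)) 1).exists_bound_of_continuousOn
        hgradc.continuousOn
      exact ⟨M, fun x hx => hM x (by simpa [mem_sphere_zero_iff_norm] using hx)⟩
    have hM0 : 0 ≤ M := le_trans (norm_nonneg _) (hM ν hν1)
    have hMC : 0 < M + C := by linarith
    set K := c ^ 2 / (8 * (M + C)) with hKdef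
    have hK : 0 < K := by positivity
    -- the good region
    have ev1 : ∀ᶠ s in φ,
        ‖(gradient fp (‖γ s‖⁻¹ • γ s) - ((p:ℝ) * fp (‖γ s‖⁻¹ • γ s)) • (‖γ s‖⁻¹ • γ s)) - W‖
          < c / 2 := by
      have contW : Continuous (fun x : EuclideanSpace ℝ (Fin n) =>
          gradient fp x - ((p:ℝ) * fp x) • x) :=
        hgradc.sub ((continuous_const.mul hfpc).smul continuous_id)
      have hten := (contW.tendsto ν).comp hνlim
      have h5 := Metric.tendsto_nhds.mp hten (c / 2) (by positivity)
      filter_upwards [h5] with s hs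
      rw [Function.comp_apply, dist_eq_norm] at hs
      exact hs
    have ev2 : ∀ᶠ s in φ, ‖γ s‖ < min 1 (c / (4 * C)) := by
      have := (continuous_norm.tendsto (0 : EuclideanSpace ℝ (Fin n))).comp hγlim
      simp only [norm_zero] at this
      exact this (Iio_mem_nhds (by positivity))
    have ev3 : ∀ᶠ s in φ, ‖gradient f (γ s) - gradient fp (γ s)‖ ≤ C * ‖γ s‖ ^ p :=
      hγlim.eventually hCbound
    have ev4 : ∀ᶠ s in φ, s ∈ Set.Ico (0:ℝ) L :=
      eventually_of_mem (Ico_mem_nhdsLT_of_mem ⟨hL, le_refl L⟩) (fun s hs => hs)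
    obtain ⟨a, haL, hIooP⟩ := mem_nhdsLT_iff_exists_Ioo_subset.mp
      (((ev1.and ev2).and (ev3.and ev4)).filter_mono (le_refl φ) : _)
    set s0 := max ((a + L) / 2) 0 with hs0def
    have hs0L : s0 < L := by
      apply max_lt _ hL
      simp only [Set.mem_Iio] at haL
      linarith
    have hs00 : 0 ≤ s0 := le_max_right _ _
    have hIco : ∀ s ∈ Set.Ico s0 L, s ∈ Set.Ioo a L := by
      intro s hs
      simp only [Set.mem_Iio] at haL
      constructor
      · have : (a + L) / 2 ≤ s0 := le_max_left _ _
        have := hs.1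
        linarith
      · exact hs.2
    -- the key derivative bound
    have hkey : ∀ s ∈ Set.Ico s0 L, ∃ v,
        HasDerivAt (fun t => fp (γ t) / ‖γ t‖ ^ p) v s ∧ K * (L - s)⁻¹ ≤ v := by
      intro s hs
      obtain ⟨⟨h1, h2⟩, h3, hsIco⟩ := hIooP (hIco s hs)
      set r := ‖γ s‖ with hrdef
      have hr0 : 0 < r := hrpos s hsIco
      set u := r⁻¹ • γ s with hudef
      have hu1 : ‖u‖ = 1 := by
        rw [hudef, norm_smul, norm_inv, norm_norm, inv_mul_cancel₀ hr0.ne']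
      have hγu : γ s = r • u := (smul_inv_smul₀ hr0.ne' (γ s)).symm
      set G := gradient f (γ s) with hGdef
      have hGne : G ≠ 0 := hγreg s hsIco
      have hGnorm : 0 < ‖G‖ := norm_pos_iff.mpr hGne
      set d := ‖G‖⁻¹ • G with hddef
      have hγd : HasDerivAt γ d s := hγode s hsIco
      have hA : HasDerivAt (fun t => fp (γ t)) (⟪gradient fp (γ s), d⟫) s := by
        have h := (hdfp (γ s)).hasFDerivAt.comp_hasDerivAt s hγd
        rw [← inner_gradient_eq_fderiv] at h
        exact h
      have hrd : HasDerivAt (fun t => ‖γ t‖) (r⁻¹ * ⟪γ s, d⟫) s :=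
        hasDerivAt_norm_curve hγd (hγne s hsIco)
      have hB : HasDerivAt (fun t => ‖γ t‖ ^ p)
          ((p:ℝ) * r ^ (p - 1) * (r⁻¹ * ⟪γ s, d⟫)) s := hrd.pow p
      have hBne : r ^ p ≠ 0 := pow_ne_zero p hr0.ne'
      have hΦ := hA.div hB hBne
      refine ⟨_, hΦ, ?_⟩
      -- now the lower bound on the derivative value
      set Wu := gradient fp u - ((p:ℝ) * fp u) • u with hWudef
      -- homogeneity facts
      have hgradhom : gradient fp (γ s) = r ^ (p - 1) • gradient fp u := by
        rw [hγu]; exact gradient_homog hdfp hfphom (by omega) hr0.ne' u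
      have hfpγ : fp (γ s) = r ^ p * fp u := by rw [hγu, hfphom]
      have heuler : ⟪gradient fp u, u⟫ = (p:ℝ) * fp u := euler_identity hdfp hfphom u
      have huu : ⟪u, u⟫ = (1:ℝ) := by
        rw [real_inner_self_eq_norm_mul_norm, hu1]; norm_num
      have hWuu : ⟪Wu, u⟫ = 0 := by
        rw [hWudef, inner_sub_left, real_inner_smul_left, heuler, huu]; ring
      have hWugrad : ⟪Wu, gradient fp u⟫ = ‖Wu‖ ^ 2 := by
        have : gradient fp u = Wu + ((p:ℝ) * fp u) • u := by rw [hWudef]; abel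
        rw [this, inner_add_right, real_inner_smul_right, hWuu,
          real_inner_self_eq_norm_sq]
        ring
      -- error term
      set Eg := G - gradient fp (γ s) with hEgdef
      have hEg : ‖Eg‖ ≤ C * r ^ p := h3
      -- Wu is close to W
      have hWuc : c / 2 ≤ ‖Wu‖ := by
        have hW1 : ‖W‖ - ‖Wu‖ ≤ ‖W - Wu‖ := norm_sub_norm_le W Wu
        have hW2 : ‖W - Wu‖ = ‖Wu - W‖ := norm_sub_rev W Wu
        have := h1
        rw [hWudef]
        rw [hW2] at hW1
        have hlt := h1
        linarith [hlt]
      have hr1 : r ≤ 1 := le_of_lt (lt_of_lt_of_le h2 (min_le_left _ _))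
      have hrc : C * r ≤ c / 4 := by
        have := lt_of_lt_of_le h2 (min_le_right _ _)
        calc C * r ≤ C * (c / (4 * C)) := by
              apply mul_le_mul_of_nonneg_left (le_of_lt this) hCpos.le
          _ = c / 4 := by field_simp
      -- inner product bound
      have hWuG : r ^ (p - 1) * (c ^ 2 / 8) ≤ ⟪Wu, G⟫ := by
        have hsplit : G = gradient fp (γ s) + Eg := by rw [hEgdef]; abel
        rw [hsplit, inner_add_right, hgradhom, real_inner_smul_right, hWugrad]
        have habs : |⟪Wu, Eg⟫| ≤ ‖Wu‖ * ‖Eg‖ := abs_real_inner_le_norm Wu Eg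
        have hlow : -(‖Wu‖ * (C * r ^ p)) ≤ ⟪Wu, Eg⟫ := by
          have h4 : ‖Wu‖ * ‖Eg‖ ≤ ‖Wu‖ * (C * r ^ p) :=
            mul_le_mul_of_nonneg_left hEg (norm_nonneg _)
          nlinarith [abs_le.mp habs]
        have hrp : r ^ p = r ^ (p - 1) * r := by
          conv_lhs => rw [show p = (p - 1) + 1 by omega]
          rw [pow_succ]
        have hWuok : c ^ 2 / 8 ≤ ‖Wu‖ ^ 2 - C * r * ‖Wu‖ := by
          nlinarith [hWuc, hrc, hc]
        have hrpow : (0:ℝ) < r ^ (p - 1) := pow_pos hr0 _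
        have hmul := mul_le_mul_of_nonneg_left hWuok hrpow.le
        have hexp : r ^ (p - 1) * (‖Wu‖ ^ 2 - C * r * ‖Wu‖)
            = r ^ (p - 1) * ‖Wu‖ ^ 2 - ‖Wu‖ * (C * r ^ p) := by
          rw [hrp]; ring
        rw [hexp] at hmul
        linarith [hlow, hmul]
      -- norm bound on G
      have hGle : ‖G‖ ≤ r ^ (p - 1) * (M + C) := by
        have hsplit : G = gradient fp (γ s) + Eg := by rw [hEgdef]; abel
        have h4 : ‖gradient fp (γ s)‖ = r ^ (p - 1) * ‖gradient fp u‖ := by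
          rw [hgradhom, norm_smul, Real.norm_eq_abs, abs_of_pos (pow_pos hr0 _)]
        have h5 : ‖gradient fp u‖ ≤ M := hM u hu1
        have hrp : r ^ p = r ^ (p - 1) * r := by
          conv_lhs => rw [show p = (p - 1) + 1 by omega]
          rw [pow_succ]
        have h6 : ‖Eg‖ ≤ C * (r ^ (p - 1) * r) := by rw [← hrp]; exact hEg
        have h7 : C * (r ^ (p - 1) * r) ≤ C * (r ^ (p - 1) * 1) := by
          apply mul_le_mul_of_nonneg_left _ hCpos.le
          exact mul_le_mul_of_nonneg_left hr1 (pow_pos hr0 _).le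
        calc ‖G‖ ≤ ‖gradient fp (γ s)‖ + ‖Eg‖ := by rw [hsplit]; exact norm_add_le _ _
          _ ≤ r ^ (p - 1) * M + C * (r ^ (p - 1) * 1) := by
            rw [h4]
            refine add_le_add (mul_le_mul_of_nonneg_left h5 (pow_pos hr0 _).le) (h6.trans h7)
          _ = r ^ (p - 1) * (M + C) := by ring
      -- the inner product with the direction
      have hWud : K ≤ ⟪Wu, d⟫ := by
        rw [hddef, real_inner_smul_right]
        have hX : (0:ℝ) < r ^ (p - 1) * (c ^ 2 / 8) := by positivity
        have step1 : (r ^ (p - 1) * (M + C))⁻¹ * (r ^ (p - 1) * (c ^ 2 / 8)) ≤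
            ‖G‖⁻¹ * (r ^ (p - 1) * (c ^ 2 / 8)) := by
          apply mul_le_mul_of_nonneg_right _ hX.le
          exact inv_anti₀ hGnorm hGle
        have step2 : ‖G‖⁻¹ * (r ^ (p - 1) * (c ^ 2 / 8)) ≤ ‖G‖⁻¹ * ⟪Wu, G⟫ :=
          mul_le_mul_of_nonneg_left hWuG (inv_nonneg.mpr hGnorm.le)
        have step0 : (r ^ (p - 1) * (M + C))⁻¹ * (r ^ (p - 1) * (c ^ 2 / 8)) = K := by
          rw [hKdef]
          have : r ^ (p - 1) ≠ 0 := (pow_pos hr0 _).ne'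
          field_simp
        linarith [step1, step2, step0.symm.le]
      -- the derivative value equals ⟪Wu, d⟫ / r
      have hveq : (⟪gradient fp (γ s), d⟫ * r ^ p -
          fp (γ s) * ((p:ℝ) * r ^ (p - 1) * (r⁻¹ * ⟪γ s, d⟫))) / (r ^ p) ^ 2
          = ⟪Wu, d⟫ * r⁻¹ := by
        have e1 : ⟪gradient fp (γ s), d⟫ = r ^ (p - 1) * ⟪gradient fp u, d⟫ := by
          rw [hgradhom, real_inner_smul_left]
        have e3 : ⟪γ s, d⟫ = r * ⟪u, d⟫ := by
          conv_lhs => rw [hγu]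
          rw [real_inner_smul_left]
        have e4 : ⟪Wu, d⟫ = ⟪gradient fp u, d⟫ - (p:ℝ) * fp u * ⟪u, d⟫ := by
          rw [hWudef, inner_sub_left, real_inner_smul_left]
        have hrp : r ^ p = r ^ (p - 1) * r := by
          conv_lhs => rw [show p = (p - 1) + 1 by omega]
          rw [pow_succ]
        rw [e1, e3, e4, hfpγ, hrp]
        have hrne : r ≠ 0 := hr0.ne'
        have hrpne : r ^ (p - 1) ≠ 0 := (pow_pos hr0 _).ne'
        field_simp
      rw [hveq]
      have hrinv : (L - s)⁻¹ ≤ r⁻¹ := inv_anti₀ hr0 (hrle s hsIco)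
      calc K * (L - s)⁻¹ ≤ K * r⁻¹ := mul_le_mul_of_nonneg_left hrinv hK.le
        _ ≤ ⟪Wu, d⟫ * r⁻¹ := mul_le_mul_of_nonneg_right hWud (inv_nonneg.mpr hr0.le)
    -- monotonicity of the adjusted function
    set g : ℝ → ℝ := fun s => fp (γ s) / ‖γ s‖ ^ p + K * Real.log (L - s) with hgdef
    have hgder : ∀ s ∈ Set.Ico s0 L, ∃ w, HasDerivAt g w s ∧ 0 ≤ w := by
      intro s hs
      obtain ⟨v, hv, hvK⟩ := hkey s hs
      have hLs : L - s ≠ 0 := by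
        have := hs.2; intro h; linarith [sub_eq_zero.mp h]
      have hlog : HasDerivAt (fun t => Real.log (L - t)) ((L - s)⁻¹ * (-1)) s := by
        have hsub : HasDerivAt (fun t : ℝ => L - t) (-1) s := by
          simpa using (hasDerivAt_id s).const_sub L
        exact (Real.hasDerivAt_log hLs).comp s hsub
      refine ⟨v + K * ((L - s)⁻¹ * (-1)), hv.add (hlog.const_mul K), ?_⟩
      have : K * ((L - s)⁻¹ * (-1)) = -(K * (L - s)⁻¹) := by ring
      rw [this]
      linarith [hvK]
    have hmono : MonotoneOn g (Set.Ico s0 L) := by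
      apply monotoneOn_of_deriv_nonneg (convex_Ico s0 L)
      · intro s hs
        exact ((hgder s hs).choose_spec.1).continuousAt.continuousWithinAt
      · intro s hs
        rw [interior_Ico] at hs
        exact ((hgder s ⟨hs.1.le, hs.2⟩).choose_spec.1).differentiableAt.differentiableWithinAt
      · intro s hs
        rw [interior_Ico] at hs
        obtain ⟨w, hw, hw0⟩ := hgder s ⟨hs.1.le, hs.2⟩
        rw [hw.deriv]
        exact hw0
    -- the function g tends to -∞
    have hΦlim : Tendsto (fun s => fp (γ s) / ‖γ s‖ ^ p) φ (𝓝 (fp ν)) := by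
      have h1 : Tendsto (fun s => fp (‖γ s‖⁻¹ • γ s)) φ (𝓝 (fp ν)) :=
        (hfpc.tendsto ν).comp hνlim
      refine h1.congr' ?_
      filter_upwards [ev4] with s hs
      have hr0 : 0 < ‖γ s‖ := hrpos s hs
      have hfpeq : fp (γ s) = ‖γ s‖ ^ p * fp (‖γ s‖⁻¹ • γ s) := by
        conv_lhs => rw [(smul_inv_smul₀ hr0.ne' (γ s)).symm]
        rw [hfphom]
      rw [hfpeq, mul_div_cancel_left₀ _ (pow_ne_zero p hr0.ne')]
    have hloglim : Tendsto (fun s => K * Real.log (L - s)) φ atBot := by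
      have h1 : Tendsto (fun s : ℝ => L - s) φ (𝓝[>] 0) := by
        apply tendsto_nhdsWithin_of_tendsto_nhds_of_eventually_within
        · have : Tendsto (fun s : ℝ => L - s) (𝓝 L) (𝓝 (L - L)) :=
            (continuous_const.sub continuous_id).tendsto L
          rw [sub_self] at this
          exact this.mono_left nhdsWithin_le_nhds
        · filter_upwards [eventually_mem_nhdsWithin] with s hs
          simp only [Set.mem_Iio] at hs
          simp only [Set.mem_Ioi]
          linarith
      have h2 : Tendsto (fun s => Real.log (L - s)) φ atBot :=
        Real.tendsto_log_nhdsGT_zero.comp h1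
      exact h2.const_mul_atBot hK
    have hgbot : Tendsto g φ atBot := by
      rw [hgdef]
      exact hΦlim.add_atBot hloglim
    -- contradiction
    have hs0mem : s0 ∈ Set.Ico s0 L := ⟨le_refl s0, hs0L⟩
    have hbad : ∀ᶠ s in φ, g s < g s0 := hgbot.eventually (eventually_lt_atBot (g s0))
    have hev : ∀ᶠ s in φ, s ∈ Set.Ico s0 L :=
      eventually_of_mem (Ico_mem_nhdsLT_of_mem ⟨hs0L, le_refl L⟩) (fun s hs => hs)
    obtain ⟨s, hlt, hsmem⟩ := (hbad.and hev).exists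
    exact absurd (hmono hs0mem hsmem hsmem.1) (not_le.mpr hlt)
end

section
/- Let f be real analytic near O with leading homogeneous part f_p of degree p ≥ 2, let γ be a half-trajectory of the unit gradient field of f with f negative and increasing along γ and γ(s) → O, let ν be its limit of secants, and assume f_p(ν) ≠ 0. Then |x|^{2−p}·Hs(f)(x) → Hs(f_p)(ν) as x → O along γ, the operator Hs(f_p)(ν) is nonzero, and consequently Hs(f)(x)/‖Hs(f)(x)‖ → Hs(f_p)(ν)/‖Hs(f_p)(ν)‖ as x → O along γ, i.e. the normalized Hessian of f converges along γ to a positive multiple of Hs(f_p)(ν). -/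
open scoped RealInnerProductSpace Topology
open Filter

open Asymptotics

variable {E : Type*} [NormedAddCommGroup E] [NormedSpace ℝ E]

/-- If an analytic function is O(‖x‖^m) at 0, the diagonals of its power series
coefficients of degree < m vanish. -/
lemma aux_diag_vanish {g : E → ℝ} {q : FormalMultilinearSeries ℝ E ℝ} {r : ENNReal}
    (hg : HasFPowerSeriesOnBall g q 0 r) {m : ℕ}
    (hO : g =O[𝓝 (0 : E)] fun x => ‖x‖ ^ m) :
    ∀ j, j < m → ∀ x, q j (fun _ => x) = 0 := by
  intro j
  induction j using Nat.strong_induction_on with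
  | _ j IH =>
    intro hjm x
    -- partial sum up to j+1 reduces to the single term q j
    have h1 : (fun y : E => g y - q j (fun _ => y)) =O[𝓝 0] fun y => ‖y‖ ^ (j+1) := by
      have := hg.hasFPowerSeriesAt.isBigO_sub_partialSum_pow (j+1)
      have e : ∀ y : E, g ((0 : E) + y) - q.partialSum (j+1) y
          = g y - q j (fun _ => y) := by
        intro y
        rw [zero_add]
        congr 1
        rw [FormalMultilinearSeries.partialSum, Finset.sum_range_succ]
        rw [Finset.sum_eq_zero, zero_add]
        intro i hi
        exact IH i (Finset.mem_range.mp hi) (lt_trans (Finset.mem_range.mp hi) hjm) y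
      simpa only [e] using this
    have h2 : (fun y : E => g y) =O[𝓝 (0:E)] fun y => ‖y‖ ^ (j+1) := by
      refine hO.trans (IsBigO.of_bound 1 ?_)
      filter_upwards [Metric.ball_mem_nhds (0:E) one_pos] with y hy
      simp only [one_mul, norm_pow, norm_norm]
      exact pow_le_pow_of_le_one (norm_nonneg _) (le_of_lt (by simpa using hy)) hjm
    have h3 : (fun y : E => q j (fun _ => y)) =O[𝓝 (0:E)] fun y => ‖y‖ ^ (j+1) := by
      have := h2.sub h1
      simpa using this
    -- restrict to the ray t • x, t → 0⁺
    rcases h3.isBigOWith with ⟨C, hC⟩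
    rw [isBigOWith_iff] at hC
    have hray : Filter.Tendsto (fun t : ℝ => t • x) (𝓝[>] (0:ℝ)) (𝓝 (0:E)) := by
      have : Filter.Tendsto (fun t : ℝ => t • x) (𝓝 (0:ℝ)) (𝓝 (0:E)) := by
        simpa using (continuousAt_id (x := (0:ℝ))).tendsto.smul_const x
      exact this.mono_left nhdsWithin_le_nhds
    have hev : ∀ᶠ t in 𝓝[>] (0:ℝ), |q j (fun _ => x)| ≤ (C * ‖x‖ ^ (j+1)) * t := by
      filter_upwards [hray.eventually hC, self_mem_nhdsWithin] with t ht ht0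
      have ht0' : (0:ℝ) < t := ht0
      have key : q j (fun _ => t • x) = t ^ j * q j (fun _ => x) := by
        have := (q j).map_smul_univ (fun _ : Fin j => t) (fun _ => x)
        simpa [Finset.prod_const] using this
      rw [key] at ht
      have hn : ‖t • x‖ = t * ‖x‖ := by
        rw [norm_smul, Real.norm_eq_abs, abs_of_pos ht0']
      rw [Real.norm_eq_abs, abs_mul, abs_pow, abs_of_pos ht0', hn] at ht
      have ht' : t ^ j * |q j fun _ => x| ≤ C * (t ^ (j+1) * ‖x‖ ^ (j+1)) := by
        calc t ^ j * |q j fun _ => x| ≤ C * ‖(t * ‖x‖) ^ (j+1)‖ := ht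
        _ = C * (t ^ (j+1) * ‖x‖ ^ (j+1)) := by
            rw [Real.norm_eq_abs, abs_pow, abs_mul, abs_of_pos ht0', abs_of_nonneg (norm_nonneg x), mul_pow]
      have hpow : (0:ℝ) < t ^ j := pow_pos ht0' j
      have hB : C * (t ^ (j+1) * ‖x‖^(j+1)) = t ^ j * (C * ‖x‖^(j+1) * t) := by ring
      exact (mul_le_mul_iff_right₀ hpow).mp (hB ▸ ht')
    have hlim : Filter.Tendsto (fun t : ℝ => (C * ‖x‖ ^ (j+1)) * t) (𝓝[>] (0:ℝ)) (𝓝 0) := by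
      have : Filter.Tendsto (fun t : ℝ => (C * ‖x‖ ^ (j+1)) * t) (𝓝 (0:ℝ)) (𝓝 0) := by
        simpa using (continuous_mul_left (C * ‖x‖ ^ (j+1))).tendsto (0:ℝ)
      exact this.mono_left nhdsWithin_le_nhds
    have : |q j (fun _ => x)| ≤ 0 := ge_of_tendsto hlim hev
    have := abs_nonneg (q j (fun _ => x))
    have : |q j (fun _ => x)| = 0 := le_antisymm ‹|q j (fun _ => x)| ≤ 0› this
    exact abs_eq_zero.mp this

/-- If the first k coefficients of a power series of h vanish, then h = O(‖x‖^k). -/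
lemma aux_isBigO_pow {F : Type*} [NormedAddCommGroup F] [NormedSpace ℝ F]
    {h : E → F} {Q : FormalMultilinearSeries ℝ E F} {r : ENNReal}
    (hh : HasFPowerSeriesOnBall h Q 0 r) {k : ℕ} (hQ : ∀ j, j < k → Q j = 0) :
    h =O[𝓝 (0 : E)] fun x => ‖x‖ ^ k := by
  have := hh.hasFPowerSeriesAt.isBigO_sub_partialSum_pow k
  have e : ∀ y : E, h ((0 : E) + y) - Q.partialSum k y = h y := by
    intro y
    rw [zero_add, FormalMultilinearSeries.partialSum, Finset.sum_eq_zero, sub_zero]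
    intro i hi
    rw [hQ i (Finset.mem_range.mp hi)]
    simp
  simpa only [e] using this

lemma aux_derivSeries_zero {F : Type*} [NormedAddCommGroup F] [NormedSpace ℝ F]
    (Q : FormalMultilinearSeries ℝ E F) (l : ℕ) (h : Q (1 + l) = 0) :
    Q.derivSeries l = 0 := by
  rw [FormalMultilinearSeries.derivSeries,
    ContinuousLinearMap.compFormalMultilinearSeries_apply]
  have : Q.changeOriginSeries 1 l = 0 := by
    rw [FormalMultilinearSeries.changeOriginSeries]
    apply Finset.sum_eq_zero
    intro s _
    rw [FormalMultilinearSeries.changeOriginSeriesTerm, h]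
    apply LinearIsometryEquiv.map_zero
  rw [this]
  ext y v
  simp

/-- Second derivative big-O estimate for an analytic function vanishing to order k+2. -/
lemma aux_second_deriv_isBigO {g : E → ℝ} (hg : AnalyticAt ℝ g 0) {k : ℕ}
    (hO : g =O[𝓝 (0 : E)] fun x => ‖x‖ ^ (k + 2)) :
    (fun x => fderiv ℝ (fderiv ℝ g) x) =O[𝓝 (0 : E)] fun x => ‖x‖ ^ k := by
  obtain ⟨q, r, hq⟩ := hg
  have hdiag := aux_diag_vanish hq hO
  -- modified series with vanishing low-order coefficients
  set q' : FormalMultilinearSeries ℝ E ℝ := fun j => if j < k + 2 then 0 else q j with hq'def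
  have hnorm : ∀ j, ‖q' j‖ ≤ ‖q j‖ := by
    intro j
    by_cases hj : j < k + 2 <;> simp [hq'def, hj]
  have hrad : q.radius ≤ q'.radius := by
    refine ENNReal.le_of_forall_nnreal_lt fun ρ hρ => ?_
    obtain ⟨C, hC0, hC⟩ := q.norm_mul_pow_le_of_lt_radius hρ
    exact q'.le_radius_of_bound C fun j =>
      le_trans (mul_le_mul_of_nonneg_right (hnorm j) (by positivity)) (hC j)
  have hq' : HasFPowerSeriesOnBall g q' 0 r := by
    refine ⟨le_trans hq.r_le hrad, hq.r_pos, fun {y} hy => ?_⟩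
    have := hq.hasSum hy
    refine HasSum.congr_fun this fun j => ?_
    by_cases hj : j < k + 2
    · simp [hq'def, hj, hdiag j hj y]
    · simp [hq'def, hj]
  have h1 : HasFPowerSeriesOnBall (fderiv ℝ g) q'.derivSeries 0 r := hq'.fderiv
  have h2 := h1.fderiv
  refine aux_isBigO_pow h2 fun j hj => ?_
  apply aux_derivSeries_zero
  apply aux_derivSeries_zero
  have : 1 + (1 + j) < k + 2 := by omega
  simp [hq'def, this]

section InnerGrad
variable {H : Type*} [NormedAddCommGroup H] [InnerProductSpace ℝ H] [CompleteSpace H]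

/-- The inverse of the duality map, as a continuous linear map over `ℝ`. -/
noncomputable def auxK (H : Type*) [NormedAddCommGroup H] [InnerProductSpace ℝ H]
    [CompleteSpace H] : (H →L[ℝ] ℝ) →L[ℝ] H :=
  LinearMap.mkContinuous
    { toFun := fun ℓ => (InnerProductSpace.toDual ℝ H).symm ℓ
      map_add' := fun a b => by simp
      map_smul' := fun c a => by
        simp [LinearIsometryEquiv.map_smulₛₗ, starRingEnd_apply] }
    1 (fun ℓ => by simp)

@[simp] lemma auxK_apply (ℓ : H →L[ℝ] ℝ) :
    auxK H ℓ = (InnerProductSpace.toDual ℝ H).symm ℓ := rfl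

/-- The derivative of the gradient expressed through the second derivative. -/
lemma aux_fderiv_gradient_eq {g : H → ℝ} {x : H}
    (hd : DifferentiableAt ℝ (fderiv ℝ g) x) :
    fderiv ℝ (gradient g) x = (auxK H).comp (fderiv ℝ (fderiv ℝ g) x) := by
  have h1 : HasFDerivAt (fun y => auxK H (fderiv ℝ g y))
      ((auxK H).comp (fderiv ℝ (fderiv ℝ g) x)) x :=
    ((auxK H).hasFDerivAt).comp x hd.hasFDerivAt
  have h2 : (fun y => auxK H (fderiv ℝ g y)) = gradient g := by
    funext y
    simp [gradient]
  rw [h2] at h1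
  exact h1.fderiv

lemma aux_norm_fderiv_gradient {g : H → ℝ} {x : H}
    (hd : DifferentiableAt ℝ (fderiv ℝ g) x) :
    ‖fderiv ℝ (gradient g) x‖ ≤ ‖fderiv ℝ (fderiv ℝ g) x‖ := by
  rw [aux_fderiv_gradient_eq hd]
  refine ContinuousLinearMap.opNorm_le_bound _ (norm_nonneg (fderiv ℝ (fderiv ℝ g) x)) fun v => ?_
  rw [ContinuousLinearMap.comp_apply]
  have h3 : ‖auxK H (fderiv ℝ (fderiv ℝ g) x v)‖ = ‖fderiv ℝ (fderiv ℝ g) x v‖ := by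
    simp
  rw [h3]
  exact ContinuousLinearMap.le_opNorm _ _

/-- Big-O estimate for the Hessian (derivative of gradient) of an analytic function
vanishing to order `k+2` at the origin. -/
lemma aux_hessian_isBigO {g : H → ℝ} (hg : AnalyticAt ℝ g 0) {k : ℕ}
    (hO : g =O[𝓝 (0 : H)] fun x => ‖x‖ ^ (k + 2)) :
    (fun x => fderiv ℝ (gradient g) x) =O[𝓝 (0 : H)] fun x => ‖x‖ ^ k := by
  have h2 := aux_second_deriv_isBigO hg hO
  obtain ⟨C, hC⟩ := h2.bound
  refine IsBigO.of_bound C ?_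
  filter_upwards [hg.eventually_analyticAt, hC] with x hx hCx
  have hd : DifferentiableAt ℝ (fderiv ℝ g) x := hx.fderiv.differentiableAt
  exact (aux_norm_fderiv_gradient hd).trans hCx

end InnerGrad

set_option linter.unusedSectionVars false

section Homog
variable {H : Type*} [NormedAddCommGroup H] [InnerProductSpace ℝ H] [CompleteSpace H]
variable {fp : H → ℝ} {p : ℕ}


lemma aux_fderiv_hom (hfpan : AnalyticOnNhd ℝ fp Set.univ)
    (hfphom : ∀ (t : ℝ) (x : H), fp (t • x) = t ^ p * fp x) (hp : 1 ≤ p)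
    {t : ℝ} (ht : t ≠ 0) (x : H) :
    fderiv ℝ fp (t • x) = t ^ (p - 1) • fderiv ℝ fp x := by
  have hdiff : ∀ y, DifferentiableAt ℝ fp y := fun y =>
    (hfpan y trivial).differentiableAt
  have h0 : HasFDerivAt (fun y : H => t • y) (t • ContinuousLinearMap.id ℝ H) x := by
    exact (hasFDerivAt_id x).const_smul t
  have hA : HasFDerivAt (fun y => fp (t • y)) (t • fderiv ℝ fp (t • x)) x := by
    have h1 := ((hdiff (t • x)).hasFDerivAt).comp x h0
    refine h1.congr_fderiv ?_
    ext v
    simp [map_smul]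
  have hB : HasFDerivAt (fun y => fp (t • y)) ((t ^ p) • fderiv ℝ fp x) x := by
    have h1 : HasFDerivAt (fun y => t ^ p * fp y) ((t ^ p) • fderiv ℝ fp x) x :=
      (hdiff x).hasFDerivAt.const_mul (t ^ p)
    have e : (fun y => t ^ p * fp y) = fun y => fp (t • y) := by
      funext y; rw [hfphom]
    rwa [e] at h1
  have key : t • fderiv ℝ fp (t • x) = (t ^ p) • fderiv ℝ fp x := hA.unique hB
  obtain ⟨m, rfl⟩ : ∃ m, p = m + 1 := ⟨p - 1, by omega⟩
  have : fderiv ℝ fp (t • x) = t⁻¹ • (t • fderiv ℝ fp (t • x)) := by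
    rw [smul_smul, inv_mul_cancel₀ ht, one_smul]
  rw [this, key, smul_smul]
  congr 1
  rw [pow_succ]
  field_simp
  simp

lemma aux_gradient_hom (hfpan : AnalyticOnNhd ℝ fp Set.univ)
    (hfphom : ∀ (t : ℝ) (x : H), fp (t • x) = t ^ p * fp x) (hp : 1 ≤ p)
    {t : ℝ} (ht : t ≠ 0) (x : H) :
    gradient fp (t • x) = t ^ (p - 1) • gradient fp x := by
  rw [gradient, gradient, aux_fderiv_hom hfpan hfphom hp ht x]
  exact map_smulₛₗ _ _ _ |>.trans (by norm_num [starRingEnd_apply])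

lemma aux_grad_diff (hfpan : AnalyticOnNhd ℝ fp Set.univ) (y : H) :
    DifferentiableAt ℝ (gradient fp) y := by
  have h1 : AnalyticOnNhd ℝ (fderiv ℝ fp) Set.univ := hfpan.fderiv
  have h2 : DifferentiableAt ℝ (fun z => auxK H (fderiv ℝ fp z)) y :=
    ((auxK H).differentiable.differentiableAt).comp y (h1 y trivial).differentiableAt
  have e : (fun z => auxK H (fderiv ℝ fp z)) = gradient fp := by
    funext z; simp [gradient]
  rwa [e] at h2

lemma aux_hessian_hom (hfpan : AnalyticOnNhd ℝ fp Set.univ)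
    (hfphom : ∀ (t : ℝ) (x : H), fp (t • x) = t ^ p * fp x) (hp : 2 ≤ p)
    {t : ℝ} (ht : t ≠ 0) (x : H) :
    fderiv ℝ (gradient fp) (t • x) = t ^ (p - 2) • fderiv ℝ (gradient fp) x := by
  have hGdiff := aux_grad_diff (fp := fp) hfpan
  have h0 : HasFDerivAt (fun y : H => t • y) (t • ContinuousLinearMap.id ℝ H) x := by
    exact (hasFDerivAt_id x).const_smul t
  have hA : HasFDerivAt (fun y => gradient fp (t • y))
      (t • fderiv ℝ (gradient fp) (t • x)) x := by
    have h1 := ((hGdiff (t • x)).hasFDerivAt).comp x h0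
    refine h1.congr_fderiv ?_
    ext v
    simp [map_smul]
  have hB : HasFDerivAt (fun y => gradient fp (t • y))
      ((t ^ (p - 1)) • fderiv ℝ (gradient fp) x) x := by
    have h1 : HasFDerivAt (fun y => t ^ (p - 1) • gradient fp y)
        ((t ^ (p - 1)) • fderiv ℝ (gradient fp) x) x :=
      (hGdiff x).hasFDerivAt.const_smul (t ^ (p - 1))
    have e : (fun y => t ^ (p - 1) • gradient fp y) = fun y => gradient fp (t • y) := by
      funext y; rw [aux_gradient_hom hfpan hfphom (by omega) ht]
    rwa [e] at h1
  have key : t • fderiv ℝ (gradient fp) (t • x)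
      = (t ^ (p - 1)) • fderiv ℝ (gradient fp) x := hA.unique hB
  obtain ⟨m, hm⟩ : ∃ m, p = m + 2 := ⟨p - 2, by omega⟩
  subst hm
  have : fderiv ℝ (gradient fp) (t • x) = t⁻¹ • (t • fderiv ℝ (gradient fp) (t • x)) := by
    rw [smul_smul, inv_mul_cancel₀ ht, one_smul]
  rw [this, key, smul_smul]
  congr 1
  show t⁻¹ * t ^ (m + 1) = t ^ m
  rw [pow_succ]
  field_simp

lemma aux_euler (hfpan : AnalyticOnNhd ℝ fp Set.univ)
    (hfphom : ∀ (t : ℝ) (x : H), fp (t • x) = t ^ p * fp x) (x : H) :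
    ⟪gradient fp x, x⟫ = (p : ℝ) * fp x := by
  have hdiff : ∀ y, DifferentiableAt ℝ fp y := fun y => (hfpan y trivial).differentiableAt
  have h0 : HasDerivAt (fun s : ℝ => s • x) x 1 := by
    simpa using (hasDerivAt_id (1 : ℝ)).smul_const x
  have hA : HasDerivAt (fun s : ℝ => fp (s • x)) (fderiv ℝ fp x x) 1 := by
    have h1 := ((hdiff ((1:ℝ) • x)).hasFDerivAt).comp_hasDerivAt 1 h0
    rw [one_smul] at h1
    exact h1
  have hB : HasDerivAt (fun s : ℝ => fp (s • x)) ((p : ℝ) * fp x) 1 := by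
    have h1 : HasDerivAt (fun s : ℝ => s ^ p * fp x) ((p : ℝ) * fp x) 1 := by
      simpa using (hasDerivAt_pow p (1:ℝ)).mul_const (fp x)
    have e : (fun s : ℝ => s ^ p * fp x) = fun s : ℝ => fp (s • x) := by
      funext s; rw [hfphom]
    rwa [e] at h1
  have key : fderiv ℝ fp x x = (p : ℝ) * fp x := hA.unique hB
  rw [gradient, InnerProductSpace.toDual_symm_apply, key]

lemma aux_hessian_inner (hfpan : AnalyticOnNhd ℝ fp Set.univ)
    (hfphom : ∀ (t : ℝ) (x : H), fp (t • x) = t ^ p * fp x) (ν : H) :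
    ⟪fderiv ℝ (gradient fp) ν ν, ν⟫ = (p : ℝ) * ((p : ℝ) - 1) * fp ν := by
  have hGdiff := aux_grad_diff (fp := fp) hfpan
  have hdiff : ∀ y, DifferentiableAt ℝ fp y := fun y => (hfpan y trivial).differentiableAt
  have hA : HasFDerivAt (fun x : H => ⟪gradient fp x, x⟫)
      ((fderivInnerCLM ℝ (gradient fp ν, ν)).comp
        ((fderiv ℝ (gradient fp) ν).prod (ContinuousLinearMap.id ℝ H))) ν :=
    HasFDerivAt.inner ℝ (hGdiff ν).hasFDerivAt (hasFDerivAt_id ν)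
  have hB : HasFDerivAt (fun x : H => ⟪gradient fp x, x⟫)
      ((p : ℝ) • fderiv ℝ fp ν) ν := by
    have h1 : HasFDerivAt (fun x : H => (p : ℝ) * fp x) ((p : ℝ) • fderiv ℝ fp ν) ν :=
      (hdiff ν).hasFDerivAt.const_mul (p : ℝ)
    have e : (fun x : H => (p : ℝ) * fp x) = fun x : H => ⟪gradient fp x, x⟫ := by
      funext y; rw [aux_euler hfpan hfphom]
    rwa [e] at h1
  have key := hA.unique hB
  have h2 := congrArg (fun (A : H →L[ℝ] ℝ) => A ν) key
  simp only [ContinuousLinearMap.comp_apply, ContinuousLinearMap.prod_apply,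
    ContinuousLinearMap.coe_id', id_eq, fderivInnerCLM_apply,
    ContinuousLinearMap.smul_apply, smul_eq_mul] at h2
  -- h2 : ⟪gradient fp ν, ν⟫ + ⟪fderiv ℝ (gradient fp) ν ν, ν⟫ = p * fderiv fp ν ν
  have h3 : fderiv ℝ fp ν ν = ⟪gradient fp ν, ν⟫ := by
    rw [gradient, InnerProductSpace.toDual_symm_apply]
  have h4 := aux_euler hfpan hfphom (fp := fp) (p := p) ν
  rw [h3, h4] at h2
  nlinarith [h2]

end Homog

section MoreAux
variable {H : Type*} [NormedAddCommGroup H] [InnerProductSpace ℝ H] [CompleteSpace H]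

lemma aux_grad_diffAt {g : H → ℝ} {x : H} (h : AnalyticAt ℝ g x) :
    DifferentiableAt ℝ (gradient g) x := by
  have h1 : DifferentiableAt ℝ (fderiv ℝ g) x := h.fderiv.differentiableAt
  have h2 := ((auxK H).differentiable.differentiableAt).comp x h1
  have e : (⇑(auxK H) ∘ fderiv ℝ g) = gradient g := by
    funext z; simp [gradient, Function.comp]
  rwa [e] at h2

lemma aux_gradient_add {g h : H → ℝ} {y : H} (hg : DifferentiableAt ℝ g y)
    (hh : DifferentiableAt ℝ h y) :
    gradient (fun z => g z + h z) y = gradient g y + gradient h y := by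
  simp [gradient, fderiv_fun_add hg hh]

end MoreAux

lemma aux_rpow_cancel {r : ℝ} (hr : 0 < r) {p : ℕ} (hp : 2 ≤ p) :
    r ^ ((2 : ℝ) - (p : ℝ)) * r ^ (p - 2 : ℕ) = 1 := by
  have hc : ((p - 2 : ℕ) : ℝ) = (p : ℝ) - 2 := by
    rw [Nat.cast_sub hp]; norm_num
  rw [← Real.rpow_natCast r (p - 2), hc, ← Real.rpow_add hr]
  norm_num

lemma aux_rpow_one {r : ℝ} (hr : 0 < r) {p : ℕ} (hp : 2 ≤ p) :
    r ^ ((2 : ℝ) - (p : ℝ)) * r ^ (p - 1 : ℕ) = r := by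
  have hc : ((p - 1 : ℕ) : ℝ) = (p : ℝ) - 1 := by
    rw [Nat.cast_sub (by omega)]; norm_num
  rw [← Real.rpow_natCast r (p - 1), hc, ← Real.rpow_add hr]
  norm_num


set_option maxHeartbeats 2000000 in
/-- if `f_p(ν) ≠ 0` then `|x|^{2-p}·Hs(f)(x) → Hs(f_p)(ν) ≠ 0` along the
trajectory, and the normalized Hessian of `f` converges to the normalization of `Hs(f_p)(ν)`. -/
theorem rescaled_hessian_tendsto_leading_part_hessian
    {n : ℕ} (hn : 2 ≤ n)
    (U : Set (EuclideanSpace ℝ (Fin n))) (hUopen : IsOpen U)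
    (hOU : (0 : EuclideanSpace ℝ (Fin n)) ∈ U)
    (f : EuclideanSpace ℝ (Fin n) → ℝ)
    (hfan : AnalyticOnNhd ℝ f U) (hf0 : f 0 = 0) (hgf0 : gradient f 0 = 0)
    (L : ℝ) (hL : 0 < L)
    (γ : ℝ → EuclideanSpace ℝ (Fin n))
    (hγU : ∀ s ∈ Set.Ico (0 : ℝ) L, γ s ∈ U)
    (hγreg : ∀ s ∈ Set.Ico (0 : ℝ) L, gradient f (γ s) ≠ 0)
    (hγode : ∀ s ∈ Set.Ico (0 : ℝ) L,
      HasDerivAt γ (‖gradient f (γ s)‖⁻¹ • gradient f (γ s)) s)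
    (hfneg : f (γ 0) < 0)
    (hfmono : StrictMonoOn (fun s => f (γ s)) (Set.Ico (0 : ℝ) L))
    (hγlim : Tendsto γ (𝓝[<] L) (𝓝 0))
    (p : ℕ) (hp : 2 ≤ p)
    (fp : EuclideanSpace ℝ (Fin n) → ℝ)
    (hfpan : AnalyticOnNhd ℝ fp Set.univ)
    (hfphom : ∀ (t : ℝ) (x : EuclideanSpace ℝ (Fin n)), fp (t • x) = t ^ p * fp x)
    (hfpne : ∃ x, fp x ≠ 0)
    (hlead : (fun x => f x - fp x) =O[𝓝 (0 : EuclideanSpace ℝ (Fin n))]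
      fun x => ‖x‖ ^ (p + 1))
    (ν : EuclideanSpace ℝ (Fin n)) (hν1 : ‖ν‖ = 1)
    (hνlim : Tendsto (fun s => ‖γ s‖⁻¹ • γ s) (𝓝[<] L) (𝓝 ν))
    (hfpν : fp ν ≠ 0) :
    Tendsto (fun s => (‖γ s‖ ^ ((2 : ℝ) - (p : ℝ))) • fderiv ℝ (gradient f) (γ s))
      (𝓝[<] L) (𝓝 (fderiv ℝ (gradient fp) ν)) ∧
    fderiv ℝ (gradient fp) ν ≠ 0 ∧
    Tendsto (fun s => ‖fderiv ℝ (gradient f) (γ s)‖⁻¹ • fderiv ℝ (gradient f) (γ s))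
      (𝓝[<] L) (𝓝 (‖fderiv ℝ (gradient fp) ν‖⁻¹ • fderiv ℝ (gradient fp) ν)) := by
  have hE : True := trivial
  set l := 𝓝[<] L
  set g : EuclideanSpace ℝ (Fin n) → ℝ := fun x => f x - fp x with hgdef
  set T : EuclideanSpace ℝ (Fin n) →L[ℝ] EuclideanSpace ℝ (Fin n) := fderiv ℝ (gradient fp) ν with hTdef
  have hgan : AnalyticOnNhd ℝ g U := hfan.sub (hfpan.mono (Set.subset_univ U))
  -- big-O estimate for the Hessian of the remainder
  have hO' : g =O[𝓝 (0 : EuclideanSpace ℝ (Fin n))] fun x => ‖x‖ ^ ((p - 1) + 2) := by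
    have : (p - 1) + 2 = p + 1 := by omega
    rw [this]; exact hlead
  have hHg : (fun x => fderiv ℝ (gradient g) x) =O[𝓝 (0 : EuclideanSpace ℝ (Fin n))] fun x => ‖x‖ ^ (p - 1) :=
    aux_hessian_isBigO (hgan 0 hOU) hO'
  -- decomposition of the Hessian of f on U
  have hsum : ∀ x ∈ U, fderiv ℝ (gradient f) x
      = fderiv ℝ (gradient g) x + fderiv ℝ (gradient fp) x := by
    intro x hx
    have heq : Set.EqOn (gradient f) (fun y => gradient g y + gradient fp y) U := by
      intro y hy
      have hdg : DifferentiableAt ℝ g y := (hgan y hy).differentiableAt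
      have hdp : DifferentiableAt ℝ fp y := (hfpan y trivial).differentiableAt
      have hfy : f = fun z => g z + fp z := by funext z; simp [hgdef]
      rw [hfy]
      exact aux_gradient_add hdg hdp
    have hev : gradient f =ᶠ[𝓝 x] fun y => gradient g y + gradient fp y :=
      Filter.eventuallyEq_of_mem (hUopen.mem_nhds hx) heq
    rw [hev.fderiv_eq]
    exact fderiv_add (aux_grad_diffAt (hgan x hx)) (aux_grad_diffAt (hfpan x trivial))
  -- eventual facts along the trajectory
  have hIco : ∀ᶠ s in l, s ∈ Set.Ico (0:ℝ) L := by
    have h1 : Set.Ioo (0:ℝ) L ∈ 𝓝[<] L := Ioo_mem_nhdsLT_of_mem ⟨hL, le_refl L⟩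
    filter_upwards [h1] with s hs
    exact ⟨le_of_lt hs.1, hs.2⟩
  have hU : ∀ᶠ s in l, γ s ∈ U :=
    hγlim.eventually (eventually_of_mem (hUopen.mem_nhds hOU) (fun y hy => hy))
  have hne : ∀ᶠ s in l, γ s ≠ 0 := by
    filter_upwards [hIco] with s hs h0
    exact hγreg s hs (by rw [h0]; exact hgf0)
  -- the two pieces
  have h1 : Tendsto (fun s => (‖γ s‖ ^ ((2:ℝ) - (p:ℝ))) • fderiv ℝ (gradient g) (γ s)) l
      (𝓝 0) := by
    have hcomp : (fun s => fderiv ℝ (gradient g) (γ s)) =O[l] fun s => ‖γ s‖ ^ (p - 1) :=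
      hHg.comp_tendsto hγlim
    obtain ⟨C, hC⟩ := hcomp.isBigOWith
    rw [Asymptotics.isBigOWith_iff] at hC
    have hb : (fun s => (‖γ s‖ ^ ((2:ℝ) - (p:ℝ))) • fderiv ℝ (gradient g) (γ s)) =O[l]
        fun s => ‖γ s‖ := by
      refine Asymptotics.IsBigO.of_bound C ?_
      filter_upwards [hC, hne] with s hs hs0
      have hpos : 0 < ‖γ s‖ := norm_pos_iff.mpr hs0
      have hcpos : (0:ℝ) ≤ ‖γ s‖ ^ ((2:ℝ) - (p:ℝ)) := Real.rpow_nonneg (norm_nonneg _) _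
      rw [norm_smul, Real.norm_eq_abs, abs_of_nonneg hcpos]
      have hs' : ‖fderiv ℝ (gradient g) (γ s)‖ ≤ C * ‖γ s‖ ^ (p - 1) := by
        have := hs
        rwa [Real.norm_eq_abs, abs_of_nonneg (by positivity)] at this
      calc ‖γ s‖ ^ ((2:ℝ) - (p:ℝ)) * ‖fderiv ℝ (gradient g) (γ s)‖
          ≤ ‖γ s‖ ^ ((2:ℝ) - (p:ℝ)) * (C * ‖γ s‖ ^ (p - 1)) :=
            mul_le_mul_of_nonneg_left hs' hcpos
        _ = C * (‖γ s‖ ^ ((2:ℝ) - (p:ℝ)) * ‖γ s‖ ^ (p - 1 : ℕ)) := by ring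
        _ = C * ‖γ s‖ := by rw [aux_rpow_one hpos hp]
        _ ≤ C * ‖‖γ s‖‖ := by rw [norm_norm]
    have hnorm0 : Tendsto (fun s => ‖γ s‖) l (𝓝 0) := by
      have := (continuous_norm.tendsto (0 : EuclideanSpace ℝ (Fin n))).comp hγlim
      simpa [Function.comp_def] using this
    exact hb.trans_tendsto hnorm0
  have hcontH : Continuous fun y : EuclideanSpace ℝ (Fin n) => fderiv ℝ (gradient fp) y := by
    have hg1 : AnalyticOnNhd ℝ (gradient fp) Set.univ := by
      have h2 := (auxK (EuclideanSpace ℝ (Fin n))).comp_analyticOnNhd hfpan.fderiv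
      have e : (⇑(auxK (EuclideanSpace ℝ (Fin n))) ∘ fderiv ℝ fp) = gradient fp := by
        funext z; simp [gradient, Function.comp]
      rwa [e] at h2
    have h2 : AnalyticOnNhd ℝ (fun y : EuclideanSpace ℝ (Fin n) => fderiv ℝ (gradient fp) y) Set.univ := hg1.fderiv
    rw [← continuousOn_univ]
    exact h2.continuousOn
  have h2 : Tendsto (fun s => fderiv ℝ (gradient fp) (‖γ s‖⁻¹ • γ s)) l (𝓝 T) :=
    (hcontH.tendsto ν).comp hνlim
  -- key eventual identity
  have key : ∀ᶠ s in l, (‖γ s‖ ^ ((2:ℝ) - (p:ℝ))) • fderiv ℝ (gradient f) (γ s)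
      = (‖γ s‖ ^ ((2:ℝ) - (p:ℝ))) • fderiv ℝ (gradient g) (γ s)
        + fderiv ℝ (gradient fp) (‖γ s‖⁻¹ • γ s) := by
    filter_upwards [hU, hne] with s hsU hs0
    have hpos : 0 < ‖γ s‖ := norm_pos_iff.mpr hs0
    rw [hsum _ hsU, smul_add]
    congr 1
    have hγs : γ s = ‖γ s‖ • (‖γ s‖⁻¹ • γ s) := by
      rw [smul_smul, mul_inv_cancel₀ (ne_of_gt hpos), one_smul]
    calc (‖γ s‖ ^ ((2:ℝ) - (p:ℝ))) • fderiv ℝ (gradient fp) (γ s)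
        = (‖γ s‖ ^ ((2:ℝ) - (p:ℝ))) • fderiv ℝ (gradient fp) (‖γ s‖ • (‖γ s‖⁻¹ • γ s)) := by
          rw [← hγs]
      _ = (‖γ s‖ ^ ((2:ℝ) - (p:ℝ))) •
            ((‖γ s‖ ^ (p - 2 : ℕ)) • fderiv ℝ (gradient fp) (‖γ s‖⁻¹ • γ s)) := by
          rw [aux_hessian_hom hfpan hfphom hp (ne_of_gt hpos)]
      _ = ((‖γ s‖ ^ ((2:ℝ) - (p:ℝ))) * (‖γ s‖ ^ (p - 2 : ℕ))) •
            fderiv ℝ (gradient fp) (‖γ s‖⁻¹ • γ s) := by rw [smul_smul]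
      _ = fderiv ℝ (gradient fp) (‖γ s‖⁻¹ • γ s) := by
          rw [aux_rpow_cancel hpos hp, one_smul]
  have main1 : Tendsto (fun s => (‖γ s‖ ^ ((2:ℝ) - (p:ℝ))) • fderiv ℝ (gradient f) (γ s)) l
      (𝓝 T) := by
    have hsum2 := h1.add h2
    rw [zero_add] at hsum2
    exact hsum2.congr' (Filter.EventuallyEq.symm key)
  -- nonvanishing
  have hTne : T ≠ 0 := by
    intro hT0
    have hin := aux_hessian_inner hfpan hfphom ν
    rw [← hTdef, hT0] at hin
    simp only [ContinuousLinearMap.zero_apply, inner_zero_left] at hin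
    have hp0 : (p:ℝ) ≠ 0 := by positivity
    have hp1 : (p:ℝ) - 1 ≠ 0 := by
      have : (2:ℝ) ≤ (p:ℝ) := by exact_mod_cast hp
      linarith
    apply hfpν
    have := hin.symm
    rcases mul_eq_zero.mp this with h | h
    · rcases mul_eq_zero.mp h with h' | h'
      · exact absurd h' hp0
      · exact absurd h' hp1
    · exact h
  refine ⟨main1, hTne, ?_⟩
  -- normalized Hessian
  have hNcont : ContinuousAt (fun X : EuclideanSpace ℝ (Fin n) →L[ℝ] EuclideanSpace ℝ (Fin n) => ‖X‖⁻¹ • X) T :=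
    ((continuous_norm.continuousAt).inv₀ (norm_ne_zero_iff.mpr hTne)).smul continuousAt_id
  have hcompN := hNcont.tendsto.comp main1
  refine hcompN.congr' ?_
  filter_upwards [hne] with s hs0
  have hpos : 0 < ‖γ s‖ := norm_pos_iff.mpr hs0
  have hcpos : 0 < ‖γ s‖ ^ ((2:ℝ) - (p:ℝ)) := Real.rpow_pos_of_pos hpos _
  show ‖(‖γ s‖ ^ ((2:ℝ) - (p:ℝ))) • fderiv ℝ (gradient f) (γ s)‖⁻¹ •
      ((‖γ s‖ ^ ((2:ℝ) - (p:ℝ))) • fderiv ℝ (gradient f) (γ s))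
    = ‖fderiv ℝ (gradient f) (γ s)‖⁻¹ • fderiv ℝ (gradient f) (γ s)
  rw [norm_smul, Real.norm_eq_abs, abs_of_pos hcpos, mul_inv, smul_smul]
  congr 1
  rw [mul_right_comm, inv_mul_cancel₀ (ne_of_gt hcpos), one_mul]
end

section
/- Let f be real analytic near O with f(O) = 0, ∇f(O) = 0, and invertible Hessian H₀ = Hs(f)(O) (a Morse singularity). Let γ be a half-trajectory of the unit gradient field of f with f negative and increasing along γ and γ(s) → O, and let ν be its limit of secants. Then ν is an eigen-vector of H₀ with a negative eigen-value μ (H₀·ν = μ·ν with μ < 0), and |∇f(γ(s))| / |γ(s)| → −μ as s → L. -/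
open scoped RealInnerProductSpace Topology
open Filter


/-- If `γ → 0` along `𝓝[<] L` and its derivative tends to `w`, then `(L-s)⁻¹ • γ s → -w`. -/
lemma secant_aux {E : Type*} [NormedAddCommGroup E] [NormedSpace ℝ E]
    (L : ℝ) (hL : 0 < L) (γ γ' : ℝ → E) (w : E)
    (hode : ∀ s ∈ Set.Ico (0:ℝ) L, HasDerivAt γ (γ' s) s)
    (hγlim : Tendsto γ (𝓝[<] L) (𝓝 0))
    (hd : Tendsto γ' (𝓝[<] L) (𝓝 w)) :
    Tendsto (fun s => (L - s)⁻¹ • γ s) (𝓝[<] L) (𝓝 (-w)) := by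
  rw [Metric.tendsto_nhds]
  intro ε hε
  have hε2 : (0:ℝ) < ε / 2 := by linarith
  have hS : {t : ℝ | ‖γ' t - w‖ < ε / 2} ∈ 𝓝[<] L := by
    have := hd (Metric.ball_mem_nhds w hε2)
    simpa [Metric.ball, dist_eq_norm, Set.preimage] using this
  obtain ⟨a, haL, haS⟩ := mem_nhdsLT_iff_exists_Ioo_subset.1 hS
  set s₀ : ℝ := max ((a + L) / 2) 0 with hs₀def
  have hs₀L : s₀ < L := by
    simp only [hs₀def, max_lt_iff]
    constructor <;> [linarith [Set.mem_Iio.1 haL]; exact hL]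
  have hs₀0 : (0:ℝ) ≤ s₀ := le_max_right _ _
  have hs₀a : a < s₀ := lt_of_lt_of_le (by linarith [Set.mem_Iio.1 haL]) (le_max_left _ _)
  set D : Set ℝ := Set.Ico s₀ L with hD
  set h : ℝ → E := fun t => γ t + (L - t) • w with hh
  have hder : ∀ t ∈ D, HasDerivWithinAt h (γ' t - w) D t := by
    intro t ht
    have h1 : HasDerivAt γ (γ' t) t := hode t ⟨le_trans hs₀0 ht.1, ht.2⟩
    have h2 : HasDerivAt (fun t : ℝ => (L - t) • w) ((-1 : ℝ) • w) t :=
      ((hasDerivAt_id t).const_sub L).smul_const w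
    have := h1.add h2
    exact (this.congr_deriv (by simp [sub_eq_add_neg])).hasDerivWithinAt
  have hbd : ∀ t ∈ D, ‖γ' t - w‖ ≤ ε / 2 := by
    intro t ht
    exact le_of_lt (haS ⟨lt_of_lt_of_le hs₀a ht.1, ht.2⟩)
  have hmvt : ∀ s ∈ D, ∀ t ∈ D, ‖h t - h s‖ ≤ (ε / 2) * ‖t - s‖ :=
    fun s hs t ht => (convex_Ico s₀ L).norm_image_sub_le_of_norm_hasDerivWithin_le
      hder hbd hs ht
  have hkey : ∀ s ∈ D, ‖h s‖ ≤ ε / 2 * (L - s) := by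
    intro s hs
    have hlim0 : Tendsto (fun t => ‖h t‖ + ε / 2 * (L - s)) (𝓝[<] L)
        (𝓝 (0 + ε / 2 * (L - s))) := by
      have h1 : Tendsto h (𝓝[<] L) (𝓝 0) := by
        have h2 : Tendsto (fun t : ℝ => (L - t) • w) (𝓝[<] L) (𝓝 ((L - L) • w)) :=
          (((continuous_const.sub continuous_id).smul continuous_const).tendsto L).mono_left
            nhdsWithin_le_nhds
        simpa using hγlim.add h2
      simpa using (h1.norm.add tendsto_const_nhds)
    have hev : ∀ᶠ t in 𝓝[<] L, ‖h s‖ ≤ ‖h t‖ + ε / 2 * (L - s) := by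
      filter_upwards [Ioo_mem_nhdsLT hs.2] with t ht
      have htD : t ∈ D := ⟨le_trans hs.1 (le_of_lt ht.1), ht.2⟩
      have h1 : ‖h s - h t‖ ≤ ε / 2 * ‖s - t‖ := hmvt t htD s hs
      have h2 : ‖s - t‖ ≤ L - s := by
        rw [Real.norm_eq_abs, abs_of_nonpos (by linarith [ht.1])]
        linarith [ht.2]
      calc ‖h s‖ ≤ ‖h t‖ + ‖h s - h t‖ := by
              have := norm_add_le (h t) (h s - h t); simpa using this
        _ ≤ ‖h t‖ + ε / 2 * (L - s) := by nlinarith [norm_nonneg (h s - h t)]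
    have := ge_of_tendsto hlim0 hev
    linarith
  filter_upwards [Ioo_mem_nhdsLT hs₀L] with s hsm
  have hsD : s ∈ D := ⟨le_of_lt hsm.1, hsm.2⟩
  have hLs : (0:ℝ) < L - s := by linarith [hsm.2]
  have heq : (L - s)⁻¹ • γ s - (-w) = (L - s)⁻¹ • h s := by
    rw [hh]
    rw [smul_add, smul_smul, inv_mul_cancel₀ (ne_of_gt hLs), one_smul]
    abel
  rw [dist_eq_norm, heq, norm_smul, norm_inv, Real.norm_eq_abs, abs_of_pos hLs]
  calc (L - s)⁻¹ * ‖h s‖ ≤ (L - s)⁻¹ * (ε / 2 * (L - s)) := by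
        apply mul_le_mul_of_nonneg_left (hkey s hsD) (le_of_lt (inv_pos.2 hLs))
    _ = ε / 2 := by field_simp
    _ < ε := by linarith



/-- Morse case: the limit of secants is an eigen-vector of the invertible Hessian
`H₀ = Hs(f)(O)` with a negative eigen-value `μ`, and `|∇f(γ(s))|/|γ(s)| → -μ`. -/
theorem morse_secant_limit_eigenvector_negative_eigenvalue
    {n : ℕ} (hn : 2 ≤ n)
    (U : Set (EuclideanSpace ℝ (Fin n))) (hUopen : IsOpen U)
    (hOU : (0 : EuclideanSpace ℝ (Fin n)) ∈ U)
    (f : EuclideanSpace ℝ (Fin n) → ℝ)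
    (hfan : AnalyticOnNhd ℝ f U) (hf0 : f 0 = 0) (hgf0 : gradient f 0 = 0)
    (L : ℝ) (hL : 0 < L)
    (γ : ℝ → EuclideanSpace ℝ (Fin n))
    (hγU : ∀ s ∈ Set.Ico (0 : ℝ) L, γ s ∈ U)
    (hγreg : ∀ s ∈ Set.Ico (0 : ℝ) L, gradient f (γ s) ≠ 0)
    (hγode : ∀ s ∈ Set.Ico (0 : ℝ) L,
      HasDerivAt γ (‖gradient f (γ s)‖⁻¹ • gradient f (γ s)) s)
    (hfneg : f (γ 0) < 0)
    (hfmono : StrictMonoOn (fun s => f (γ s)) (Set.Ico (0 : ℝ) L))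
    (hγlim : Tendsto γ (𝓝[<] L) (𝓝 0))
    (hMorse : Function.Bijective (fderiv ℝ (gradient f) 0))
    (ν : EuclideanSpace ℝ (Fin n)) (hν1 : ‖ν‖ = 1)
    (hνlim : Tendsto (fun s => ‖γ s‖⁻¹ • γ s) (𝓝[<] L) (𝓝 ν))
    :
    ∃ μ : ℝ, μ < 0 ∧ fderiv ℝ (gradient f) 0 ν = μ • ν ∧
      Tendsto (fun s => ‖gradient f (γ s)‖ / ‖γ s‖) (𝓝[<] L) (𝓝 (-μ)) := by
  set g : EuclideanSpace ℝ (Fin n) → EuclideanSpace ℝ (Fin n) := gradient f with hg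
  set A := fderiv ℝ g 0 with hA
  have hν0 : ν ≠ 0 := fun h => by simp [h] at hν1
  -- differentiability of g at 0
  have hdiff : DifferentiableAt ℝ g 0 := by
    by_contra hnd
    have h0 : A = 0 := hA.trans (fderiv_zero_of_not_differentiableAt hnd)
    rw [h0] at hMorse
    exact hν0 (hMorse.injective (by simp))
  -- basic eventualities
  have hmem : ∀ᶠ s in 𝓝[<] L, s ∈ Set.Ico (0:ℝ) L := by
    filter_upwards [Ioo_mem_nhdsLT hL] with s hs
    exact ⟨le_of_lt hs.1, hs.2⟩
  have hγne : ∀ s ∈ Set.Ico (0:ℝ) L, γ s ≠ 0 := by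
    intro s hs h
    exact hγreg s hs (by rw [h]; exact hgf0)
  -- little-o from differentiability
  have hlo : (fun y => g y - A y) =o[𝓝 0] fun y => y := by
    have h1 := hdiff.hasFDerivAt
    rw [hasFDerivAt_iff_isLittleO_nhds_zero] at h1
    simpa [hgf0, ← hg] using h1
  have hlo2 : (fun s => g (γ s) - A (γ s)) =o[𝓝[<] L] fun s => γ s :=
    hlo.comp_tendsto hγlim
  -- ‖γ s‖⁻¹ • g (γ s) → A ν
  have hterm1 : Tendsto (fun s => ‖γ s‖⁻¹ • (g (γ s) - A (γ s))) (𝓝[<] L) (𝓝 0) := by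
    rw [tendsto_zero_iff_norm_tendsto_zero]
    rw [Metric.tendsto_nhds]
    intro ε hε
    have hε2 : (0:ℝ) < ε / 2 := by linarith
    filter_upwards [hlo2.def hε2, hmem] with s h1 h2
    have hγs := hγne s h2
    rw [Real.dist_eq, sub_zero, abs_of_nonneg (norm_nonneg _), norm_smul, norm_inv, norm_norm]
    calc ‖γ s‖⁻¹ * ‖g (γ s) - A (γ s)‖ ≤ ‖γ s‖⁻¹ * (ε / 2 * ‖γ s‖) := by
          apply mul_le_mul_of_nonneg_left h1 (by positivity)
      _ = ε / 2 := by
          have hγsn : ‖γ s‖ ≠ 0 := norm_ne_zero_iff.2 hγs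
          field_simp
      _ < ε := by linarith
  have hterm2 : Tendsto (fun s => A (‖γ s‖⁻¹ • γ s)) (𝓝[<] L) (𝓝 (A ν)) :=
    (A.continuous.tendsto ν).comp hνlim
  have hlim1 : Tendsto (fun s => ‖γ s‖⁻¹ • g (γ s)) (𝓝[<] L) (𝓝 (A ν)) := by
    have h1 := hterm1.add hterm2
    rw [zero_add] at h1
    refine h1.congr (fun s => ?_)
    rw [map_smul, smul_sub]
    abel
  have hAν : A ν ≠ 0 := fun h => hν0 (hMorse.injective (by rw [h, map_zero]))
  have hAνn : ‖A ν‖ ≠ 0 := norm_ne_zero_iff.2 hAν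
  -- ‖g (γ s)‖ / ‖γ s‖ → ‖A ν‖
  have hnormlim : Tendsto (fun s => ‖g (γ s)‖ / ‖γ s‖) (𝓝[<] L) (𝓝 ‖A ν‖) := by
    refine hlim1.norm.congr' ?_
    filter_upwards [hmem] with s hs
    rw [norm_smul, norm_inv, norm_norm, div_eq_inv_mul]
  -- unit gradient tends to w
  set w : EuclideanSpace ℝ (Fin n) := ‖A ν‖⁻¹ • A ν with hw
  have hw1 : ‖w‖ = 1 := by
    rw [hw, norm_smul, norm_inv, norm_norm, inv_mul_cancel₀ hAνn]
  have hγ'lim : Tendsto (fun s => ‖g (γ s)‖⁻¹ • g (γ s)) (𝓝[<] L) (𝓝 w) := by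
    have h1 : Tendsto (fun s => (‖g (γ s)‖ / ‖γ s‖)⁻¹ • (‖γ s‖⁻¹ • g (γ s)))
        (𝓝[<] L) (𝓝 (‖A ν‖⁻¹ • A ν)) := (hnormlim.inv₀ hAνn).smul hlim1
    rw [← hw] at h1
    refine h1.congr' ?_
    filter_upwards [hmem] with s hs
    have hγs : ‖γ s‖ ≠ 0 := norm_ne_zero_iff.2 (hγne s hs)
    have hgs : ‖g (γ s)‖ ≠ 0 := norm_ne_zero_iff.2 (hγreg s hs)
    rw [smul_smul]
    congr 1
    field_simp
  -- secant limit via the auxiliary lemma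
  have husec : Tendsto (fun s => (L - s)⁻¹ • γ s) (𝓝[<] L) (𝓝 (-w)) :=
    secant_aux L hL γ (fun s => ‖g (γ s)‖⁻¹ • g (γ s)) w hγode hγlim hγ'lim
  have hsec : Tendsto (fun s => ‖γ s‖⁻¹ • γ s) (𝓝[<] L) (𝓝 (-w)) := by
    have hnu : Tendsto (fun s => ‖(L - s)⁻¹ • γ s‖) (𝓝[<] L) (𝓝 1) := by
      have := husec.norm
      rwa [norm_neg, hw1] at this
    have h1 : Tendsto (fun s => ‖(L - s)⁻¹ • γ s‖⁻¹ • ((L - s)⁻¹ • γ s))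
        (𝓝[<] L) (𝓝 ((1:ℝ)⁻¹ • -w)) := (hnu.inv₀ one_ne_zero).smul husec
    rw [inv_one, one_smul] at h1
    refine h1.congr' ?_
    filter_upwards [Ioo_mem_nhdsLT hL] with s hs
    have hγs : ‖γ s‖ ≠ 0 := norm_ne_zero_iff.2 (hγne s ⟨le_of_lt hs.1, hs.2⟩)
    have hLs : (0:ℝ) < L - s := by linarith [hs.2]
    rw [norm_smul, norm_inv, Real.norm_eq_abs, abs_of_pos hLs, smul_smul]
    congr 1
    rw [mul_inv, inv_inv]
    field_simp
  have hνw : ν = -w := tendsto_nhds_unique hνlim hsec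
  refine ⟨-‖A ν‖, ?_, ?_, ?_⟩
  · simpa using (norm_pos_iff.2 hAν)
  · show A ν = -‖A ν‖ • ν
    calc A ν = -‖A ν‖ • -(‖A ν‖⁻¹ • A ν) := by
          rw [smul_neg, smul_smul, neg_mul, neg_smul, neg_neg, mul_inv_cancel₀ hAνn, one_smul]
      _ = -‖A ν‖ • ν := by rw [← hw, ← hνw]
  · rw [neg_neg]
    exact hnormlim
end

section
/- If γ is non-oscillating at O, then with m and β as in the Kurdyka–Mostowski–Parusiński expansion along γ, the gradient is asymptotically radial along γ: ∇f(x) = −mβ·|x|^{m−1}·(x/|x|) + o(|x|^{m−1}) as x → O along γ. -/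
open scoped RealInnerProductSpace Topology
open Filter

/-- Sign constancy for a continuous nonvanishing function on an open interval. -/
lemma sign_const_of_ne_zero' {h : ℝ → ℝ} {a b : ℝ}
    (hc : ContinuousOn h (Set.Ioo a b)) (h0 : ∀ s ∈ Set.Ioo a b, h s ≠ 0) :
    (∀ s ∈ Set.Ioo a b, 0 < h s) ∨ (∀ s ∈ Set.Ioo a b, h s < 0) := by
  by_contra hcon
  push_neg at hcon
  obtain ⟨⟨x, hx, hx0⟩, ⟨y, hy, hy0⟩⟩ := hcon
  have hx0' : h x ≤ 0 := hx0
  have hy0' : 0 < h y := lt_of_le_of_ne (by simpa using hy0) (Ne.symm (h0 y hy))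
  have hx0'' : h x < 0 := lt_of_le_of_ne hx0' (h0 x hx)
  rcases le_total x y with hxy | hxy
  · have hsub : Set.Icc x y ⊆ Set.Ioo a b := Set.Icc_subset_Ioo hx.1 hy.2
    have h0mem : (0 : ℝ) ∈ Set.Icc (h x) (h y) := ⟨hx0''.le, hy0'.le⟩
    obtain ⟨z, hz, hz0⟩ := intermediate_value_Icc hxy (hc.mono hsub) h0mem
    exact h0 z (hsub hz) hz0
  · have hsub : Set.Icc y x ⊆ Set.Ioo a b := Set.Icc_subset_Ioo hy.1 hx.2
    have h0mem : (0 : ℝ) ∈ Set.Icc (h x) (h y) := ⟨hx0''.le, hy0'.le⟩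
    obtain ⟨z, hz, hz0⟩ := intermediate_value_Icc' hxy (hc.mono hsub) h0mem
    exact h0 z (hsub hz) hz0


lemma gcval {n : ℕ} (f : EuclideanSpace ℝ (Fin n) → ℝ) (x : EuclideanSpace ℝ (Fin n)) (c : ℝ) :
    (∑ i, fderiv ℝ f x (EuclideanSpace.single i (1:ℝ)) * x i)^2
      - c * ((∑ i, (fderiv ℝ f x (EuclideanSpace.single i (1:ℝ)))^2) * (∑ i, (x i)^2))
    = ⟪gradient f x, x⟫^2 - c * (‖gradient f x‖^2 * ‖x‖^2) := by
  have h1 : ∀ w : EuclideanSpace ℝ (Fin n), fderiv ℝ f x w = ⟪gradient f x, w⟫ := fun w =>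
    (InnerProductSpace.toDual_symm_apply).symm
  have h2 : ∀ i, fderiv ℝ f x (EuclideanSpace.single i (1:ℝ)) = gradient f x i := by
    intro i
    rw [h1, EuclideanSpace.inner_single_right]
    simp
  simp only [h2]
  have h3 : ⟪gradient f x, x⟫ = ∑ i, gradient f x i * x i := by
    rw [PiLp.inner_apply]; simp [RCLike.inner_apply]; exact Finset.sum_congr rfl (fun i _ => mul_comm _ _)
  have h4 : ‖gradient f x‖^2 = ∑ i, (gradient f x i)^2 := by
    rw [← real_inner_self_eq_norm_sq, PiLp.inner_apply]; simp [RCLike.inner_apply, sq]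
  have h5 : ‖x‖^2 = ∑ i, (x i)^2 := by
    rw [← real_inner_self_eq_norm_sq, PiLp.inner_apply]; simp [RCLike.inner_apply, sq]
  rw [h3, h4, h5]

lemma gcanal {n : ℕ} (f : EuclideanSpace ℝ (Fin n) → ℝ) (U : Set (EuclideanSpace ℝ (Fin n)))
    (hfan : AnalyticOnNhd ℝ f U) (c : ℝ) :
    AnalyticOnNhd ℝ (fun x => (∑ i, fderiv ℝ f x (EuclideanSpace.single i (1:ℝ)) * x i)^2
      - c * ((∑ i, (fderiv ℝ f x (EuclideanSpace.single i (1:ℝ)))^2) * (∑ i, (x i)^2))) U := by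
  intro x hx
  have h1 : AnalyticAt ℝ (fderiv ℝ f) x := (hfan x hx).fderiv
  have hD : ∀ i : Fin n, AnalyticAt ℝ (fun y => fderiv ℝ f y (EuclideanSpace.single i (1:ℝ))) x := by
    intro i
    have := ((ContinuousLinearMap.apply ℝ ℝ
      (EuclideanSpace.single i (1:ℝ))).analyticAt (fderiv ℝ f x)).comp h1
    exact this
  have hX : ∀ i : Fin n, AnalyticAt ℝ (fun y : EuclideanSpace ℝ (Fin n) => y i) x := by
    intro i
    exact (EuclideanSpace.proj (𝕜 := ℝ) i).analyticAt x
  have hs1 : AnalyticAt ℝ (fun y => ∑ i, fderiv ℝ f y (EuclideanSpace.single i (1:ℝ)) * y i) x :=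
    Finset.analyticAt_fun_sum _ (fun i _ => (hD i).mul (hX i))
  have hs2 : AnalyticAt ℝ (fun y => ∑ i, (fderiv ℝ f y (EuclideanSpace.single i (1:ℝ)))^2) x :=
    Finset.analyticAt_fun_sum _ (fun i _ => (hD i).pow 2)
  have hs3 : AnalyticAt ℝ (fun y : EuclideanSpace ℝ (Fin n) => ∑ i, (y i)^2) x :=
    Finset.analyticAt_fun_sum _ (fun i _ => (hX i).pow 2)
  exact (hs1.pow 2).sub ((analyticAt_const).mul (hs2.mul hs3))

set_option maxHeartbeats 4000000 in
/-- along a non-oscillating trajectory the gradient is asymptotically radial: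
`∇f(x) = -mβ|x|^{m-1}(x/|x|) + o(|x|^{m-1})`. -/
theorem gradient_asymptotically_radial_along_trajectory
    {n : ℕ} (hn : 2 ≤ n)
    (U : Set (EuclideanSpace ℝ (Fin n))) (hUopen : IsOpen U)
    (hOU : (0 : EuclideanSpace ℝ (Fin n)) ∈ U)
    (f : EuclideanSpace ℝ (Fin n) → ℝ)
    (hfan : AnalyticOnNhd ℝ f U) (hf0 : f 0 = 0) (hgf0 : gradient f 0 = 0)
    (L : ℝ) (hL : 0 < L)
    (γ : ℝ → EuclideanSpace ℝ (Fin n))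
    (hγU : ∀ s ∈ Set.Ico (0 : ℝ) L, γ s ∈ U)
    (hγreg : ∀ s ∈ Set.Ico (0 : ℝ) L, gradient f (γ s) ≠ 0)
    (hγode : ∀ s ∈ Set.Ico (0 : ℝ) L,
      HasDerivAt γ (‖gradient f (γ s)‖⁻¹ • gradient f (γ s)) s)
    (hfneg : f (γ 0) < 0)
    (hfmono : StrictMonoOn (fun s => f (γ s)) (Set.Ico (0 : ℝ) L))
    (hγlim : Tendsto γ (𝓝[<] L) (𝓝 0))
    (hosc : ∀ g : EuclideanSpace ℝ (Fin n) → ℝ, AnalyticAt ℝ g 0 →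
      (∀ᶠ s in 𝓝[<] L, g (γ s) = 0) ∨ (∀ᶠ s in 𝓝[<] L, g (γ s) ≠ 0))
    (m : ℝ) (hm : 1 < m) (hmQ : ∃ q : ℚ, m = (q : ℝ)) (β : ℝ) (hβ : 0 < β)
    (hKMP1 : (fun s => f (γ s) + β * ‖γ s‖ ^ m) =o[𝓝[<] L] fun s => ‖γ s‖ ^ m)
    (hKMP2 : (fun s => ⟪gradient f (γ s), ‖γ s‖⁻¹ • γ s⟫ + m * β * ‖γ s‖ ^ (m - 1))
      =o[𝓝[<] L] fun s => ‖γ s‖ ^ (m - 1))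
    :
    (fun s => gradient f (γ s) + (m * β * ‖γ s‖ ^ (m - 1)) • (‖γ s‖⁻¹ • γ s))
      =o[𝓝[<] L] fun s => ‖γ s‖ ^ (m - 1) := by
  classical
  set l := 𝓝[<] L with hl
  -- abbreviations
  set V : ℝ → EuclideanSpace ℝ (Fin n) := fun s => gradient f (γ s) with hV
  set P : ℝ → ℝ := fun s => ⟪V s, ‖γ s‖⁻¹ • γ s⟫ with hP
  -- basic eventual facts
  have hIcoL : ∀ᶠ s in l, s ∈ Set.Ico 0 L := by
    have h1 : ∀ᶠ s in l, 0 < s :=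
      nhdsWithin_le_nhds (eventually_gt_nhds hL)
    have h2 : ∀ᶠ s in l, s < L := eventually_mem_nhdsWithin
    filter_upwards [h1, h2] with s h1 h2
    exact ⟨h1.le, h2⟩
  -- f ∘ γ tends to 0
  have hfγ0 : Tendsto (fun s => f (γ s)) l (𝓝 0) := by
    have := ((hfan 0 hOU).continuousAt.tendsto).comp hγlim
    rwa [hf0] at this
  -- f is negative along γ
  have hfγle : ∀ s ∈ Set.Ico (0 : ℝ) L, f (γ s) ≤ 0 := by
    intro s hs
    refine ge_of_tendsto hfγ0 ?_
    have h3 : ∀ᶠ u in l, s < u := nhdsWithin_le_nhds (eventually_gt_nhds hs.2)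
    filter_upwards [hIcoL, h3] with u hu hsu
    exact (hfmono hs hu hsu).le
  have hfγneg : ∀ s ∈ Set.Ico (0 : ℝ) L, f (γ s) < 0 := by
    intro s hs
    have ht : (s + L) / 2 ∈ Set.Ico (0 : ℝ) L := by
      constructor <;> [linarith [hs.1, hs.2]; linarith [hs.2]]
    have hst : s < (s + L) / 2 := by linarith [hs.2]
    exact lt_of_lt_of_le (hfmono hs ht hst) (hfγle _ ht)
  have hγne : ∀ s ∈ Set.Ico (0 : ℝ) L, γ s ≠ 0 := by
    intro s hs h
    have := hfγneg s hs
    rw [h, hf0] at this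
    exact lt_irrefl 0 this
  have hrpos : ∀ s ∈ Set.Ico (0 : ℝ) L, 0 < ‖γ s‖ := fun s hs =>
    norm_pos_iff.mpr (hγne s hs)
  have hVpos : ∀ s ∈ Set.Ico (0 : ℝ) L, 0 < ‖V s‖ := fun s hs =>
    norm_pos_iff.mpr (hγreg s hs)
  -- derivative of f ∘ γ
  have hda : ∀ s ∈ Set.Ico (0 : ℝ) L, HasDerivAt (fun t => f (γ t)) ‖V s‖ s := by
    intro s hs
    have hdiff := (hfan _ (hγU s hs)).differentiableAt
    have h1 : HasFDerivAt f (InnerProductSpace.toDual ℝ _ (V s)) (γ s) :=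
      hdiff.hasGradientAt.hasFDerivAt
    have h2 := h1.comp_hasDerivAt s (hγode s hs)
    have hVne : ‖V s‖ ≠ 0 := (hVpos s hs).ne'
    exact h2.congr_deriv (by
      simp only [hV, InnerProductSpace.toDual_apply_apply, real_inner_smul_right,
      real_inner_self_eq_norm_mul_norm]
      field_simp)
  -- derivative of ‖γ ·‖ ^ m
  have hdrm : ∀ s ∈ Set.Ico (0 : ℝ) L,
      HasDerivAt (fun t => ‖γ t‖ ^ m) (m * ‖γ s‖ ^ (m - 1) * (P s / ‖V s‖)) s := by
    intro s hs
    have hrne : ‖γ s‖ ≠ 0 := (hrpos s hs).ne'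
    have hVne : ‖V s‖ ≠ 0 := (hVpos s hs).ne'
    have hq : HasDerivAt (fun t => ⟪γ t, γ t⟫)
        (⟪γ s, ‖V s‖⁻¹ • V s⟫ + ⟪‖V s‖⁻¹ • V s, γ s⟫) s :=
      HasDerivAt.inner ℝ (hγode s hs) (hγode s hs)
    have hqne : ⟪γ s, γ s⟫ ≠ (0:ℝ) := by
      rw [real_inner_self_eq_norm_mul_norm]
      positivity
    have hsq := hq.sqrt hqne
    have heq : (fun t => Real.sqrt ⟪γ t, γ t⟫) = fun t => ‖γ t‖ := by
      funext t
      rw [real_inner_self_eq_norm_mul_norm, Real.sqrt_mul_self (norm_nonneg _)]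
    have hr : HasDerivAt (fun t => ‖γ t‖) (P s / ‖V s‖) s := by
      rw [heq] at hsq
      convert hsq using 1
      rw [real_inner_self_eq_norm_mul_norm, Real.sqrt_mul_self (norm_nonneg _)]
      have h1 : ⟪‖V s‖⁻¹ • V s, γ s⟫ = ⟪γ s, ‖V s‖⁻¹ • V s⟫ := real_inner_comm _ _
      have h2 : ⟪γ s, ‖V s‖⁻¹ • V s⟫ = ‖V s‖⁻¹ * ⟪γ s, V s⟫ := real_inner_smul_right _ _ _
      have h3 : P s = ‖γ s‖⁻¹ * ⟪V s, γ s⟫ := real_inner_smul_right _ _ _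
      have h4 : ⟪γ s, V s⟫ = ⟪V s, γ s⟫ := real_inner_comm _ _
      rw [h1, h2, h4, h3]
      field_simp
      ring
    have := (hr.rpow_const (Or.inr hm.le))
    convert this using 1
    ring
  -- little-o facts in quantitative form
  have hK2 : (fun s => P s + m * β * ‖γ s‖ ^ (m - 1)) =o[l] fun s => ‖γ s‖ ^ (m - 1) := by
    simpa only [hP, hV] using hKMP2
  have hB2 : ∀ ε : ℝ, 0 < ε → ∀ᶠ s in l,
      |P s + m * β * ‖γ s‖ ^ (m - 1)| ≤ ε * (m * β * ‖γ s‖ ^ (m - 1)) := by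
    intro ε hε
    have hc : (0:ℝ) < ε * (m * β) := by positivity
    filter_upwards [hK2.def hc] with s hs
    have h1 : (0:ℝ) ≤ ‖γ s‖ ^ (m - 1) := Real.rpow_nonneg (norm_nonneg _) _
    rw [Real.norm_eq_abs, Real.norm_eq_abs, abs_of_nonneg h1] at hs
    calc |P s + m * β * ‖γ s‖ ^ (m - 1)| ≤ ε * (m * β) * ‖γ s‖ ^ (m - 1) := hs
    _ = ε * (m * β * ‖γ s‖ ^ (m - 1)) := by ring
  have hB1 : ∀ ε : ℝ, 0 < ε → ∀ᶠ s in l,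
      |f (γ s) + β * ‖γ s‖ ^ m| ≤ ε * (β * ‖γ s‖ ^ m) := by
    intro ε hε
    have hc : (0:ℝ) < ε * β := by positivity
    filter_upwards [hKMP1.def hc] with s hs
    have h1 : (0:ℝ) ≤ ‖γ s‖ ^ m := Real.rpow_nonneg (norm_nonneg _) _
    rw [Real.norm_eq_abs, Real.norm_eq_abs, abs_of_nonneg h1] at hs
    calc |f (γ s) + β * ‖γ s‖ ^ m| ≤ ε * β * ‖γ s‖ ^ m := hs
    _ = ε * (β * ‖γ s‖ ^ m) := by ring
  -- limit of ‖γ ·‖ ^ m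
  have hrmlim : Tendsto (fun s => ‖γ s‖ ^ m) l (𝓝 0) := by
    have hrlim : Tendsto (fun s => ‖γ s‖) l (𝓝 0) := by
      have := (continuous_norm.tendsto (0 : EuclideanSpace ℝ (Fin n))).comp hγlim
      simpa [Function.comp_def] using this
    have hco := (Real.continuousAt_rpow_const 0 m (Or.inr (by linarith))).tendsto.comp hrlim
    simpa [Function.comp_def, Real.zero_rpow (by linarith : m ≠ 0)] using hco
  -- THE CORE CONTRADICTION: the angle cannot stay away from radial
  have hcontra : ∀ c : ℝ, 0 < c → c < 1 →
      ¬ (∀ᶠ s in l, (P s)^2 ≤ c * ‖V s‖^2) := by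
    intro c hc0 hc1 hev
    set ε := (1 - c) / 6 with hεdef
    have hε0 : 0 < ε := by rw [hεdef]; linarith
    have hε6 : ε ≤ 1/6 := by rw [hεdef]; linarith
    -- gather all eventual facts
    have hall : ∀ᶠ s in l, s ∈ Set.Ico (0:ℝ) L ∧
        |P s + m * β * ‖γ s‖ ^ (m - 1)| ≤ ε * (m * β * ‖γ s‖ ^ (m - 1)) ∧
        |f (γ s) + β * ‖γ s‖ ^ m| ≤ ε * (β * ‖γ s‖ ^ m) ∧
        (P s)^2 ≤ c * ‖V s‖^2 :=
      hIcoL.and ((hB2 ε hε0).and ((hB1 ε hε0).and hev))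
    obtain ⟨a0, ha0L, hsub⟩ := mem_nhdsLT_iff_exists_Ioo_subset.mp hall
    have ha0L' : a0 < L := ha0L
    set s₂ := (max a0 0 + L) / 2 with hs₂def
    have hs₂l : max a0 0 < s₂ := by
      rw [hs₂def]
      have : max a0 0 < L := max_lt ha0L' hL
      linarith
    have hs₂L : s₂ < L := by
      rw [hs₂def]
      have : max a0 0 < L := max_lt ha0L' hL
      linarith
    have hs₂0 : 0 ≤ s₂ := by
      have : (0:ℝ) ≤ max a0 0 := le_max_right _ _
      linarith
    have hmem : ∀ s ∈ Set.Ico s₂ L, s ∈ Set.Ioo a0 L := by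
      intro s hs
      exact ⟨lt_of_le_of_lt (le_max_left a0 0) (lt_of_lt_of_le hs₂l hs.1), hs.2⟩
    have hIco : ∀ s ∈ Set.Ico s₂ L, s ∈ Set.Ico (0:ℝ) L := fun s hs =>
      ⟨le_trans hs₂0 hs.1, hs.2⟩
    -- the auxiliary monotone function
    set G : ℝ → ℝ := fun t => c * (1 + 2*ε) * f (γ t) + β * ‖γ t‖ ^ m with hGdef
    have hGd : ∀ s ∈ Set.Ico s₂ L, HasDerivAt G
        (c * (1 + 2*ε) * ‖V s‖ + β * (m * ‖γ s‖ ^ (m - 1) * (P s / ‖V s‖))) s := by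
      intro s hs
      exact ((hda s (hIco s hs)).const_mul _).add ((hdrm s (hIco s hs)).const_mul β)
    have hG'0 : ∀ s ∈ Set.Ico s₂ L,
        0 ≤ c * (1 + 2*ε) * ‖V s‖ + β * (m * ‖γ s‖ ^ (m - 1) * (P s / ‖V s‖)) := by
      intro s hs
      obtain ⟨hsI, hb2, _, hp2⟩ := hsub (hmem s hs)
      have hVp : 0 < ‖V s‖ := hVpos s (hIco s hs)
      have hkp : 0 < m * β * ‖γ s‖ ^ (m - 1) := by
        have := Real.rpow_pos_of_pos (hrpos s (hIco s hs)) (m - 1)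
        positivity
      set k := m * β * ‖γ s‖ ^ (m - 1) with hkdef
      have hPk : (1 - ε) * k ≤ -P s := by
        have := abs_le.mp hb2
        have h1 := this.1
        nlinarith
      have hkey : 0 ≤ c * (1 + 2*ε) * ‖V s‖^2 + k * P s := by
        have hP0 : 0 < -P s := lt_of_lt_of_le (by nlinarith) hPk
        have h1 : (1 - ε) * k * (-P s) ≤ (-P s) * (-P s) :=
          mul_le_mul_of_nonneg_right hPk hP0.le
        have h3 : k * (-P s) ≤ (1 + 2*ε) * ((1 - ε) * k * (-P s)) := by
          nlinarith [mul_pos hkp hP0,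
            mul_nonneg (mul_nonneg hkp.le hP0.le)
              (mul_nonneg hε0.le (by linarith : (0:ℝ) ≤ 1 - 2*ε))]
        have h4 : k * (-P s) ≤ (1 + 2*ε) * ((P s)^2) := by nlinarith
        have h5 : (1 + 2*ε) * (P s)^2 ≤ (1 + 2*ε) * (c * ‖V s‖^2) := by nlinarith
        nlinarith
      have hrw : c * (1 + 2*ε) * ‖V s‖ + β * (m * ‖γ s‖ ^ (m - 1) * (P s / ‖V s‖))
          = (c * (1 + 2*ε) * ‖V s‖^2 + k * P s) / ‖V s‖ := by
        rw [hkdef]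
        field_simp
      rw [hrw]
      exact div_nonneg hkey hVp.le
    have hGmono : MonotoneOn G (Set.Ico s₂ L) := by
      apply monotoneOn_of_deriv_nonneg (convex_Ico s₂ L)
      · exact fun s hs => (hGd s hs).continuousAt.continuousWithinAt
      · intro s hs
        rw [interior_Ico] at hs
        exact ((hGd s (Set.Ioo_subset_Ico_self hs)).differentiableAt).differentiableWithinAt
      · intro s hs
        rw [interior_Ico] at hs
        rw [(hGd s (Set.Ioo_subset_Ico_self hs)).deriv]
        exact hG'0 s (Set.Ioo_subset_Ico_self hs)
    have hGlim : Tendsto G l (𝓝 0) := by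
      rw [hGdef]
      have h1 := hfγ0.const_mul (c * (1 + 2*ε))
      have h2 := hrmlim.const_mul β
      have := h1.add h2
      simpa using this
    have hG0 : G s₂ ≤ 0 := by
      refine ge_of_tendsto hGlim ?_
      have hIoo : Set.Ioo s₂ L ∈ l := Ioo_mem_nhdsLT_of_mem ⟨hs₂L, le_refl L⟩
      filter_upwards [hIoo] with t ht
      exact hGmono ⟨le_refl s₂, hs₂L⟩ ⟨ht.1.le, ht.2⟩ ht.1.le
    -- final numeric contradiction at s₂
    obtain ⟨hsI, _, hb1, _⟩ := hsub (hmem s₂ ⟨le_refl _, hs₂L⟩)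
    have hrm : 0 < β * ‖γ s₂‖ ^ m := by
      have := Real.rpow_pos_of_pos (hrpos s₂ (hIco s₂ ⟨le_refl _, hs₂L⟩)) m
      positivity
    have hA : f (γ s₂) ≥ -(1 + ε) * (β * ‖γ s₂‖ ^ m) := by
      have := (abs_le.mp hb1).1
      nlinarith
    have hkey2 : c * (1 + 2*ε) * (1 + ε) < 1 := by
      nlinarith [mul_pos hε0 (by linarith : (0:ℝ) < 1 - c),
        mul_le_mul_of_nonneg_left hε6 (mul_nonneg hc0.le hε0.le),
        mul_nonneg hc0.le (sq_nonneg ε)]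
    have hG0' : c * (1 + 2*ε) * f (γ s₂) + β * ‖γ s₂‖ ^ m ≤ 0 := hG0
    nlinarith [mul_le_mul_of_nonneg_left hA (by positivity : (0:ℝ) ≤ c * (1 + 2*ε)),
      mul_pos hrm (by linarith : (0:ℝ) < 1 - c * (1 + 2*ε) * (1 + ε))]
  -- MAIN CLAIM: the trajectory becomes asymptotically radial
  have hmain : ∀ c : ℝ, 0 < c → c < 1 → ∀ᶠ s in l, c * ‖V s‖^2 < (P s)^2 := by
    intro c hc0 hc1
    set gc : EuclideanSpace ℝ (Fin n) → ℝ := fun x =>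
      (∑ i, fderiv ℝ f x (EuclideanSpace.single i (1:ℝ)) * x i)^2
      - c * ((∑ i, (fderiv ℝ f x (EuclideanSpace.single i (1:ℝ)))^2) * (∑ i, (x i)^2))
      with hgcdef
    have hganal : AnalyticOnNhd ℝ gc U := gcanal f U hfan c
    have hval : ∀ s ∈ Set.Ico (0:ℝ) L,
        gc (γ s) = ‖γ s‖^2 * ((P s)^2 - c * ‖V s‖^2) := by
      intro s hs
      have hrne : ‖γ s‖ ≠ 0 := (hrpos s hs).ne'
      have h0 : gc (γ s) = ⟪V s, γ s⟫^2 - c * (‖V s‖^2 * ‖γ s‖^2) := gcval f (γ s) c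
      have h3 : P s = ‖γ s‖⁻¹ * ⟪V s, γ s⟫ := real_inner_smul_right _ _ _
      have h4 : ⟪V s, γ s⟫ = ‖γ s‖ * P s := by
        rw [h3]; field_simp
      rw [h0, h4]; ring
    rcases hosc gc (hganal 0 hOU) with hzero | hne
    · have hev : ∀ᶠ s in l, (P s)^2 ≤ c * ‖V s‖^2 := by
        filter_upwards [hzero, hIcoL] with s hz hsI
        have := hval s hsI
        rw [hz] at this
        have hr2 : (0:ℝ) < ‖γ s‖^2 := by
          have := hrpos s hsI; positivity
        nlinarith
      exact absurd hev (hcontra c hc0 hc1)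
    · have hall : ∀ᶠ s in l, gc (γ s) ≠ 0 ∧ s ∈ Set.Ico (0:ℝ) L := hne.and hIcoL
      obtain ⟨a0, ha0L, hsub⟩ := mem_nhdsLT_iff_exists_Ioo_subset.mp hall
      have ha0L' : a0 < L := ha0L
      have hs₁L : max a0 0 < L := max_lt ha0L' hL
      have hmm : ∀ s ∈ Set.Ioo (max a0 0) L, s ∈ Set.Ioo a0 L := fun s hs =>
        ⟨lt_of_le_of_lt (le_max_left a0 0) hs.1, hs.2⟩
      have hIco' : ∀ s ∈ Set.Ioo (max a0 0) L, s ∈ Set.Ico (0:ℝ) L := fun s hs =>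
        ⟨le_trans (le_max_right a0 0) hs.1.le, hs.2⟩
      have hconts : ContinuousOn (fun s => gc (γ s)) (Set.Ioo (max a0 0) L) := by
        intro s hs
        have hγc : ContinuousAt γ s := (hγode s (hIco' s hs)).continuousAt
        have hgcc : ContinuousAt gc (γ s) := (hganal _ (hγU s (hIco' s hs))).continuousAt
        exact (hgcc.comp hγc).continuousWithinAt
      have hne' : ∀ s ∈ Set.Ioo (max a0 0) L, gc (γ s) ≠ 0 := fun s hs =>
        (hsub (hmm s hs)).1
      have hIooMem : Set.Ioo (max a0 0) L ∈ l := Ioo_mem_nhdsLT_of_mem ⟨hs₁L, le_refl L⟩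
      rcases sign_const_of_ne_zero' hconts hne' with hpos | hneg
      · filter_upwards [hIooMem] with s hs
        have hsI : s ∈ Set.Ico (0:ℝ) L := hIco' s hs
        have h := hpos s hs
        rw [hval s hsI] at h
        have hr2 : (0:ℝ) < ‖γ s‖^2 := by
          have := hrpos s hsI; positivity
        nlinarith
      · exfalso
        refine hcontra c hc0 hc1 ?_
        filter_upwards [hIooMem] with s hs
        have hsI : s ∈ Set.Ico (0:ℝ) L := hIco' s hs
        have h := hneg s hs
        rw [hval s hsI] at h
        have hr2 : (0:ℝ) < ‖γ s‖^2 := by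
          have := hrpos s hsI; positivity
        nlinarith
  -- FINALE
  rw [Asymptotics.isLittleO_iff]
  intro C hC
  have hmβ : (0:ℝ) < m * β := by positivity
  set K := C / (m * β) with hKdef
  have hK0 : 0 < K := div_pos hC hmβ
  set t := min (1/2 : ℝ) (K^2/20) with htdef
  have ht0 : 0 < t := lt_min (by norm_num) (by positivity)
  have ht2 : t ≤ 1/2 := min_le_left _ _
  have ht20 : 20 * t ≤ K^2 := by
    have := min_le_right (1/2 : ℝ) (K^2/20)
    linarith
  have hc0' : 0 < 1 - t := by linarith
  have hc1' : 1 - t < 1 := by linarith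
  filter_upwards [hIcoL, hB2 t ht0, hmain (1 - t) hc0' hc1'] with s hsI hb2 hp2
  have hrp : 0 < ‖γ s‖ := hrpos s hsI
  have hkp : 0 < m * β * ‖γ s‖ ^ (m - 1) := by
    have := Real.rpow_pos_of_pos hrp (m - 1)
    positivity
  set k := m * β * ‖γ s‖ ^ (m - 1) with hkdef
  set u : EuclideanSpace ℝ (Fin n) := ‖γ s‖⁻¹ • γ s with hudef
  have hu1 : ‖u‖ = 1 := by
    rw [hudef, norm_smul, norm_inv, norm_norm]
    field_simp
  have hinner : ⟪V s, k • u⟫ = k * P s := real_inner_smul_right _ _ _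
  have hku : ‖k • u‖ = k := by
    rw [norm_smul, hu1, Real.norm_eq_abs, abs_of_pos hkp, mul_one]
  set N := ‖V s + k • u‖ with hNdef
  have hsq : N^2 = ‖V s‖^2 + 2*(k * P s) + k^2 := by
    rw [hNdef, norm_add_sq_real, hinner, hku]
  have habs := abs_le.mp hb2
  have hPa : P s ≤ -(1-t)*k := by linarith [habs.2]
  have hPb : -(1+t)*k ≤ P s := by linarith [habs.1]
  have hP2 : P s^2 ≤ (1+t)^2*k^2 := by
    have h1 : (0:ℝ) ≤ P s + (1+t)*k := by linarith
    have h2 : (0:ℝ) ≤ (1+t)*k - P s := by linarith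
    nlinarith [mul_nonneg h1 h2]
  have h2kP : k * P s ≤ -(1-t)*k^2 := by nlinarith [mul_le_mul_of_nonneg_left hPa hkp.le]
  have hVb : (1-t) * ‖V s‖^2 ≤ P s^2 := hp2.le
  have hN2 : (1-t)*N^2 ≤ 5*t*k^2 := by
    have e1 : (1-t)*(2*(k * P s)) ≤ (1-t)*(2*(-(1-t)*k^2)) := by
      apply mul_le_mul_of_nonneg_left _ hc0'.le
      linarith
    nlinarith [mul_pos hkp hkp]
  have hNK : N^2 ≤ (K*k)^2 := by
    have hN0 : (0:ℝ) ≤ N := norm_nonneg _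
    have htk : t*k^2 ≤ K^2/20*k^2 :=
      mul_le_mul_of_nonneg_right (by linarith) (sq_nonneg k)
    nlinarith [sq_nonneg N, sq_nonneg k]
  have hKk : 0 < K * k := by positivity
  have hfin : N ≤ K * k := by
    by_contra hcon
    push_neg at hcon
    nlinarith [norm_nonneg (V s + k • u)]
  have hrm1 : (0:ℝ) < ‖γ s‖ ^ (m-1) := Real.rpow_pos_of_pos hrp _
  have hgoal : K * k = C * ‖‖γ s‖ ^ (m - 1)‖ := by
    rw [Real.norm_eq_abs, abs_of_pos hrm1, hKdef, hkdef]
    field_simp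
  calc ‖V s + k • u‖ ≤ K * k := hfin
  _ = C * ‖‖γ s‖ ^ (m - 1)‖ := hgoal
end
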